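/- arXiv:2208.08971 — 8 statements merged into one kernel-verified Lean document; each statement's English description precedes it below -/
import Mathlib

section
/- Let A be the adjacency matrix of a finite simple graph G (a real symmetric 0–1 matrix) with spectral decomposition A = Σ_{r=0}^d θ_r E_r. If pretty good state transfer occurs from vertex a to vertex b, then a and b are strongly cospectral; that is, for every r there exists σ_r ∈ {1, −1} such that E_r e_a = σ_r E_r e_b (where e_a, e_b are the standard basis vectors of a and b). -/
open Matrix

open NormedSpace in
private lemma exp_proj_sum {N m : ℕ} (P : Fin m → Matrix (Fin N) (Fin N) ℂ)
    (c : Fin m → ℂ)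
    (hidem : ∀ r, P r * P r = P r) (horth : ∀ r s, r ≠ s → P r * P s = 0)
    (hsum : ∑ r, P r = 1) :
    exp (∑ r, c r • P r) = ∑ r, Complex.exp (c r) • P r := by
  have hpow : ∀ k : ℕ, (∑ r, c r • P r) ^ k = ∑ r, (c r) ^ k • P r := by
    intro k
    induction k with
    | zero => simpa using hsum.symm
    | succ k ih =>
      rw [pow_succ, ih, Finset.sum_mul_sum]
      refine Finset.sum_congr rfl fun r _ => ?_
      rw [Finset.sum_eq_single r (fun s _ hs => by
        rw [smul_mul_smul_comm, horth r s (Ne.symm hs), smul_zero])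
        (fun h => absurd (Finset.mem_univ r) h)]
      rw [smul_mul_smul_comm, hidem r, ← pow_succ]
  have hsc : ∀ r : Fin m, Summable fun k : ℕ => ((k.factorial⁻¹ : ℂ) * c r ^ k) := by
    intro r
    simpa [smul_eq_mul] using NormedSpace.expSeries_summable' (𝕂 := ℂ) (c r)
  rw [exp_eq_tsum ℂ]
  calc (∑' k : ℕ, (k.factorial⁻¹ : ℂ) • (∑ r, c r • P r) ^ k)
      = ∑' k : ℕ, ∑ r, ((k.factorial⁻¹ : ℂ) * c r ^ k) • P r := by
        refine tsum_congr fun k => ?_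
        rw [hpow k, Finset.smul_sum]
        simp [smul_smul]
    _ = ∑ r, ∑' k : ℕ, ((k.factorial⁻¹ : ℂ) * c r ^ k) • P r :=
        Summable.tsum_finsetSum fun r _ => (hsc r).smul_const (P r)
    _ = ∑ r, Complex.exp (c r) • P r := by
        refine Finset.sum_congr rfl fun r _ => ?_
        rw [Summable.tsum_smul_const (hsc r)]
        congr 1
        rw [Complex.exp_eq_exp_ℂ, exp_eq_tsum ℂ]
        simp [smul_eq_mul]

/-- If pretty good state transfer occurs from vertex `a` to vertex `b`
in the continuous-time quantum walk on a finite simple graph `G` with adjacency matrix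
`A = ∑ r, θ r • E r` (spectral decomposition), then `a` and `b` are strongly cospectral:
for every `r` there is `σ ∈ {1, -1}` with `E r • e_a = σ • (E r • e_b)`. -/
theorem pgst_implies_strongly_cospectral
    {n d : ℕ} (G : SimpleGraph (Fin n)) [DecidableRel G.Adj]
    (A : Matrix (Fin n) (Fin n) ℝ) (hA : A = G.adjMatrix ℝ)
    (θ : Fin (d + 1) → ℝ) (hθ : Function.Injective θ)
    (E : Fin (d + 1) → Matrix (Fin n) (Fin n) ℝ)
    (hspec : A = ∑ r, θ r • E r)
    (hsym : ∀ r, (E r)ᵀ = E r)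
    (hidem : ∀ r, E r * E r = E r)
    (horth : ∀ r s, r ≠ s → E r * E s = 0)
    (hsum : ∑ r, E r = 1)
    (hE0 : ∀ r, E r ≠ 0)
    (a b : Fin n)
    (hpgst : ∀ ε : ℝ, 0 < ε → ∃ t : ℝ, 0 ≤ t ∧
      1 - ε < ‖
        ((NormedSpace.exp ((Complex.I * (t : ℂ)) • A.map Complex.ofReal)) a b)‖) :
    ∀ r, ∃ σ : ℝ, (σ = 1 ∨ σ = -1) ∧
      (E r) *ᵥ (Pi.single a 1) = σ • ((E r) *ᵥ (Pi.single b 1)) := by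
  -- complexified projections
  set Pc : Fin (d + 1) → Matrix (Fin n) (Fin n) ℂ :=
    fun s => (E s).map Complex.ofReal with hPc
  have hPc_mul : ∀ s t, Pc s * Pc t = (E s * E t).map Complex.ofReal := by
    intro s t
    ext i j
    simp [hPc, Matrix.mul_apply, Matrix.map_apply]
  have hidemc : ∀ s, Pc s * Pc s = Pc s := fun s => by rw [hPc_mul, hidem]
  have horthc : ∀ s t, s ≠ t → Pc s * Pc t = 0 := by
    intro s t hst
    rw [hPc_mul, horth s t hst]
    ext i j
    simp [Matrix.map_apply]
  have hsumc : ∑ s, Pc s = 1 := by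
    ext i j
    have h1 : (∑ s, E s) i j = (1 : Matrix (Fin n) (Fin n) ℝ) i j := by rw [hsum]
    rw [Matrix.sum_apply] at h1
    simp only [Matrix.sum_apply, hPc, Matrix.map_apply, ← Complex.ofReal_sum, h1]
    simp [Matrix.one_apply, apply_ite Complex.ofReal]
  -- the spectral decomposition, complexified and scaled
  have hAc : ∀ t : ℝ, (Complex.I * (t : ℂ)) • A.map Complex.ofReal
      = ∑ s, (Complex.I * t * θ s) • Pc s := by
    intro t
    ext i j
    rw [hspec]
    simp only [Matrix.smul_apply, Matrix.map_apply, Matrix.sum_apply, hPc, smul_eq_mul]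
    push_cast
    rw [Finset.mul_sum]
    exact Finset.sum_congr rfl fun s _ => by ring
  -- entries of the transition matrix
  have hentry : ∀ t : ℝ,
      (NormedSpace.exp ((Complex.I * (t : ℂ)) • A.map Complex.ofReal)) a b
        = ∑ s, Complex.exp (Complex.I * t * θ s) * ((E s) a b : ℂ) := by
    intro t
    rw [hAc t, exp_proj_sum Pc _ hidemc horthc hsumc]
    simp [Matrix.sum_apply, hPc, Matrix.map_apply, smul_eq_mul]
  have habs : ∀ t : ℝ,
      ‖(NormedSpace.exp ((Complex.I * (t : ℂ)) • A.map Complex.ofReal)) a b‖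
        ≤ ∑ s, |(E s) a b| := by
    intro t
    rw [hentry t]
    refine le_trans (norm_sum_le _ _) (Finset.sum_le_sum fun s _ => ?_)
    rw [norm_mul, Complex.norm_exp]
    have hre : (Complex.I * t * θ s).re = 0 := by simp
    rw [hre, Real.exp_zero, one_mul, Complex.norm_real, Real.norm_eq_abs]
  -- from PGST : the sum of |(E_r)_{ab}| is at least 1
  have hS1 : (1 : ℝ) ≤ ∑ s, |(E s) a b| := by
    by_contra h
    push_neg at h
    obtain ⟨t, _, ht⟩ := hpgst (1 - ∑ s, |(E s) a b|) (by linarith)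
    have := habs t
    linarith
  -- Gram identities
  have hGram : ∀ s (i j : Fin n), (E s) i j = ∑ k, (E s) k i * (E s) k j := by
    intro s i j
    conv_lhs => rw [← hidem s]
    rw [Matrix.mul_apply]
    refine Finset.sum_congr rfl fun k _ => ?_
    have h := congrFun (congrFun (hsym s) k) i
    rw [Matrix.transpose_apply] at h
    rw [← h]
  have hdnn : ∀ s (i : Fin n), 0 ≤ (E s) i i := by
    intro s i
    rw [hGram s i i]
    exact Finset.sum_nonneg fun k _ => mul_self_nonneg _
  have hsum_d : ∀ i : Fin n, ∑ s, (E s) i i = 1 := by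
    intro i
    have h1 : (∑ s, E s) i i = (1 : Matrix (Fin n) (Fin n) ℝ) i i := by rw [hsum]
    rw [Matrix.sum_apply] at h1
    rw [h1, Matrix.one_apply_eq]
  -- Cauchy-Schwarz, entrywise
  have hCS1 : ∀ s, |(E s) a b| ≤ Real.sqrt ((E s) a a) * Real.sqrt ((E s) b b) := by
    intro s
    rw [← Real.sqrt_mul (hdnn s a), ← Real.sqrt_sq_eq_abs]
    apply Real.sqrt_le_sqrt
    rw [hGram s a b, hGram s a a, hGram s b b]
    simpa only [pow_two] using
      Finset.sum_mul_sq_le_sq_mul_sq Finset.univ (fun k => (E s) k a) (fun k => (E s) k b)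
  -- Cauchy-Schwarz on the sums
  have hCS2 : ∑ s, Real.sqrt ((E s) a a) * Real.sqrt ((E s) b b) ≤ 1 := by
    have h2 : (∑ s, Real.sqrt ((E s) a a) * Real.sqrt ((E s) b b)) ^ 2 ≤ 1 := by
      have h3 := Finset.sum_mul_sq_le_sq_mul_sq Finset.univ
        (fun s => Real.sqrt ((E s) a a)) (fun s => Real.sqrt ((E s) b b))
      simp only [Real.sq_sqrt (hdnn _ a), Real.sq_sqrt (hdnn _ b)] at h3
      rwa [hsum_d a, hsum_d b, one_mul] at h3
    nlinarith [Finset.sum_nonneg fun s (_ : s ∈ Finset.univ) =>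
      mul_nonneg (Real.sqrt_nonneg ((E s) a a)) (Real.sqrt_nonneg ((E s) b b))]
  have hS1' : ∑ s, |(E s) a b| ≤ ∑ s, Real.sqrt ((E s) a a) * Real.sqrt ((E s) b b) :=
    Finset.sum_le_sum fun s _ => hCS1 s
  have hA1 : ∑ s, |(E s) a b| = 1 := le_antisymm (le_trans hS1' hCS2) hS1
  have hA2 : ∑ s, Real.sqrt ((E s) a a) * Real.sqrt ((E s) b b) = 1 :=
    le_antisymm hCS2 (hA1 ▸ hS1')
  -- termwise equality in Cauchy-Schwarz
  have hterm : ∀ s, |(E s) a b| = Real.sqrt ((E s) a a) * Real.sqrt ((E s) b b) := by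
    have h0 : ∑ s, (Real.sqrt ((E s) a a) * Real.sqrt ((E s) b b) - |(E s) a b|) = 0 := by
      rw [Finset.sum_sub_distrib, hA2, hA1, sub_self]
    intro s
    have h1 := (Finset.sum_eq_zero_iff_of_nonneg
      (fun s _ => sub_nonneg.2 (hCS1 s))).1 h0 s (Finset.mem_univ s)
    linarith
  -- equal diagonal entries
  have hpq : ∀ s, (E s) a a = (E s) b b := by
    have h0 : ∑ s, (Real.sqrt ((E s) a a) - Real.sqrt ((E s) b b)) ^ 2 = 0 := by
      have hexp : ∀ s : Fin (d + 1),
          (Real.sqrt ((E s) a a) - Real.sqrt ((E s) b b)) ^ 2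
            = (E s) a a + (E s) b b
              - 2 * (Real.sqrt ((E s) a a) * Real.sqrt ((E s) b b)) := by
        intro s
        rw [sub_sq, Real.sq_sqrt (hdnn s a), Real.sq_sqrt (hdnn s b)]
        ring
      rw [Finset.sum_congr rfl fun s _ => hexp s]
      rw [Finset.sum_sub_distrib, Finset.sum_add_distrib, ← Finset.mul_sum,
        hsum_d a, hsum_d b, hA2]
      ring
    intro s
    have h1 := (Finset.sum_eq_zero_iff_of_nonneg
      (fun s _ => sq_nonneg _)).1 h0 s (Finset.mem_univ s)
    have h2 : Real.sqrt ((E s) a a) = Real.sqrt ((E s) b b) :=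
      sub_eq_zero.1 (pow_eq_zero_iff two_ne_zero |>.1 h1)
    calc (E s) a a = Real.sqrt ((E s) a a) ^ 2 := (Real.sq_sqrt (hdnn s a)).symm
      _ = Real.sqrt ((E s) b b) ^ 2 := by rw [h2]
      _ = (E s) b b := Real.sq_sqrt (hdnn s b)
  -- conclusion, for each r
  intro r
  have hpa : ∑ k, (E r) k a * (E r) k a = (E r) a a := (hGram r a a).symm
  have hpb : ∑ k, (E r) k b * (E r) k b = (E r) b b := (hGram r b b).symm
  have hip : ∑ k, (E r) k a * (E r) k b = (E r) a b := (hGram r a b).symm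
  have habs2 : |∑ k, (E r) k a * (E r) k b| = (E r) a a := by
    rw [hip, hterm r, ← hpq r, Real.mul_self_sqrt (hdnn r a)]
  rcases (abs_eq (hdnn r a)).1 habs2 with h | h
  · refine ⟨1, Or.inl rfl, ?_⟩
    have hz : ∑ k, ((E r) k a - (E r) k b) ^ 2 = 0 := by
      have hc : ∑ k, ((E r) k a - (E r) k b) ^ 2
          = (∑ k, (E r) k a * (E r) k a) - 2 * (∑ k, (E r) k a * (E r) k b)
            + ∑ k, (E r) k b * (E r) k b := by
        rw [Finset.mul_sum, ← Finset.sum_sub_distrib, ← Finset.sum_add_distrib]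
        exact Finset.sum_congr rfl fun k _ => by ring
      rw [hc, hpa, hpb, h, ← hpq r]
      ring
    have hz2 : ∀ k, (E r) k a = (E r) k b := by
      intro k
      have h1 := (Finset.sum_eq_zero_iff_of_nonneg
        (fun k _ => sq_nonneg _)).1 hz k (Finset.mem_univ k)
      exact sub_eq_zero.1 (pow_eq_zero_iff two_ne_zero |>.1 h1)
    rw [one_smul, Matrix.mulVec_single_one, Matrix.mulVec_single_one]
    funext i
    simpa [Matrix.transpose_apply] using hz2 i
  · refine ⟨-1, Or.inr rfl, ?_⟩
    have hz : ∑ k, ((E r) k a + (E r) k b) ^ 2 = 0 := by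
      have hc : ∑ k, ((E r) k a + (E r) k b) ^ 2
          = (∑ k, (E r) k a * (E r) k a) + 2 * (∑ k, (E r) k a * (E r) k b)
            + ∑ k, (E r) k b * (E r) k b := by
        rw [Finset.mul_sum, ← Finset.sum_add_distrib, ← Finset.sum_add_distrib]
        exact Finset.sum_congr rfl fun k _ => by ring
      rw [hc, hpa, hpb, h, ← hpq r]
      ring
    have hz2 : ∀ k, (E r) k a = -(E r) k b := by
      intro k
      have h1 := (Finset.sum_eq_zero_iff_of_nonneg
        (fun k _ => sq_nonneg _)).1 hz k (Finset.mem_univ k)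
      have := pow_eq_zero_iff two_ne_zero |>.1 h1
      linarith
    rw [Matrix.mulVec_single_one, Matrix.mulVec_single_one]
    funext i
    simpa [Matrix.transpose_apply] using hz2 i
end

section
/- Let A be the adjacency matrix of a finite simple graph G, with spectral decomposition A = Σ_{r=0}^d θ_r E_r, and let a, b be strongly cospectral vertices. Let Θ₊ = {θ_r : E_r e_a = E_r e_b ≠ 0} and Θ₋ = {θ_r : E_r e_a = −E_r e_b ≠ 0}. Then the monic polynomials φ₊(x) = ∏_{θ∈Θ₊}(x − θ) and φ₋(x) = ∏_{θ∈Θ₋}(x − θ) both have integer coefficients, Θ₊ and Θ₋ are disjoint, and the product φ₊(x)·φ₋(x) divides the characteristic polynomial of A in ℤ[x]. -/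
open Matrix Polynomial



-- descent lemma
lemma descent {n m : ℕ} (w : Fin m → (Fin n → ℚ)) (c : Fin m → ℝ) (hc : c ≠ 0)
    (h : ∑ i, c i • (fun j => ((w i j : ℚ) : ℝ)) = 0) :
    ∃ q : Fin m → ℚ, q ≠ 0 ∧ ∑ i, q i • w i = 0 := by
  by_contra hcon
  push_neg at hcon
  set M : Matrix (Fin n) (Fin m) ℚ := Matrix.of (fun j i => w i j) with hM
  have hker : LinearMap.ker (Matrix.toLin' M) = ⊥ := by
    rw [LinearMap.ker_eq_bot']
    intro q hq
    by_contra hq0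
    refine hcon q hq0 ?_
    funext j
    have := congrFun hq j
    simpa [Matrix.toLin'_apply, Matrix.mulVec, dotProduct, hM, mul_comm,
      Finset.sum_apply, Pi.smul_apply, smul_eq_mul] using this
  obtain ⟨g, hg⟩ := (Matrix.toLin' M).exists_leftInverse_of_injective hker
  set L : Matrix (Fin m) (Fin n) ℚ := LinearMap.toMatrix' g with hL
  have hLM : L * M = 1 := by
    have h2 : (LinearMap.toMatrix' (g.comp (Matrix.toLin' M)))
        = LinearMap.toMatrix' (LinearMap.id (R := ℚ) (M := Fin m → ℚ)) := by rw [hg]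
    rwa [LinearMap.toMatrix'_comp, LinearMap.toMatrix'_id, LinearMap.toMatrix'_toLin'] at h2
  set f : ℚ →+* ℝ := algebraMap ℚ ℝ with hf
  have hLM' : (L.map f) * (M.map f) = 1 := by
    rw [← Matrix.map_mul, hLM]
    ext i j
    simp [Matrix.one_apply, apply_ite f]
  have hMc : (M.map f) *ᵥ c = 0 := by
    funext j
    have := congrFun h j
    simpa [Matrix.mulVec, dotProduct, hM, mul_comm, Finset.sum_apply, Pi.smul_apply,
      smul_eq_mul, hf] using this
  have hcz : c = 0 := by
    have h1 : (L.map f) *ᵥ ((M.map f) *ᵥ c) = c := by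
      rw [Matrix.mulVec_mulVec, hLM', Matrix.one_mulVec]
    rw [hMc, Matrix.mulVec_zero] at h1
    exact h1.symm
  exact hc hcz

section
variable {n d : ℕ} (A : Matrix (Fin n) (Fin n) ℝ)
  (θ : Fin (d + 1) → ℝ) (E : Fin (d + 1) → Matrix (Fin n) (Fin n) ℝ)

lemma pow_spec (hspec : A = ∑ r, θ r • E r)
    (hidem : ∀ r, E r * E r = E r)
    (horth : ∀ r s, r ≠ s → E r * E s = 0)
    (hsum : ∑ r, E r = 1) :
    ∀ k : ℕ, A ^ k = ∑ r, θ r ^ k • E r := by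
  intro k
  induction k with
  | zero => simp [hsum]
  | succ k ih =>
    rw [pow_succ, ih, hspec, Finset.sum_mul_sum]
    rw [Finset.sum_comm]
    refine Finset.sum_congr rfl fun s _ => ?_
    rw [Finset.sum_eq_single s]
    · rw [smul_mul_smul_comm, hidem s, pow_succ, mul_comm]
    · intro r _ hrs
      rw [smul_mul_smul_comm, horth r s hrs, smul_zero]
    · intro h; exact absurd (Finset.mem_univ s) h

lemma aeval_spec (hspec : A = ∑ r, θ r • E r)
    (hidem : ∀ r, E r * E r = E r)
    (horth : ∀ r s, r ≠ s → E r * E s = 0)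
    (hsum : ∑ r, E r = 1) (p : ℝ[X]) :
    aeval A p = ∑ r, p.eval (θ r) • E r := by
  rw [Polynomial.aeval_eq_sum_range (p := p) (x := A)]
  have : ∀ r, p.eval (θ r) = ∑ i ∈ Finset.range (p.natDegree + 1), p.coeff i * θ r ^ i :=
    fun r => Polynomial.eval_eq_sum_range (x := θ r) (p := p)
  simp_rw [this, Finset.sum_smul, mul_smul]
  rw [Finset.sum_comm]
  refine Finset.sum_congr rfl fun i _ => ?_
  rw [pow_spec A θ E hspec hidem horth hsum i, Finset.smul_sum]

end

section
variable {n d : ℕ} {A : Matrix (Fin n) (Fin n) ℝ}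
  {θ : Fin (d + 1) → ℝ} {E : Fin (d + 1) → Matrix (Fin n) (Fin n) ℝ}
  {a b : Fin n} {ε : ℝ} {S : Finset (Fin (d + 1))}

lemma Ew_mem (hS : ∀ r, r ∈ S ↔ ((E r) *ᵥ (Pi.single a 1) = ε • ((E r) *ᵥ (Pi.single b 1)) ∧
      (E r) *ᵥ (Pi.single a 1) ≠ 0)) {r : Fin (d+1)} (hr : r ∈ S) :
    (E r) *ᵥ ((Pi.single a 1 : Fin n → ℝ) + ε • (Pi.single b 1 : Fin n → ℝ)) = (2:ℝ) • ((E r) *ᵥ (Pi.single a 1)) := by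
  obtain ⟨h1, h2⟩ := (hS r).mp hr
  rw [Matrix.mulVec_add, Matrix.mulVec_smul, ← h1, two_smul]

lemma Ew_mem_ne (hS : ∀ r, r ∈ S ↔ ((E r) *ᵥ (Pi.single a 1) = ε • ((E r) *ᵥ (Pi.single b 1)) ∧
      (E r) *ᵥ (Pi.single a 1) ≠ 0)) {r : Fin (d+1)} (hr : r ∈ S) :
    (E r) *ᵥ ((Pi.single a 1 : Fin n → ℝ) + ε • (Pi.single b 1 : Fin n → ℝ)) ≠ 0 := by
  rw [Ew_mem hS hr]
  obtain ⟨h1, h2⟩ := (hS r).mp hr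
  simpa using h2

lemma Ew_not_mem (hε : ε = 1 ∨ ε = -1)
    (hsc : ∀ r, ∃ σ : ℝ, (σ = 1 ∨ σ = -1) ∧
      (E r) *ᵥ (Pi.single a 1) = σ • ((E r) *ᵥ (Pi.single b 1)))
    (hS : ∀ r, r ∈ S ↔ ((E r) *ᵥ (Pi.single a 1) = ε • ((E r) *ᵥ (Pi.single b 1)) ∧
      (E r) *ᵥ (Pi.single a 1) ≠ 0)) {r : Fin (d+1)} (hr : r ∉ S) :
    (E r) *ᵥ ((Pi.single a 1 : Fin n → ℝ) + ε • (Pi.single b 1 : Fin n → ℝ)) = 0 := by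
  obtain ⟨σ, hσ, hab⟩ := hsc r
  rw [Matrix.mulVec_add, Matrix.mulVec_smul]
  by_cases hz : (E r) *ᵥ (Pi.single a 1) = 0
  · have hσ0 : σ ≠ 0 := by rcases hσ with h | h <;> rw [h] <;> norm_num
    have hb : (E r) *ᵥ (Pi.single b 1) = 0 := by
      have := hab; rw [hz] at this
      exact (smul_eq_zero.mp this.symm).resolve_left hσ0
    rw [hz, hb, smul_zero, add_zero]
  · have hne : σ ≠ ε := by
      intro h
      exact hr ((hS r).mpr ⟨h ▸ hab, hz⟩)
    have hσε : σ = -ε := by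
      rcases hσ with h | h <;> rcases hε with h' | h' <;> rw [h, h'] at hne ⊢ <;>
        first | exact absurd rfl hne | norm_num
    rw [hab, hσε, neg_smul, neg_add_cancel]

lemma eval_eq_zero_of_ann
    (hidem : ∀ r, E r * E r = E r)
    (horth : ∀ r s, r ≠ s → E r * E s = 0)
    (hS : ∀ r, r ∈ S ↔ ((E r) *ᵥ (Pi.single a 1) = ε • ((E r) *ᵥ (Pi.single b 1)) ∧
      (E r) *ᵥ (Pi.single a 1) ≠ 0))
    {p : ℝ[X]}
    (hps : (∑ r, p.eval (θ r) • E r) *ᵥ ((Pi.single a 1 : Fin n → ℝ) + ε • (Pi.single b 1 : Fin n → ℝ)) = 0)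
    {s : Fin (d+1)} (hs : s ∈ S) : p.eval (θ s) = 0 := by
  set w : Fin n → ℝ := (Pi.single a 1 : Fin n → ℝ) + ε • (Pi.single b 1 : Fin n → ℝ) with hw
  have h1 : E s *ᵥ ((∑ r, p.eval (θ r) • E r) *ᵥ w) = 0 := by rw [hps, Matrix.mulVec_zero]
  rw [Matrix.mulVec_mulVec] at h1
  have h2 : E s * ∑ r, p.eval (θ r) • E r = p.eval (θ s) • E s := by
    rw [Finset.mul_sum, Finset.sum_eq_single s]
    · rw [Matrix.mul_smul, hidem s]
    · intro r _ hrs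
      rw [Matrix.mul_smul, horth s r (Ne.symm hrs), smul_zero]
    · intro h; exact absurd (Finset.mem_univ s) h
  rw [h2, Matrix.smul_mulVec] at h1
  have h3 : E s *ᵥ w ≠ 0 := Ew_mem_ne hS hs
  exact (smul_eq_zero.mp h1).resolve_right h3

end

lemma adjMap {V : Type*} [Fintype V] [DecidableEq V] (G : SimpleGraph V) [DecidableRel G.Adj]
    {R S : Type*} [NonAssocSemiring R] [NonAssocSemiring S] (f : R →+* S) :
    (G.adjMatrix R).map f = G.adjMatrix S := by
  ext i j
  simp [SimpleGraph.adjMatrix_apply, Matrix.map_apply, apply_ite f]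

lemma evalcp {m : ℕ} (M : Matrix (Fin m) (Fin m) ℝ) (t : ℝ) :
    M.charpoly.eval t = (Matrix.diagonal (fun _ => t) - M).det := by
  rw [Matrix.charpoly, ← Polynomial.coe_evalRingHom, RingHom.map_det]
  congr 1
  ext i j
  by_cases h : i = j <;>
    simp [h, Matrix.charmatrix_apply, Matrix.diagonal_apply, RingHom.mapMatrix_apply]

section
variable {n d : ℕ} {A : Matrix (Fin n) (Fin n) ℝ}
  {θ : Fin (d + 1) → ℝ} {E : Fin (d + 1) → Matrix (Fin n) (Fin n) ℝ}

lemma AmulE (hspec : A = ∑ r, θ r • E r)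
    (hidem : ∀ r, E r * E r = E r)
    (horth : ∀ r s, r ≠ s → E r * E s = 0) (r : Fin (d+1)) :
    A * E r = θ r • E r := by
  rw [hspec, Finset.sum_mul, Finset.sum_eq_single r]
  · rw [Matrix.smul_mul, hidem r]
  · intro s _ hsr
    rw [Matrix.smul_mul, horth s r hsr, smul_zero]
  · intro h; exact absurd (Finset.mem_univ r) h

lemma charpoly_root (hspec : A = ∑ r, θ r • E r)
    (hidem : ∀ r, E r * E r = E r)
    (horth : ∀ r s, r ≠ s → E r * E s = 0)
    (hE0 : ∀ r, E r ≠ 0) (r : Fin (d+1)) :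
    A.charpoly.eval (θ r) = 0 := by
  rw [evalcp]
  by_contra hdet
  have hu : IsUnit (Matrix.diagonal (fun _ => θ r) - A).det := isUnit_iff_ne_zero.mpr hdet
  have : Invertible (Matrix.diagonal (fun _ => θ r) - A) := Matrix.invertibleOfIsUnitDet _ hu
  have hzero : (Matrix.diagonal (fun _ => θ r) - A) * E r = 0 := by
    have : (Matrix.diagonal (fun _ : Fin n => θ r)) = θ r • (1 : Matrix (Fin n) (Fin n) ℝ) := by
      ext i j; by_cases h : i = j <;> simp [h, Matrix.diagonal_apply, Matrix.one_apply]
    rw [this, Matrix.sub_mul, AmulE hspec hidem horth r, Matrix.smul_mul, Matrix.one_mul, sub_self]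
  have := hE0 r
  apply this
  calc E r = ⅟(Matrix.diagonal (fun _ => θ r) - A) * ((Matrix.diagonal (fun _ => θ r) - A) * E r) := by
        rw [← Matrix.mul_assoc, invOf_mul_self, Matrix.one_mul]
    _ = 0 := by rw [hzero, Matrix.mul_zero]

end

lemma int_coeffs {ι : Type*} (s : Finset ι) (v : ι → ℝ) (hv : ∀ r ∈ s, IsIntegral ℤ (v r)) :
    ∀ i, IsIntegral ℤ ((∏ r ∈ s, (X - C (v r))).coeff i) := by
  classical
  induction s using Finset.induction_on with
  | empty =>
    intro i
    rcases Nat.eq_zero_or_pos i with h | h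
    · simp [h]; exact isIntegral_one
    · simp [Finset.prod_empty, Polynomial.coeff_one, Nat.pos_iff_ne_zero.mp h]
      exact isIntegral_zero
  | @insert x s' hxs ih =>
    intro i
    rw [Finset.prod_insert hxs]
    have hvx : IsIntegral ℤ (v x) := hv x (Finset.mem_insert_self x s')
    have ih' := ih (fun r hr => hv r (Finset.mem_insert_of_mem hr))
    have expand : ((X - C (v x)) * ∏ r ∈ s', (X - C (v r))).coeff i
        = (X * ∏ r ∈ s', (X - C (v r))).coeff i - v x * (∏ r ∈ s', (X - C (v r))).coeff i := by
      rw [sub_mul, Polynomial.coeff_sub, Polynomial.coeff_C_mul]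
    rw [expand]
    refine IsIntegral.sub ?_ (hvx.mul (ih' i))
    rcases Nat.eq_zero_or_pos i with h | h
    · subst h; rw [Polynomial.coeff_X_mul_zero]; exact isIntegral_zero
    · obtain ⟨j, rfl⟩ := Nat.exists_eq_succ_of_ne_zero (Nat.pos_iff_ne_zero.mp h)
      rw [Polynomial.coeff_X_mul]; exact ih' j

lemma sum_mulVec' {n : ℕ} {α : Type*} [NonUnitalNonAssocSemiring α] {ι : Type*} (s : Finset ι)
    (M : ι → Matrix (Fin n) (Fin n) α)
    (v : Fin n → α) : (∑ r ∈ s, M r) *ᵥ v = ∑ r ∈ s, M r *ᵥ v :=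
  map_sum (Matrix.mulVec.addMonoidHomLeft v) M s

lemma mapMulVec {n : ℕ} (f : ℚ →+* ℝ) (M : Matrix (Fin n) (Fin n) ℚ) (v : Fin n → ℚ) :
    (M.map f) *ᵥ (fun j => f (v j)) = fun j => f ((M *ᵥ v) j) := by
  funext j
  simp [Matrix.mulVec, dotProduct, map_sum, _root_.map_mul, Matrix.map_apply]

lemma aevalMap {n : ℕ} (M : Matrix (Fin n) (Fin n) ℚ) (p : ℚ[X]) :
    aeval (M.map (algebraMap ℚ ℝ)) (p.map (algebraMap ℚ ℝ)) = (aeval M p).map (algebraMap ℚ ℝ) := by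
  rw [Polynomial.aeval_map_algebraMap]
  have h := Polynomial.aeval_algHom_apply
    (AlgHom.mapMatrix (m := Fin n) (Algebra.ofId ℚ ℝ)) M p
  exact h

set_option maxHeartbeats 1000000 in
lemma key {n d : ℕ} (G : SimpleGraph (Fin n)) [DecidableRel G.Adj]
    (A : Matrix (Fin n) (Fin n) ℝ) (hA : A = G.adjMatrix ℝ)
    (θ : Fin (d + 1) → ℝ) (hθ : Function.Injective θ)
    (E : Fin (d + 1) → Matrix (Fin n) (Fin n) ℝ)
    (hspec : A = ∑ r, θ r • E r)
    (hidem : ∀ r, E r * E r = E r)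
    (horth : ∀ r s, r ≠ s → E r * E s = 0)
    (hsum : ∑ r, E r = 1)
    (hint : ∀ r, IsIntegral ℤ (θ r))
    (a b : Fin n)
    (hsc : ∀ r, ∃ σ : ℝ, (σ = 1 ∨ σ = -1) ∧
      (E r) *ᵥ (Pi.single a 1) = σ • ((E r) *ᵥ (Pi.single b 1)))
    (ε : ℚ) (hε : ε = 1 ∨ ε = -1)
    (S : Finset (Fin (d + 1)))
    (hS : ∀ r, r ∈ S ↔ ((E r) *ᵥ (Pi.single a 1) = ((ε : ℝ)) • ((E r) *ᵥ (Pi.single b 1)) ∧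
      (E r) *ᵥ (Pi.single a 1) ≠ 0)) :
    ∃ P : Polynomial ℤ, P.Monic ∧ P.map (Int.castRingHom ℝ) = ∏ r ∈ S, (X - C (θ r)) := by
  classical
  have hεℝ : (ε : ℝ) = 1 ∨ (ε : ℝ) = -1 := by
    rcases hε with h | h <;> [left; right] <;> rw [h] <;> push_cast <;> ring
  set f : ℚ →+* ℝ := algebraMap ℚ ℝ with hf
  have hfi : Function.Injective f := f.injective
  set k : ℕ := S.card with hk
  set φ : ℝ[X] := ∏ r ∈ S, (X - C (θ r)) with hφ
  have hmφ : φ.Monic := monic_prod_of_monic _ _ (fun r _ => monic_X_sub_C _)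
  have hdφ : φ.natDegree = k := by
    rw [hφ, natDegree_prod_of_monic _ _ (fun r _ => monic_X_sub_C _)]
    simp [natDegree_X_sub_C, hk]
  set w : Fin n → ℝ := (Pi.single a 1 : Fin n → ℝ) + (ε : ℝ) • (Pi.single b 1 : Fin n → ℝ)
    with hw
  -- φ annihilates w
  have hannφ : (aeval A φ) *ᵥ w = 0 := by
    rw [aeval_spec A θ E hspec hidem horth hsum φ, sum_mulVec']
    refine Finset.sum_eq_zero fun r _ => ?_
    rw [Matrix.smul_mulVec]
    by_cases hr : r ∈ S
    · have : φ.eval (θ r) = 0 := by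
        rw [hφ, eval_prod]
        exact Finset.prod_eq_zero hr (by simp)
      rw [this, zero_smul]
    · rw [hw, Ew_not_mem hεℝ hsc hS hr, smul_zero]
  -- real linear dependence of A^i *ᵥ w
  have hcomb : ∑ i : Fin (k + 1), φ.coeff (i : ℕ) • (A ^ (i : ℕ) *ᵥ w) = 0 := by
    have h1 : aeval A φ = ∑ i : Fin (k + 1), φ.coeff (i : ℕ) • A ^ (i : ℕ) := by
      rw [Polynomial.aeval_eq_sum_range (p := φ) (x := A), hdφ, ← Finset.sum_range
        (f := fun i => φ.coeff i • A ^ i)]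
    calc ∑ i : Fin (k + 1), φ.coeff (i : ℕ) • (A ^ (i : ℕ) *ᵥ w)
        = (∑ i : Fin (k + 1), φ.coeff (i : ℕ) • A ^ (i : ℕ)) *ᵥ w := by
          rw [sum_mulVec']
          exact Finset.sum_congr rfl fun i _ => (Matrix.smul_mulVec _ _ _).symm
      _ = 0 := by rw [← h1, hannφ]
  -- rational data
  set Aq : Matrix (Fin n) (Fin n) ℚ := G.adjMatrix ℚ with hAq
  set wq : Fin n → ℚ := (Pi.single a 1 : Fin n → ℚ) + ε • (Pi.single b 1 : Fin n → ℚ) with hwq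
  have hAmap : Aq.map f = A := by rw [hAq, adjMap, hA]
  have hwmap : (fun j => f (wq j)) = w := by
    funext j
    rw [hw, hwq]
    simp only [Pi.add_apply, Pi.smul_apply, smul_eq_mul, _root_.map_add, _root_.map_mul]
    congr 1
    · by_cases h : j = a <;> simp [Pi.single_apply, h]
    · rw [eq_ratCast f ε]
      congr 1
      by_cases h : j = b <;> simp [Pi.single_apply, h]
  have hvec : ∀ i : ℕ, (fun j => f ((Aq ^ i *ᵥ wq) j)) = A ^ i *ᵥ w := by
    intro i
    have hpow : (Aq ^ i).map f = A ^ i := by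
      have := map_pow (f.mapMatrix (m := Fin n)) Aq i
      simp only [RingHom.mapMatrix_apply] at this
      rw [this, hAmap]
    rw [← hpow, ← hwmap, mapMulVec]
  have hc0 : (fun i : Fin (k + 1) => φ.coeff (i : ℕ)) ≠ 0 := by
    intro h
    have := congrFun h ⟨k, Nat.lt_succ_self k⟩
    simp only [Pi.zero_apply] at this
    have h1 : φ.coeff k = 0 := this
    have h2 : φ.coeff k = 1 := by rw [← hdφ]; exact hmφ.coeff_natDegree
    exact one_ne_zero (h2.symm.trans h1)
  obtain ⟨q', hq'0, hq'sum⟩ := descent (fun i : Fin (k + 1) => Aq ^ (i : ℕ) *ᵥ wq)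
    (fun i => φ.coeff (i : ℕ)) hc0 (by
      calc ∑ i : Fin (k+1), φ.coeff (i:ℕ) • (fun j => ((((Aq ^ (i:ℕ)) *ᵥ wq) j : ℚ) : ℝ))
          = ∑ i : Fin (k+1), φ.coeff (i:ℕ) • (A ^ (i:ℕ) *ᵥ w) := by
            refine Finset.sum_congr rfl fun i _ => ?_
            congr 1
            have := hvec (i : ℕ)
            rw [← this]
            funext j
            rw [eq_ratCast f]
        _ = 0 := hcomb)
  -- rational polynomial
  set p : ℚ[X] := ∑ i : Fin (k + 1), C (q' i) * X ^ (i : ℕ) with hp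
  have hcoeffp : ∀ i0 : Fin (k + 1), p.coeff (i0 : ℕ) = q' i0 := by
    intro i0
    rw [hp, finset_sum_coeff]
    rw [Finset.sum_eq_single i0]
    · simp [coeff_C_mul, coeff_X_pow]
    · intro i _ hne
      have : ((i0 : ℕ) ≠ (i : ℕ)) := fun h => hne (Fin.ext h.symm)
      rw [coeff_C_mul, coeff_X_pow, if_neg this, mul_zero]
    · intro h; exact absurd (Finset.mem_univ i0) h
  have hp0 : p ≠ 0 := by
    intro h
    apply hq'0
    funext i
    have := hcoeffp i
    rw [h] at this
    simpa using this.symm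
  have hpann : (aeval Aq p) *ᵥ wq = 0 := by
    have h1 : aeval Aq p = ∑ i : Fin (k + 1), q' i • Aq ^ (i : ℕ) := by
      rw [hp, map_sum]
      refine Finset.sum_congr rfl fun i _ => ?_
      rw [_root_.map_mul, aeval_C, map_pow, aeval_X, Algebra.smul_def]
    rw [h1]
    have h2 : (∑ i : Fin (k+1), q' i • Aq ^ (i:ℕ)) *ᵥ wq
        = ∑ i : Fin (k+1), q' i • (Aq ^ (i:ℕ) *ᵥ wq) := by
      rw [sum_mulVec']
      exact Finset.sum_congr rfl fun i _ => Matrix.smul_mulVec _ _ _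
    rw [h2, hq'sum]
  set pm : ℝ[X] := p.map f with hpm
  have hpm0 : pm ≠ 0 := (Polynomial.map_ne_zero_iff hfi).mpr hp0
  have hpmann : (aeval A pm) *ᵥ w = 0 := by
    have h1 : aeval A pm = (aeval Aq p).map f := by
      rw [hpm, ← hAmap]; exact aevalMap Aq p
    rw [h1, ← hwmap, mapMulVec, hpann]
    funext j
    simp
  have hroots : ∀ s ∈ S, pm.eval (θ s) = 0 := by
    intro s hs
    refine eval_eq_zero_of_ann hidem horth hS ?_ hs
    rw [← aeval_spec A θ E hspec hidem horth hsum pm]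
    exact hpmann
  have hdvd : φ ∣ pm := by
    rw [hφ]
    refine Finset.prod_dvd_of_coprime ?_ (fun s hs => dvd_iff_isRoot.mpr (hroots s hs))
    intro r _ s _ hrs
    exact Polynomial.isCoprime_X_sub_C_of_isUnit_sub
      (isUnit_iff_ne_zero.mpr (sub_ne_zero.mpr (fun h => hrs (hθ h))))
  obtain ⟨t, ht⟩ := hdvd
  have ht0 : t ≠ 0 := by rintro rfl; rw [mul_zero] at ht; exact hpm0 ht
  have hdegp : p.natDegree ≤ k := by
    refine natDegree_sum_le_of_forall_le _ _ fun i _ => ?_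
    refine le_trans (natDegree_C_mul_le _ _) ?_
    rw [natDegree_X_pow]
    exact Nat.le_of_lt_succ i.isLt
  have hdegpm : pm.natDegree ≤ k := le_trans natDegree_map_le hdegp
  have hdegt : t.natDegree = 0 := by
    have := natDegree_mul (hmφ.ne_zero) ht0
    rw [← ht, hdφ] at this
    omega
  have htC : t = C (t.coeff 0) := eq_C_of_natDegree_eq_zero hdegt
  set c : ℝ := t.coeff 0 with hc
  have hcne : c ≠ 0 := by
    intro h; apply ht0; rw [htC, h, map_zero]
  have hlc : f p.leadingCoeff = c := by
    have h1 : pm.leadingCoeff = c := by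
      rw [ht, htC, leadingCoeff_mul, leadingCoeff_C, hmφ.leadingCoeff, one_mul]
    rw [← h1, hpm, leadingCoeff_map]
  have hlcne : p.leadingCoeff ≠ 0 := leadingCoeff_ne_zero.mpr hp0
  set q : ℚ[X] := C (p.leadingCoeff)⁻¹ * p with hq
  have hqmap : q.map f = φ := by
    rw [hq, Polynomial.map_mul, map_C, map_inv₀, hlc, ← hpm, ht, htC]
    rw [mul_comm φ (C c), ← mul_assoc, ← C_mul, inv_mul_cancel₀ hcne, C_1, one_mul]
  have hqM : q.Monic := monic_map_iff.mp (by rw [hqmap]; exact hmφ)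
  -- integrality of coefficients of q
  have hint_coeff : ∀ i, ∃ z : ℤ, algebraMap ℤ ℚ z = q.coeff i := by
    intro i
    have h1 : IsIntegral ℤ (φ.coeff i) := int_coeffs S θ (fun r _ => hint r) i
    have h2 : IsIntegral ℤ (algebraMap ℚ ℝ (q.coeff i)) := by
      rw [show algebraMap ℚ ℝ (q.coeff i) = (q.map f).coeff i from (coeff_map f i).symm, hqmap]
      exact h1
    have h3 : IsIntegral ℤ (q.coeff i) := IsIntegral.tower_bot hfi h2
    exact IsIntegrallyClosed.isIntegral_iff.mp h3
  have hlift : q ∈ Polynomial.lifts (Int.castRingHom ℚ) := by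
    rw [lifts_iff_coeff_lifts]
    intro i
    obtain ⟨z, hz⟩ := hint_coeff i
    exact ⟨z, by rw [← hz]; simp [algebraMap_int_eq]⟩
  obtain ⟨P, hPmap, hPdeg⟩ := Polynomial.mem_lifts_and_degree_eq hlift
  have hPM : P.Monic := by
    have h1 : P.natDegree = q.natDegree := natDegree_eq_of_degree_eq hPdeg
    have h3 : (Polynomial.map (Int.castRingHom ℚ) P).coeff P.natDegree = q.coeff q.natDegree := by
      rw [hPmap, h1]
    rw [coeff_map, hqM.coeff_natDegree] at h3
    have h4 : P.coeff P.natDegree = 1 := by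
      have : ((P.coeff P.natDegree : ℤ) : ℚ) = 1 := h3
      exact_mod_cast this
    unfold Polynomial.Monic Polynomial.leadingCoeff
    exact h4
  refine ⟨P, hPM, ?_⟩
  have hcomp : (f.comp (Int.castRingHom ℚ)) = Int.castRingHom ℝ := by
    ext1 x
    simp [hf]
  rw [← hqmap, ← hPmap, Polynomial.map_map, hcomp]

set_option maxHeartbeats 1000000 in
/-- For strongly cospectral vertices `a`, `b` of a graph with spectral
decomposition `A = ∑ r, θ r • E r`, the polynomials `φ₊ = ∏_{θ∈Θ₊} (X - θ)` and
`φ₋ = ∏_{θ∈Θ₋} (X - θ)` have integer coefficients, `Θ₊` and `Θ₋` are disjoint, and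
`φ₊ * φ₋` divides the characteristic polynomial of `A` in `ℤ[x]`. -/
theorem plus_minus_factors_integral
    {n d : ℕ} (G : SimpleGraph (Fin n)) [DecidableRel G.Adj]
    (A : Matrix (Fin n) (Fin n) ℝ) (hA : A = G.adjMatrix ℝ)
    (θ : Fin (d + 1) → ℝ) (hθ : Function.Injective θ)
    (E : Fin (d + 1) → Matrix (Fin n) (Fin n) ℝ)
    (hspec : A = ∑ r, θ r • E r)
    (hsym : ∀ r, (E r)ᵀ = E r)
    (hidem : ∀ r, E r * E r = E r)
    (horth : ∀ r s, r ≠ s → E r * E s = 0)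
    (hsum : ∑ r, E r = 1)
    (hE0 : ∀ r, E r ≠ 0)
    (a b : Fin n)
    (hsc : ∀ r, ∃ σ : ℝ, (σ = 1 ∨ σ = -1) ∧
      (E r) *ᵥ (Pi.single a 1) = σ • ((E r) *ᵥ (Pi.single b 1)))
    (Θp Θm : Finset (Fin (d + 1)))
    (hΘp : ∀ r, r ∈ Θp ↔
      ((E r) *ᵥ (Pi.single a 1) = (E r) *ᵥ (Pi.single b 1) ∧
        (E r) *ᵥ (Pi.single a 1) ≠ 0))
    (hΘm : ∀ r, r ∈ Θm ↔
      ((E r) *ᵥ (Pi.single a 1) = -((E r) *ᵥ (Pi.single b 1)) ∧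
        (E r) *ᵥ (Pi.single a 1) ≠ 0)) :
    (∃ P : Polynomial ℤ, P.map (Int.castRingHom ℝ) = ∏ r ∈ Θp, (X - C (θ r))) ∧
    (∃ Q : Polynomial ℤ, Q.map (Int.castRingHom ℝ) = ∏ r ∈ Θm, (X - C (θ r))) ∧
    Disjoint (Θp.image θ) (Θm.image θ) ∧
    (∃ P Q R : Polynomial ℤ,
      P.map (Int.castRingHom ℝ) = ∏ r ∈ Θp, (X - C (θ r)) ∧
      Q.map (Int.castRingHom ℝ) = ∏ r ∈ Θm, (X - C (θ r)) ∧
      (P * Q * R).map (Int.castRingHom ℝ) = A.charpoly) := by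
  classical
  -- the adjacency matrix over ℤ
  set AZ : Matrix (Fin n) (Fin n) ℤ := G.adjMatrix ℤ with hAZ
  have hAZmap : AZ.map (Int.castRingHom ℝ) = A := by rw [hAZ, adjMap, hA]
  have hfZmap : AZ.charpoly.map (Int.castRingHom ℝ) = A.charpoly := by
    rw [← Matrix.charpoly_map, hAZmap]
  -- each eigenvalue is an algebraic integer
  have hroot : ∀ r, A.charpoly.eval (θ r) = 0 := charpoly_root hspec hidem horth hE0
  have hint : ∀ r, IsIntegral ℤ (θ r) := by
    intro r
    refine ⟨AZ.charpoly, AZ.charpoly_monic, ?_⟩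
    show Polynomial.eval₂ (algebraMap ℤ ℝ) (θ r) AZ.charpoly = 0
    rw [Polynomial.eval₂_eq_eval_map, algebraMap_int_eq, hfZmap]
    exact hroot r
  -- the two sets in the form needed by `key`
  have hSp : ∀ r, r ∈ Θp ↔ ((E r) *ᵥ (Pi.single a 1)
      = (((1 : ℚ) : ℝ)) • ((E r) *ᵥ (Pi.single b 1)) ∧ (E r) *ᵥ (Pi.single a 1) ≠ 0) := by
    intro r
    rw [hΘp r]
    norm_num
  have hSm : ∀ r, r ∈ Θm ↔ ((E r) *ᵥ (Pi.single a 1)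
      = (((-1 : ℚ) : ℝ)) • ((E r) *ᵥ (Pi.single b 1)) ∧ (E r) *ᵥ (Pi.single a 1) ≠ 0) := by
    intro r
    rw [hΘm r]
    norm_num
  obtain ⟨P, hPM, hP⟩ := key G A hA θ hθ E hspec hidem horth hsum hint a b hsc 1 (Or.inl rfl)
    Θp hSp
  obtain ⟨Q, hQM, hQ⟩ := key G A hA θ hθ E hspec hidem horth hsum hint a b hsc (-1)
    (Or.inr rfl) Θm hSm
  -- disjointness
  have hdisj : Disjoint Θp Θm := by
    rw [Finset.disjoint_left]
    intro r hp hm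
    obtain ⟨h1, h2⟩ := (hΘp r).mp hp
    obtain ⟨h3, _⟩ := (hΘm r).mp hm
    rw [h1] at h3
    have h4 : (E r) *ᵥ (Pi.single b 1) + (E r) *ᵥ (Pi.single b 1) = 0 := by
      nth_rewrite 1 [h3]
      exact neg_add_cancel _
    have hb0 : (E r) *ᵥ (Pi.single b 1) = 0 := by
      have h5 : (2 : ℝ) • ((E r) *ᵥ (Pi.single b 1)) = 0 := by rw [two_smul]; exact h4
      exact (smul_eq_zero.mp h5).resolve_left (by norm_num)
    exact h2 (by rw [h1, hb0])
  have hdisjim : Disjoint (Θp.image θ) (Θm.image θ) := (Finset.disjoint_image hθ).mpr hdisj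
  have hPQM : (P * Q).Monic := hPM.mul hQM
  have hPQmap : (P * Q).map (Int.castRingHom ℝ) = ∏ r ∈ Θp ∪ Θm, (X - C (θ r)) := by
    rw [Polynomial.map_mul, hP, hQ, ← Finset.prod_union hdisj]
  have hdvd : (P * Q).map (Int.castRingHom ℝ) ∣ A.charpoly := by
    rw [hPQmap]
    refine Finset.prod_dvd_of_coprime ?_ fun r _ => dvd_iff_isRoot.mpr (hroot r)
    intro r _ s _ hrs
    exact Polynomial.isCoprime_X_sub_C_of_isUnit_sub
      (isUnit_iff_ne_zero.mpr (sub_ne_zero.mpr (fun h => hrs (hθ h))))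
  have hmod : AZ.charpoly %ₘ (P * Q) = 0 := by
    apply Polynomial.map_injective (Int.castRingHom ℝ) Int.cast_injective
    rw [Polynomial.map_modByMonic _ hPQM, hfZmap, Polynomial.map_zero]
    exact (Polynomial.modByMonic_eq_zero_iff_dvd (hPQM.map _)).mpr hdvd
  refine ⟨⟨P, hP⟩, ⟨Q, hQ⟩, hdisjim, P, Q, AZ.charpoly /ₘ (P * Q), hP, hQ, ?_⟩
  have hrec := Polynomial.modByMonic_add_div AZ.charpoly (P * Q)
  rw [hmod, zero_add] at hrec
  calc (P * Q * (AZ.charpoly /ₘ (P * Q))).map (Int.castRingHom ℝ)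
      = (AZ.charpoly).map (Int.castRingHom ℝ) := by rw [hrec]
    _ = A.charpoly := hfZmap
end

section
/- (Kronecker's theorem) Let θ_0,…,θ_d and ζ_0,…,ζ_d be arbitrary real numbers. The following are equivalent: (i) for every ε > 0 there exists y ≥ 0 such that for each r ∈ {0,…,d} there is an integer k_r with |θ_r y − ζ_r − 2πk_r| < ε; (ii) whenever integers ℓ_0,…,ℓ_d satisfy ℓ_0θ_0 + … + ℓ_dθ_d = 0, they also satisfy ℓ_0ζ_0 + … + ℓ_dζ_d ∈ 2πℤ. -/
open Real


section KroneckerProofAux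
open Real Filter Finset Complex intervalIntegral


noncomputable section
namespace KroneckerAux

/-- basic exponential building block -/
def E (lam mu : ℝ) (y : ℝ) : ℂ := Complex.exp (((lam * y - mu : ℝ) : ℂ) * Complex.I)

lemma E_cont (lam mu : ℝ) : Continuous (E lam mu) := by
  unfold E; fun_prop

lemma E_abs (lam mu y : ℝ) : ‖E lam mu y‖ = 1 :=
  Complex.norm_exp_ofReal_mul_I _

lemma mean_E_ne (lam mu : ℝ) (h : lam ≠ 0) :
    Tendsto (fun T : ℝ => (∫ y in (0:ℝ)..T, E lam mu y) / T) atTop (nhds 0) := by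
  have hc : ((lam : ℂ) * Complex.I) ≠ 0 := by
    simp [Complex.ext_iff, h]
  have key : ∀ T : ℝ, ‖∫ y in (0:ℝ)..T, E lam mu y‖ ≤ 2 / |lam| := by
    intro T
    have hE : ∀ y : ℝ, E lam mu y
        = Complex.exp (((-mu : ℝ) : ℂ) * Complex.I) * Complex.exp ((lam : ℂ) * Complex.I * y) := by
      intro y
      rw [E, ← Complex.exp_add]
      congr 1
      push_cast
      ring
    rw [intervalIntegral.integral_congr (g := fun y =>
        Complex.exp (((-mu : ℝ) : ℂ) * Complex.I) * Complex.exp ((lam : ℂ) * Complex.I * y))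
        (fun y _ => hE y)]
    rw [intervalIntegral.integral_const_mul, integral_exp_mul_complex hc]
    rw [norm_mul]
    have h1 : ‖Complex.exp (((-mu : ℝ) : ℂ) * Complex.I)‖ = 1 := Complex.norm_exp_ofReal_mul_I _
    rw [h1, one_mul]
    have h2 : ∀ t : ℝ, ‖Complex.exp ((lam:ℂ) * Complex.I * t)‖ = 1 := by
      intro t
      have : (lam:ℂ) * Complex.I * t = ((lam * t : ℝ) : ℂ) * Complex.I := by push_cast; ring
      rw [this]; exact Complex.norm_exp_ofReal_mul_I _
    rw [norm_div]
    have h3 : ‖(lam:ℂ) * Complex.I‖ = |lam| := by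
      simp [Complex.norm_def, Complex.normSq_mul]
    rw [h3]
    apply div_le_div_of_nonneg_right ?_ (abs_nonneg _)
    calc ‖Complex.exp ((lam:ℂ) * Complex.I * T) - Complex.exp ((lam:ℂ) * Complex.I * 0)‖
        ≤ ‖Complex.exp ((lam:ℂ) * Complex.I * T)‖ + ‖Complex.exp ((lam:ℂ) * Complex.I * 0)‖ :=
          norm_sub_le _ _
      _ = 2 := by rw [h2 T]; simp only [mul_zero, Complex.exp_zero, norm_one]; norm_num
  apply squeeze_zero_norm' ?_ (Tendsto.div_atTop (tendsto_const_nhds (x := 2 / |lam|)) tendsto_id)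
  filter_upwards [eventually_ge_atTop (1:ℝ)] with T hT
  have hT0 : (0:ℝ) < T := lt_of_lt_of_le one_pos hT
  rw [norm_div]
  have : ‖(T:ℂ)‖ = T := by
    rw [Complex.norm_real, Real.norm_eq_abs, abs_of_pos hT0]
  rw [this]
  exact div_le_div_of_nonneg_right (key T) hT0.le


lemma mean_E_zero (mu : ℝ) :
    Tendsto (fun T : ℝ => (∫ y in (0:ℝ)..T, E 0 mu y) / T) atTop
      (nhds (Complex.exp (((-mu : ℝ) : ℂ) * Complex.I))) := by
  have hE : ∀ y : ℝ, E 0 mu y = Complex.exp (((-mu : ℝ) : ℂ) * Complex.I) := by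
    intro y; rw [E]; norm_num
  apply Tendsto.congr' ?_ tendsto_const_nhds
  filter_upwards [eventually_ge_atTop (1:ℝ)] with T hT
  have hT0 : (T:ℂ) ≠ 0 := by
    simpa using (ne_of_gt (lt_of_lt_of_le one_pos hT))
  rw [intervalIntegral.integral_congr (fun y _ => (hE y))]
  rw [intervalIntegral.integral_const]
  simp only [sub_zero, real_smul]
  field_simp

lemma sum_exp_pow {n k : ℕ} (w : Fin n → ℂ) :
    (∑ r, Complex.exp (w r)) ^ k = ∑ a : Fin k → Fin n, Complex.exp (∑ j, w (a j)) := by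
  have : (∑ r, Complex.exp (w r)) ^ k = ∏ _j : Fin k, (∑ r, Complex.exp (w r)) := by
    rw [Finset.prod_const, Finset.card_univ, Fintype.card_fin]
  rw [this, Finset.prod_univ_sum, Fintype.piFinset_univ]
  exact Finset.sum_congr rfl fun a _ => (Complex.exp_sum _ _).symm

/-- count of hits of `a` at `r` -/
def cnt {n k : ℕ} (a : Fin k → Fin n) (r : Fin n) : ℕ :=
  (Finset.univ.filter fun j => a j = r).card

lemma sum_comp_eq_cnt {n k : ℕ} (a : Fin k → Fin n) (g : Fin n → ℝ) :
    ∑ j, g (a j) = ∑ r, (cnt a r : ℝ) * g r := by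
  rw [← Finset.sum_fiberwise_of_maps_to (fun j (_ : j ∈ Finset.univ) => Finset.mem_univ (a j))
      (fun j => g (a j))]
  refine Finset.sum_congr rfl fun r _ => ?_
  rw [Finset.sum_congr rfl (fun j hj => by
    rw [(Finset.mem_filter.mp hj).2]), Finset.sum_const, cnt, nsmul_eq_mul]


variable {n k : ℕ}

/-- the exponential sum -/
def p (Θ Z : Fin n → ℝ) (y : ℝ) : ℂ :=
  ∑ r, Complex.exp (((Θ r * y - Z r : ℝ) : ℂ) * Complex.I)

/-- sum of values along a tuple -/
def Sf (Θ : Fin n → ℝ) (a : Fin k → Fin n) : ℝ := ∑ j, Θ (a j)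

lemma conj_exp_ofReal_mul_I (x : ℝ) :
    (starRingEnd ℂ) (Complex.exp ((x : ℂ) * Complex.I)) = Complex.exp (((-x : ℝ) : ℂ) * Complex.I) := by
  rw [← Complex.exp_conj, map_mul, Complex.conj_ofReal, Complex.conj_I]
  push_cast
  ring_nf

lemma sum_cast_helper (Θ Z : Fin n → ℝ) (y : ℝ) (a : Fin k → Fin n) :
    (∑ j, ((Θ (a j) * y - Z (a j) : ℝ) : ℂ)) = ((Sf Θ a * y - Sf Z a : ℝ) : ℂ) := by
  simp only [Sf]
  push_cast
  rw [Finset.sum_sub_distrib, ← Finset.sum_mul]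

lemma Q_eq (Θ Z : Fin n → ℝ) (y : ℝ) :
    (p Θ Z y) ^ k * ((starRingEnd ℂ) (p Θ Z y)) ^ k
      = ∑ ab : (Fin k → Fin n) × (Fin k → Fin n),
          E (Sf Θ ab.1 - Sf Θ ab.2) (Sf Z ab.1 - Sf Z ab.2) y := by
  have h1 : (p Θ Z y) ^ k
      = ∑ a : Fin k → Fin n, Complex.exp (((Sf Θ a * y - Sf Z a : ℝ) : ℂ) * Complex.I) := by
    rw [p, sum_exp_pow]
    refine Finset.sum_congr rfl fun a _ => ?_
    rw [← Finset.sum_mul, sum_cast_helper]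
  have h2 : ((starRingEnd ℂ) (p Θ Z y)) ^ k
      = ∑ b : Fin k → Fin n, Complex.exp (((-(Sf Θ b * y - Sf Z b) : ℝ) : ℂ) * Complex.I) := by
    have hc : (starRingEnd ℂ) (p Θ Z y)
        = ∑ r, Complex.exp (((-(Θ r * y - Z r) : ℝ) : ℂ) * Complex.I) := by
      rw [p, map_sum]
      exact Finset.sum_congr rfl fun r _ => conj_exp_ofReal_mul_I _
    rw [hc, sum_exp_pow]
    refine Finset.sum_congr rfl fun b _ => ?_
    rw [← Finset.sum_mul]
    congr 1
    have h := sum_cast_helper Θ Z y b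
    have hj : ∀ j : Fin k, ((-(Θ (b j) * y - Z (b j)) : ℝ) : ℂ)
        = -(((Θ (b j) * y - Z (b j) : ℝ)) : ℂ) := fun j => by push_cast; ring
    rw [Finset.sum_congr rfl fun j _ => hj j, Finset.sum_neg_distrib, h]
    push_cast; ring
  rw [h1, h2, Finset.sum_mul_sum, Fintype.sum_prod_type]
  refine Finset.sum_congr rfl fun a _ => Finset.sum_congr rfl fun b _ => ?_
  rw [E, ← Complex.exp_add]
  congr 1
  push_cast
  ring


/-- number of coincidence pairs -/
def NN (Θ : Fin n → ℝ) (k : ℕ) : ℕ :=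
  (Finset.univ.filter fun ab : (Fin k → Fin n) × (Fin k → Fin n) =>
    Sf Θ ab.1 = Sf Θ ab.2).card

lemma Sf_eq_cnt (Θ : Fin n → ℝ) (a : Fin k → Fin n) :
    Sf Θ a = ∑ r, (cnt a r : ℝ) * Θ r := sum_comp_eq_cnt a Θ

lemma tendsto_mean_Q (Θ Z : Fin n → ℝ)
    (hrel : ∀ ℓ : Fin n → ℤ, (∑ r, (ℓ r : ℝ) * Θ r) = 0 →
      ∃ m : ℤ, (∑ r, (ℓ r : ℝ) * Z r) = 2 * π * m) :
    Tendsto (fun T : ℝ =>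
        (∫ y in (0:ℝ)..T, (p Θ Z y) ^ k * ((starRingEnd ℂ) (p Θ Z y)) ^ k) / T)
      atTop (nhds ((NN Θ k : ℕ) : ℂ)) := by
  have hfun : (fun T : ℝ =>
      (∫ y in (0:ℝ)..T, (p Θ Z y) ^ k * ((starRingEnd ℂ) (p Θ Z y)) ^ k) / T)
      = fun T : ℝ => ∑ ab : (Fin k → Fin n) × (Fin k → Fin n),
          (∫ y in (0:ℝ)..T, E (Sf Θ ab.1 - Sf Θ ab.2) (Sf Z ab.1 - Sf Z ab.2) y) / T := by
    funext T
    rw [intervalIntegral.integral_congr (fun y _ => Q_eq Θ Z y),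
      intervalIntegral.integral_finset_sum
        (fun ab _ => (E_cont _ _).intervalIntegrable _ _), Finset.sum_div]
  rw [hfun]
  have hval : ((NN Θ k : ℕ) : ℂ) = ∑ ab : (Fin k → Fin n) × (Fin k → Fin n),
      if Sf Θ ab.1 = Sf Θ ab.2 then (1:ℂ) else 0 := by
    rw [Finset.sum_boole]; rfl
  rw [hval]
  refine tendsto_finset_sum _ fun ab _ => ?_
  by_cases h : Sf Θ ab.1 = Sf Θ ab.2
  · simp only [h, if_true, sub_self]
    have hmain := mean_E_zero (Sf Z ab.1 - Sf Z ab.2)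
    have hone : Complex.exp (((-(Sf Z ab.1 - Sf Z ab.2) : ℝ) : ℂ) * Complex.I) = 1 := by
      have hl0 : (∑ r, (((fun r => (cnt ab.1 r : ℤ) - (cnt ab.2 r : ℤ)) r : ℤ) : ℝ) * Θ r) = 0 := by
        rw [← sub_eq_zero.mpr h, Sf_eq_cnt Θ ab.1, Sf_eq_cnt Θ ab.2, ← Finset.sum_sub_distrib]
        refine Finset.sum_congr rfl fun r _ => ?_
        push_cast
        ring
      obtain ⟨m, hm⟩ := hrel (fun r => (cnt ab.1 r : ℤ) - (cnt ab.2 r : ℤ)) hl0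
      · have hz : Sf Z ab.1 - Sf Z ab.2 = 2 * π * m := by
          rw [Sf_eq_cnt Z ab.1, Sf_eq_cnt Z ab.2, ← hm]
          rw [← Finset.sum_sub_distrib]
          refine Finset.sum_congr rfl fun r _ => ?_
          push_cast
          ring
        rw [hz]
        have : ((-(2 * π * (m:ℝ)) : ℝ) : ℂ) * Complex.I = ((-m : ℤ) : ℂ) * (2 * (π:ℂ) * Complex.I) := by
          push_cast; ring
        rw [this, Complex.exp_int_mul_two_pi_mul_I]
    rw [← hone]
    exact hmain
  · simp only [h, if_false]
    exact mean_E_ne _ _ (sub_ne_zero.mpr h)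


lemma NN_le_bound (Θ Z : Fin n → ℝ)
    (hrel : ∀ ℓ : Fin n → ℤ, (∑ r, (ℓ r : ℝ) * Θ r) = 0 →
      ∃ m : ℤ, (∑ r, (ℓ r : ℝ) * Z r) = 2 * π * m)
    {B : ℝ} (hB : 0 ≤ B) (hb : ∀ y : ℝ, 0 ≤ y → ‖p Θ Z y‖ ≤ B) :
    ((NN Θ k : ℕ) : ℝ) ≤ B ^ (2 * k) := by
  have hlim := (tendsto_mean_Q (k := k) Θ Z hrel).norm
  have hNN : ‖((NN Θ k : ℕ) : ℂ)‖ = ((NN Θ k : ℕ) : ℝ) := by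
    rw [Complex.norm_natCast]
  rw [hNN] at hlim
  refine le_of_tendsto hlim ?_
  filter_upwards [eventually_ge_atTop (1:ℝ)] with T hT
  have hT0 : (0:ℝ) < T := lt_of_lt_of_le one_pos hT
  rw [norm_div, Complex.norm_real, Real.norm_eq_abs, abs_of_pos hT0]
  rw [div_le_iff₀ hT0]
  have hint : ‖∫ y in (0:ℝ)..T, (p Θ Z y) ^ k * ((starRingEnd ℂ) (p Θ Z y)) ^ k‖
      ≤ B ^ (2 * k) * |T - 0| := by
    apply intervalIntegral.norm_integral_le_of_norm_le_const
    intro x hx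
    have hx0 : 0 ≤ x := by
      rw [Set.uIoc_of_le hT0.le] at hx
      exact hx.1.le
    have : ‖(p Θ Z x) ^ k * ((starRingEnd ℂ) (p Θ Z x)) ^ k‖
        = ‖p Θ Z x‖ ^ (2 * k) := by
      rw [norm_mul, norm_pow, norm_pow, RingHomIsometric.norm_map]
      rw [two_mul, pow_add]
    rw [this]
    exact pow_le_pow_left₀ (norm_nonneg _) (hb x hx0) _
  calc ‖∫ y in (0:ℝ)..T, (p Θ Z y) ^ k * ((starRingEnd ℂ) (p Θ Z y)) ^ k‖
      ≤ B ^ (2 * k) * |T - 0| := hint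
    _ = B ^ (2 * k) * T := by rw [sub_zero, abs_of_pos hT0]

lemma NN_lower (Θ : Fin n → ℝ) : n ^ (2 * k) ≤ NN Θ k * (k + 1) ^ n := by
  classical
  have hcnt_le : ∀ (a : Fin k → Fin n) (r : Fin n), cnt a r < k + 1 := by
    intro a r
    have := Finset.card_filter_le (Finset.univ : Finset (Fin k)) (fun j => a j = r)
    simpa [cnt] using Nat.lt_succ_of_le (by simpa using this)
  set Cc : (Fin k → Fin n) → (Fin n → Fin (k + 1)) :=
    fun a r => ⟨cnt a r, hcnt_le a r⟩ with hCc
  have hSC : ∀ a b : Fin k → Fin n, Cc a = Cc b → Sf Θ a = Sf Θ b := by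
    intro a b hab
    rw [Sf_eq_cnt, Sf_eq_cnt]
    refine Finset.sum_congr rfl fun r _ => ?_
    have : cnt a r = cnt b r := congrArg (fun f => (f r : ℕ)) hab
    rw [this]
  set x : (Fin n → Fin (k + 1)) → ℕ :=
    fun v => (Finset.univ.filter fun a : Fin k → Fin n => Cc a = v).card with hx
  have h1 : ∑ v, x v = n ^ k := by
    rw [← Finset.card_eq_sum_card_fiberwise (f := Cc) (t := Finset.univ)
      (fun a _ => Finset.mem_univ _)]
    simp [Finset.card_univ]
  have h2 : ∑ v, x v ^ 2
      = (Finset.univ.filter fun ab : (Fin k → Fin n) × (Fin k → Fin n) =>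
          Cc ab.1 = Cc ab.2).card := by
    rw [Finset.card_eq_sum_card_fiberwise (f := fun ab => Cc ab.1) (t := Finset.univ)
      (fun a _ => Finset.mem_univ _)]
    refine (Finset.sum_congr rfl fun v _ => ?_).symm
    have hset : ((Finset.univ.filter fun ab : (Fin k → Fin n) × (Fin k → Fin n) =>
          Cc ab.1 = Cc ab.2).filter fun ab => Cc ab.1 = v)
        = (Finset.univ.filter fun a : Fin k → Fin n => Cc a = v) ×ˢ
          (Finset.univ.filter fun b : Fin k → Fin n => Cc b = v) := by
      ext ab
      simp only [Finset.mem_filter, Finset.mem_product, Finset.mem_univ, true_and]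
      constructor
      · rintro ⟨h1, h2⟩
        exact ⟨h2, h2 ▸ h1.symm⟩
      · rintro ⟨h1, h2⟩
        exact ⟨h1.trans h2.symm, h1⟩
    rw [hset, Finset.card_product]
    ring
  have h3 : (Finset.univ.filter fun ab : (Fin k → Fin n) × (Fin k → Fin n) =>
      Cc ab.1 = Cc ab.2).card ≤ NN Θ k := by
    apply Finset.card_le_card
    apply Finset.monotone_filter_right
    intro ab _ hab
    exact hSC _ _ hab
  have h4 : (∑ v, x v) ^ 2 ≤ (∑ v, x v ^ 2) * (k + 1) ^ n := by
    have := Finset.sum_mul_sq_le_sq_mul_sq Finset.univ x (fun _ => 1)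
    simpa [Finset.card_univ] using this
  calc n ^ (2 * k) = (n ^ k) ^ 2 := by rw [← pow_mul, mul_comm]
    _ = (∑ v, x v) ^ 2 := by rw [h1]
    _ ≤ (∑ v, x v ^ 2) * (k + 1) ^ n := h4
    _ ≤ NN Θ k * (k + 1) ^ n := Nat.mul_le_mul_right _ (h2 ▸ h3)


lemma bohr_sup (n : ℕ) (Θ Z : Fin n → ℝ)
    (hrel : ∀ ℓ : Fin n → ℤ, (∑ r, (ℓ r : ℝ) * Θ r) = 0 →
      ∃ m : ℤ, (∑ r, (ℓ r : ℝ) * Z r) = 2 * π * m)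
    {δ : ℝ} (hδ : 0 < δ) :
    ∃ y : ℝ, 0 ≤ y ∧ (n : ℝ) - δ < ‖p Θ Z y‖ := by
  rcases Nat.eq_zero_or_pos n with hn | hn
  · refine ⟨0, le_refl _, ?_⟩
    subst hn
    calc ((0:ℕ):ℝ) - δ < 0 := by simp; linarith
      _ ≤ ‖p Θ Z 0‖ := norm_nonneg _
  by_contra hcon
  push_neg at hcon
  -- hcon : ∀ y, 0 ≤ y → abs (p y) ≤ n - δ
  have hcon' : ∀ y : ℝ, 0 ≤ y → ‖p Θ Z y‖ ≤ (n : ℝ) - δ := by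
    intro y hy
    exact (hcon y hy)
  have hB0 : (0:ℝ) ≤ (n : ℝ) - δ :=
    le_trans (norm_nonneg _) (hcon' 0 le_rfl)
  have key : ∀ k : ℕ, ((n : ℝ)) ^ (2 * k) ≤ ((n : ℝ) - δ) ^ (2 * k) * ((k : ℝ) + 1) ^ n := by
    intro k
    have hub := NN_le_bound (k := k) Θ Z hrel hB0 hcon'
    have hlb := NN_lower (k := k) Θ
    have hlb' : ((n : ℝ)) ^ (2 * k) ≤ ((NN Θ k : ℕ) : ℝ) * ((k : ℝ) + 1) ^ n := by
      have := Nat.cast_le (α := ℝ) |>.mpr hlb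
      push_cast at this
      convert this using 2
    calc ((n : ℝ)) ^ (2 * k) ≤ ((NN Θ k : ℕ) : ℝ) * ((k : ℝ) + 1) ^ n := hlb'
      _ ≤ ((n : ℝ) - δ) ^ (2 * k) * ((k : ℝ) + 1) ^ n := by
          apply mul_le_mul_of_nonneg_right hub
          positivity
  -- derive contradiction
  have hnpos : (0:ℝ) < n := by exact_mod_cast hn
  have hBlt : (n : ℝ) - δ < n := by linarith
  have hBpos : (0:ℝ) < (n : ℝ) - δ := by
    rcases lt_or_eq_of_le hB0 with h | h
    · exact h
    · exfalso
      have := key 1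
      rw [← h] at this
      simp at this
      nlinarith [key 1, pow_pos hnpos (2*1)]
  set c : ℝ := (n : ℝ) / ((n : ℝ) - δ) with hc
  have hc1 : 1 < c := (one_lt_div hBpos).mpr hBlt
  have hc2 : 1 < c ^ 2 := one_lt_pow₀ hc1 two_ne_zero
  have hck : ∀ k : ℕ, (c ^ 2) ^ k ≤ ((k : ℝ) + 1) ^ n := by
    intro k
    have hk := key k
    have hpow : (c ^ 2) ^ k = (n : ℝ) ^ (2 * k) / ((n : ℝ) - δ) ^ (2 * k) := by
      rw [← pow_mul, hc, div_pow]
    rw [hpow, div_le_iff₀ (by positivity)]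
    linarith [hk, mul_comm (((n : ℝ) - δ) ^ (2 * k)) (((k : ℝ) + 1) ^ n)]
  -- but (k+1)^n / (c^2)^(k+1) → 0
  have hlim := tendsto_pow_const_div_const_pow_of_one_lt n hc2
  have hlim' : Tendsto (fun k : ℕ => ((k : ℝ) + 1) ^ n / (c ^ 2) ^ (k + 1)) atTop (nhds 0) := by
    have := hlim.comp (tendsto_add_atTop_nat 1)
    refine this.congr fun k => ?_
    simp only [Function.comp]
    push_cast
    ring_nf
  have hev := hlim'.eventually (eventually_lt_nhds (show (0:ℝ) < 1 / c ^ 2 by positivity))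
  obtain ⟨K, hK⟩ := hev.exists
  have h1 : ((K : ℝ) + 1) ^ n < (c ^ 2) ^ K := by
    have hpos : (0:ℝ) < (c ^ 2) ^ (K + 1) := by positivity
    rw [div_lt_iff₀ hpos] at hK
    have : (1 / c ^ 2) * (c ^ 2) ^ (K + 1) = (c ^ 2) ^ K := by
      rw [pow_succ]
      field_simp
      ring
    rw [this] at hK
    exact hK
  exact absurd (hck K) (not_le.mpr h1)

end KroneckerAux
end


end KroneckerProofAux

open KroneckerAux Filter Finset in
/-- **Kronecker's theorem.** For reals `θ_0,…,θ_d` and `ζ_0,…,ζ_d`: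
every system `|θ_r y − ζ_r| < ε (mod 2π)` has a solution `y ≥ 0` for every `ε > 0`
iff every integer relation `∑ ℓ_r θ_r = 0` implies `∑ ℓ_r ζ_r ∈ 2πℤ`. -/
theorem kronecker_theorem (d : ℕ) (θ ζ : Fin (d + 1) → ℝ) :
    (∀ ε : ℝ, 0 < ε → ∃ y : ℝ, 0 ≤ y ∧
      ∀ r : Fin (d + 1), ∃ k : ℤ, |θ r * y - ζ r - 2 * π * k| < ε) ↔
    (∀ ℓ : Fin (d + 1) → ℤ,
      (∑ r, (ℓ r : ℝ) * θ r) = 0 → ∃ m : ℤ, (∑ r, (ℓ r : ℝ) * ζ r) = 2 * π * m) := by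
  constructor
  · -- easy direction
    intro happ ℓ hθ0
    set x : ℝ := ∑ r, (ℓ r : ℝ) * ζ r with hxdef
    have claim : ∀ ε : ℝ, 0 < ε → ∃ m : ℤ, |x - 2 * π * m| < ε := by
      intro ε hε
      set L : ℝ := ∑ r, |(ℓ r : ℝ)| with hL
      have hL0 : 0 ≤ L := Finset.sum_nonneg fun r _ => abs_nonneg _
      have hL1 : (0:ℝ) < L + 1 := by linarith
      obtain ⟨y, hy, hk⟩ := happ (ε / (L + 1)) (by positivity)
      choose k hkk using hk
      refine ⟨-(∑ r, ℓ r * k r), ?_⟩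
      have hsum : ∑ r, (ℓ r : ℝ) * (θ r * y - ζ r - 2 * π * k r)
          = -x - 2 * π * ((∑ r, ℓ r * k r : ℤ) : ℝ) := by
        have hterm : ∀ r : Fin (d+1), (ℓ r : ℝ) * (θ r * y - ζ r - 2 * π * k r)
            = ((ℓ r : ℝ) * θ r) * y - (ℓ r : ℝ) * ζ r - 2 * π * (((ℓ r * k r : ℤ)) : ℝ) := by
          intro r; push_cast; ring
        rw [Finset.sum_congr rfl fun r _ => hterm r, Finset.sum_sub_distrib,
          Finset.sum_sub_distrib, ← Finset.sum_mul, hθ0, ← Finset.mul_sum]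
        push_cast
        ring
      have hbnd : |∑ r, (ℓ r : ℝ) * (θ r * y - ζ r - 2 * π * k r)| < ε := by
        calc |∑ r, (ℓ r : ℝ) * (θ r * y - ζ r - 2 * π * k r)|
            ≤ ∑ r, |(ℓ r : ℝ) * (θ r * y - ζ r - 2 * π * k r)| :=
              Finset.abs_sum_le_sum_abs _ _
          _ ≤ ∑ r, |(ℓ r : ℝ)| * (ε / (L + 1)) := by
              refine Finset.sum_le_sum fun r _ => ?_
              rw [abs_mul]
              exact mul_le_mul_of_nonneg_left (hkk r).le (abs_nonneg _)
          _ = L * (ε / (L + 1)) := by rw [← Finset.sum_mul]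
          _ < (L + 1) * (ε / (L + 1)) := by
              apply mul_lt_mul_of_pos_right (by linarith) (by positivity)
          _ = ε := by field_simp
      rw [hsum] at hbnd
      have : x - 2 * π * ((-(∑ r, ℓ r * k r) : ℤ) : ℝ)
          = -(-x - 2 * π * ((∑ r, ℓ r * k r : ℤ) : ℝ)) := by push_cast; ring
      rw [this, abs_neg]
      exact hbnd
    set m0 : ℤ := round (x / (2 * π)) with hm0
    refine ⟨m0, ?_⟩
    by_contra hne
    have hd : 0 < |x - 2 * π * m0| := abs_pos.mpr (sub_ne_zero.mpr hne)
    obtain ⟨m, hm⟩ := claim _ hd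
    have hr := round_le (x / (2 * π)) m
    have habs : ∀ z : ℤ, |x - 2 * π * z| = (2 * π) * |x / (2 * π) - z| := by
      intro z
      have h0 : x - 2 * π * z = (2 * π) * (x / (2 * π) - z) := by
        field_simp
      rw [h0, abs_mul, abs_of_pos Real.two_pi_pos]
    have h2 := mul_le_mul_of_nonneg_left hr Real.two_pi_pos.le
    rw [← hm0] at h2
    rw [habs m] at hm
    linarith [habs m0, hm, h2, hd]
  · -- hard direction (Bohr's proof)
    intro hrel ε hε
    set Θ : Fin (d + 2) → ℝ := Fin.snoc θ 0 with hΘ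
    set Z : Fin (d + 2) → ℝ := Fin.snoc ζ 0 with hZ
    have hrel' : ∀ ℓ : Fin (d + 2) → ℤ, (∑ r, (ℓ r : ℝ) * Θ r) = 0 →
        ∃ m : ℤ, (∑ r, (ℓ r : ℝ) * Z r) = 2 * π * m := by
      intro ℓ h
      rw [Fin.sum_univ_castSucc] at h
      simp only [hΘ, Fin.snoc_castSucc, Fin.snoc_last, mul_zero, add_zero] at h
      obtain ⟨m, hm⟩ := hrel (fun i => ℓ i.castSucc) h
      refine ⟨m, ?_⟩
      rw [Fin.sum_univ_castSucc]
      simp only [hZ, Fin.snoc_castSucc, Fin.snoc_last, mul_zero, add_zero]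
      exact hm
    set δ : ℝ := min 1 (ε ^ 2 / π ^ 2) with hδdef
    have hδpos : 0 < δ := lt_min one_pos (by positivity)
    obtain ⟨y, hy, hgt⟩ := bohr_sup (d + 2) Θ Z hrel' hδpos
    refine ⟨y, hy, fun r => ?_⟩
    set x : ℝ := θ r * y - ζ r with hxd
    -- single-term estimate
    have hsingle : 2 - δ < ‖Complex.exp ((x : ℂ) * Complex.I) + 1‖ := by
      set e : Fin (d + 2) → ℂ := fun i => Complex.exp (((Θ i * y - Z i : ℝ) : ℂ) * Complex.I)
        with he
      set s : Finset (Fin (d + 2)) := {Fin.castSucc r, Fin.last (d + 1)} with hs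
      have hmem : (Fin.castSucc r : Fin (d+2)) ≠ Fin.last (d + 1) :=
        (Fin.castSucc_lt_last r).ne
      have hsum_s : ∑ i ∈ s, e i = Complex.exp ((x : ℂ) * Complex.I) + 1 := by
        rw [hs, Finset.sum_pair hmem]
        congr 1
        · simp only [he, hΘ, hZ, Fin.snoc_castSucc]; rfl
        · simp only [he, hΘ, hZ, Fin.snoc_last]
          norm_num
      have hsplit : p Θ Z y = (∑ i ∈ Finset.univ \ s, e i) + ∑ i ∈ s, e i := by
        rw [p, Finset.sum_sdiff (Finset.subset_univ s)]
      have hcard : (Finset.univ \ s).card = d := by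
        rw [Finset.card_sdiff_of_subset (Finset.subset_univ s), hs, Finset.card_pair hmem]
        simp
      have hbound : ‖p Θ Z y‖
          ≤ (d : ℝ) + ‖Complex.exp ((x : ℂ) * Complex.I) + 1‖ := by
        rw [hsplit, hsum_s]
        calc ‖(∑ i ∈ Finset.univ \ s, e i) + (Complex.exp ((x : ℂ) * Complex.I) + 1)‖
            ≤ ‖∑ i ∈ Finset.univ \ s, e i‖
              + ‖Complex.exp ((x : ℂ) * Complex.I) + 1‖ := norm_add_le _ _
          _ ≤ (d : ℝ) + ‖Complex.exp ((x : ℂ) * Complex.I) + 1‖ := by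
              have : ‖∑ i ∈ Finset.univ \ s, e i‖ ≤ (d : ℝ) := by
                calc ‖∑ i ∈ Finset.univ \ s, e i‖
                    ≤ ∑ i ∈ Finset.univ \ s, ‖e i‖ := by
                      exact norm_sum_le _ _
                  _ = ∑ i ∈ Finset.univ \ s, 1 := by
                      refine Finset.sum_congr rfl fun i _ => ?_
                      exact Complex.norm_exp_ofReal_mul_I _
                  _ = (d : ℝ) := by rw [Finset.sum_const, hcard]; simp
              linarith
      have hcast : ((d + 2 : ℕ) : ℝ) = (d : ℝ) + 2 := by push_cast; ring
      rw [hcast] at hgt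
      linarith
    -- convert to cosine bound
    have hcos : 1 - Real.cos x < 2 * δ := by
      have hsq : ‖Complex.exp ((x : ℂ) * Complex.I) + 1‖ ^ 2
          = 2 + 2 * Real.cos x := by
        rw [Complex.sq_norm, Complex.normSq_apply]
        simp only [Complex.add_re, Complex.add_im, Complex.exp_ofReal_mul_I_re,
          Complex.exp_ofReal_mul_I_im, Complex.one_re, Complex.one_im]
        nlinarith [Real.sin_sq_add_cos_sq x]
      have hδ1 : δ ≤ 1 := min_le_left _ _
      have h2δ : (0:ℝ) ≤ 2 - δ := by linarith
      have := pow_lt_pow_left₀ hsingle h2δ two_ne_zero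
      rw [hsq] at this
      nlinarith
    -- pick the integer
    set kk : ℤ := round (x / (2 * π)) with hkk
    refine ⟨kk, ?_⟩
    set φ : ℝ := x - 2 * π * kk with hφd
    have hφπ : |φ| ≤ π := by
      have hr := abs_sub_round (x / (2 * π))
      have : φ = (2 * π) * (x / (2 * π) - kk) := by
        field_simp
        exact hφd
      rw [this, abs_mul, abs_of_pos Real.two_pi_pos]
      calc 2 * π * |x / (2 * π) - kk| ≤ 2 * π * (1 / 2) :=
            mul_le_mul_of_nonneg_left hr Real.two_pi_pos.le
        _ = π := by ring
    have hcosφ : Real.cos φ = Real.cos x := by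
      rw [hφd]
      have : x - 2 * π * kk = x - kk * (2 * π) := by ring
      rw [this, Real.cos_sub_int_mul_two_pi]
    have hsin2 : Real.sin (φ / 2) ^ 2 < δ := by
      have hdouble : Real.cos φ = 1 - 2 * Real.sin (φ / 2) ^ 2 := by
        have h1 : Real.cos (2 * (φ / 2)) = 1 - 2 * Real.sin (φ / 2) ^ 2 := by
          rw [Real.cos_two_mul]
          nlinarith [Real.sin_sq_add_cos_sq (φ / 2)]
        rw [← h1]
        congr 1
        ring
      rw [hcosφ] at hdouble
      nlinarith
    have hsinlb : |φ| / π ≤ Real.sin (|φ| / 2) := by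
      have h1 : (0:ℝ) ≤ |φ| / 2 := by positivity
      have h2 : |φ| / 2 ≤ π / 2 := by linarith
      have := Real.mul_le_sin h1 h2
      calc |φ| / π = 2 / π * (|φ| / 2) := by
            field_simp
          _ ≤ Real.sin (|φ| / 2) := this
    have hsabs : Real.sin (|φ| / 2) ^ 2 = Real.sin (φ / 2) ^ 2 := by
      rcases abs_cases φ with ⟨h1, _⟩ | ⟨h1, _⟩
      · rw [h1]
      · rw [h1]
        have : -φ / 2 = -(φ / 2) := by ring
        rw [this, Real.sin_neg]
        ring
    have hφsq : φ ^ 2 < ε ^ 2 := by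
      have hπpos := Real.pi_pos
      have h1 : (|φ| / π) ^ 2 < δ := by
        calc (|φ| / π) ^ 2 ≤ Real.sin (|φ| / 2) ^ 2 := by
              apply pow_le_pow_left₀ (by positivity) hsinlb
          _ = Real.sin (φ / 2) ^ 2 := hsabs
          _ < δ := hsin2
      have h2 : φ ^ 2 < δ * π ^ 2 := by
        have : (|φ| / π) ^ 2 = φ ^ 2 / π ^ 2 := by
          rw [div_pow, _root_.sq_abs]
        rw [this, div_lt_iff₀ (by positivity)] at h1
        linarith
      have h3 : δ * π ^ 2 ≤ ε ^ 2 := by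
        have : δ ≤ ε ^ 2 / π ^ 2 := min_le_right _ _
        calc δ * π ^ 2 ≤ (ε ^ 2 / π ^ 2) * π ^ 2 :=
              mul_le_mul_of_nonneg_right this (by positivity)
          _ = ε ^ 2 := by field_simp
      linarith
    have : |φ| < ε := by
      nlinarith [abs_nonneg φ, _root_.sq_abs φ]
    exact this
end

section
/- Let A be a real symmetric n×n matrix with spectral decomposition A = Σ_{r=0}^d θ_r E_r (θ_r the distinct eigenvalues, E_r the orthogonal spectral projections). Then for all indices a, b the Cesàro time-average lim_{T→∞} (1/T) ∫_0^T |(exp(itA))_{ab}|² dt exists and equals Σ_{r=0}^d ((E_r)_{ab})². In matrix form: lim_{T→∞} (1/T) ∫_0^T exp(itA) ∘ exp(−itA) dt = Σ_{r=0}^d E_r ∘ E_r, where ∘ denotes the entrywise (Hadamard) product. -/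
open Matrix Filter

lemma cesaro_cos_ne_zero {c : ℝ} (hc : c ≠ 0) :
    Tendsto (fun T : ℝ => (1 / T) * ∫ t in (0:ℝ)..T, Real.cos (c * t)) atTop (nhds 0) := by
  have h1 : ∀ T : ℝ, (∫ t in (0:ℝ)..T, Real.cos (c * t)) = Real.sin (c * T) / c := by
    intro T
    rw [intervalIntegral.integral_comp_mul_left Real.cos hc]
    simp [integral_cos, div_eq_inv_mul]
  simp only [h1]
  apply squeeze_zero_norm' (a := fun T : ℝ => (1 / |c|) * (1 / T))
  · filter_upwards [eventually_gt_atTop (0:ℝ)] with T hT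
    rw [norm_mul, Real.norm_eq_abs, Real.norm_eq_abs, abs_div, abs_div, abs_one,
      abs_of_pos hT, mul_comm]
    gcongr
    exact Real.abs_sin_le_one _
  · have h4 : Tendsto (fun T : ℝ => (1 / |c|) * (1 / T)) atTop (nhds ((1/|c|) * 0)) := by
      simpa [one_div] using tendsto_inv_atTop_zero.const_mul (1/|c|)
    simpa using h4

lemma exp_entry_formula {n d : ℕ}
    (θ : Fin (d + 1) → ℝ)
    (E : Fin (d + 1) → Matrix (Fin n) (Fin n) ℝ)
    (hidem : ∀ r, E r * E r = E r)
    (horth : ∀ r s, r ≠ s → E r * E s = 0)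
    (hsum : ∑ r, E r = 1)
    (A : Matrix (Fin n) (Fin n) ℝ)
    (hspec : A = ∑ r, θ r • E r) (t : ℝ) (a b : Fin n) :
    (NormedSpace.exp ((Complex.I * (t : ℂ)) • A.map Complex.ofReal)) a b
      = ∑ r, Complex.exp (Complex.I * t * θ r) * (E r a b : ℂ) := by
  classical
  set ψ : Matrix (Fin n) (Fin n) ℝ →+* Matrix (Fin n) (Fin n) ℂ :=
    Complex.ofRealHom.mapMatrix with hψ
  have hFmul : ∀ r s, ψ (E r) * ψ (E s) = if r = s then ψ (E r) else 0 := by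
    intro r s
    by_cases h : r = s
    · subst h; rw [← _root_.map_mul, hidem, if_pos rfl]
    · rw [← _root_.map_mul, horth r s h, if_neg h, _root_.map_zero]
  have hFsum : ∑ r, ψ (E r) = 1 := by rw [← map_sum, hsum, _root_.map_one]
  let φ : (Fin (d + 1) → ℂ) →+* Matrix (Fin n) (Fin n) ℂ :=
  { toFun := fun c => ∑ r, c r • ψ (E r)
    map_one' := by simp only [Pi.one_apply, one_smul, hFsum]
    map_mul' := by
      intro c c'
      rw [Finset.sum_mul_sum]
      simp only [smul_mul_assoc, mul_smul_comm, hFmul, smul_ite, smul_zero, smul_smul,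
        Finset.sum_ite_eq, Finset.mem_univ, if_true, Pi.mul_apply]
      exact Finset.sum_congr rfl fun x _ => by rw [mul_comm]
    map_zero' := by simp
    map_add' := by intro c c'; simp [add_smul, Finset.sum_add_distrib] }
  have hφc : Continuous φ := by
    show Continuous fun c : Fin (d + 1) → ℂ => ∑ r, c r • ψ (E r)
    exact continuous_finset_sum _ fun r _ => (continuous_apply r).smul continuous_const
  have hmap : A.map Complex.ofReal = ∑ r, (θ r : ℂ) • ψ (E r) := by
    rw [hspec]
    ext i j
    simp [Matrix.sum_apply, hψ, Matrix.map_apply]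
  have key : (Complex.I * (t : ℂ)) • A.map Complex.ofReal
      = φ (fun r => Complex.I * t * θ r) := by
    rw [hmap, Finset.smul_sum]
    show _ = ∑ r, (Complex.I * t * θ r) • ψ (E r)
    refine Finset.sum_congr rfl fun r _ => ?_
    rw [smul_smul, mul_assoc]
  rw [key]
  letI : SeminormedRing (Matrix (Fin n) (Fin n) ℂ) := Matrix.linftyOpSemiNormedRing
  letI : NormedRing (Matrix (Fin n) (Fin n) ℂ) := Matrix.linftyOpNormedRing
  letI : NormedAlgebra ℂ (Matrix (Fin n) (Fin n) ℂ) := Matrix.linftyOpNormedAlgebra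
  erw [← NormedSpace.map_exp φ hφc, Pi.exp_def]
  show (∑ r, NormedSpace.exp (Complex.I * t * θ r) • ψ (E r)) a b = _
  rw [Matrix.sum_apply]
  refine Finset.sum_congr rfl fun r _ => ?_
  rw [← Complex.exp_eq_exp_ℂ]
  simp [hψ, Matrix.map_apply, smul_eq_mul]


/-- For a real symmetric matrix `A = ∑ r, θ r • E r` (spectral
decomposition), the Cesàro time-average of `|(exp(itA))_{ab}|²` exists and equals
`∑ r, ((E r)_{ab})²`; entrywise this is the matrix identity
`lim (1/T)∫₀ᵀ exp(itA) ∘ exp(−itA) dt = ∑ r, E r ∘ E r`. -/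
theorem average_mixing_matrix_eq_sum_hadamard_squares
    {n d : ℕ} (A : Matrix (Fin n) (Fin n) ℝ) (hAsym : Aᵀ = A)
    (θ : Fin (d + 1) → ℝ) (hθ : Function.Injective θ)
    (E : Fin (d + 1) → Matrix (Fin n) (Fin n) ℝ)
    (hspec : A = ∑ r, θ r • E r)
    (hsym : ∀ r, (E r)ᵀ = E r)
    (hidem : ∀ r, E r * E r = E r)
    (horth : ∀ r s, r ≠ s → E r * E s = 0)
    (hsum : ∑ r, E r = 1)
    (hE0 : ∀ r, E r ≠ 0) :
    ∀ a b : Fin n,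
      Tendsto (fun T : ℝ => (1 / T) *
          ∫ t in (0:ℝ)..T, ‖
            ((NormedSpace.exp ((Complex.I * (t : ℂ)) • A.map Complex.ofReal)) a b)‖ ^ 2)
        atTop (nhds (∑ r, (E r a b) ^ 2)) := by
  classical
  intro a b
  set e : Fin (d + 1) → ℝ := fun r => E r a b with he
  -- step 1: rewrite the integrand
  have hent : ∀ t : ℝ,
      ‖(NormedSpace.exp ((Complex.I * (t : ℂ)) • A.map Complex.ofReal)) a b‖ ^ 2
        = ∑ r, ∑ s, e r * e s * Real.cos ((θ r - θ s) * t) := by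
    intro t
    rw [exp_entry_formula θ E hidem horth hsum A hspec t a b]
    have hz : ∀ r : Fin (d + 1), Complex.I * (t : ℂ) * (θ r : ℂ)
        = ((θ r * t : ℝ) : ℂ) * Complex.I := by
      intro r; push_cast; ring
    simp only [hz]
    rw [Complex.sq_norm, Complex.normSq_apply, Complex.re_sum, Complex.im_sum]
    simp only [Complex.mul_re, Complex.mul_im, Complex.ofReal_re, Complex.ofReal_im,
      Complex.exp_ofReal_mul_I_re, Complex.exp_ofReal_mul_I_im, mul_zero, zero_mul,
      sub_zero, add_zero]
    rw [Finset.sum_mul_sum, Finset.sum_mul_sum, ← Finset.sum_add_distrib]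
    refine Finset.sum_congr rfl fun r _ => ?_
    rw [← Finset.sum_add_distrib]
    refine Finset.sum_congr rfl fun s _ => ?_
    rw [sub_mul, Real.cos_sub]
    ring
  -- step 2: rewrite the Cesàro average as a double sum
  have heq : ∀ T : ℝ, (1 / T) *
      ∫ t in (0:ℝ)..T, ‖
          ((NormedSpace.exp ((Complex.I * (t : ℂ)) • A.map Complex.ofReal)) a b)‖ ^ 2
      = ∑ r, ∑ s, e r * e s * ((1 / T) * ∫ t in (0:ℝ)..T, Real.cos ((θ r - θ s) * t)) := by
    intro T
    have hint : ∀ (r s : Fin (d + 1)),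
        IntervalIntegrable (fun t => e r * e s * Real.cos ((θ r - θ s) * t))
          MeasureTheory.volume 0 T := by
      intro r s
      exact ((continuous_const.mul (Real.continuous_cos.comp
        (continuous_const.mul continuous_id))).intervalIntegrable 0 T)
    rw [intervalIntegral.integral_congr (g := fun t => ∑ r, ∑ s,
        e r * e s * Real.cos ((θ r - θ s) * t)) (fun t _ => hent t)]
    have h1 : ∀ r ∈ Finset.univ, IntervalIntegrable
        (fun t => ∑ s, e r * e s * Real.cos ((θ r - θ s) * t)) MeasureTheory.volume 0 T :=
      fun r _ => (continuous_finset_sum _ fun s _ => continuous_const.mul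
        (Real.continuous_cos.comp (continuous_const.mul continuous_id))).intervalIntegrable 0 T
    rw [intervalIntegral.integral_finset_sum h1]
    rw [Finset.mul_sum]
    refine Finset.sum_congr rfl fun r _ => ?_
    rw [intervalIntegral.integral_finset_sum (fun s _ => hint r s), Finset.mul_sum]
    refine Finset.sum_congr rfl fun s _ => ?_
    rw [intervalIntegral.integral_const_mul]
    ring
  -- step 3: compute the limit of the double sum
  have hgoal : (∑ r, e r ^ 2) = ∑ r, ∑ s, (if r = s then e r ^ 2 else (0:ℝ)) := by
    refine Finset.sum_congr rfl fun r _ => ?_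
    rw [Finset.sum_ite_eq, if_pos (Finset.mem_univ r)]
  have hlim : Tendsto (fun T : ℝ => ∑ r, ∑ s,
      e r * e s * ((1 / T) * ∫ t in (0:ℝ)..T, Real.cos ((θ r - θ s) * t)))
      atTop (nhds (∑ r, e r ^ 2)) := by
    rw [hgoal]
    refine tendsto_finset_sum _ fun r _ => tendsto_finset_sum _ fun s _ => ?_
    by_cases h : r = s
    · subst h
      rw [if_pos rfl]
      have hev : ∀ᶠ T in (atTop : Filter ℝ),
          e r * e r * ((1 / T) * ∫ t in (0:ℝ)..T, Real.cos ((θ r - θ r) * t)) = e r ^ 2 := by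
        filter_upwards [eventually_ne_atTop (0:ℝ)] with T hT
        simp only [sub_self, zero_mul, Real.cos_zero]
        rw [intervalIntegral.integral_const]
        field_simp
        ring
      exact Tendsto.congr' (by filter_upwards [hev] with T h using h.symm) tendsto_const_nhds
    · rw [if_neg h]
      have hc : θ r - θ s ≠ 0 := sub_ne_zero.mpr fun hh => h (hθ hh)
      have := (cesaro_cos_ne_zero hc).const_mul (e r * e s)
      simpa using this
  exact Tendsto.congr (fun T => (heq T).symm) hlim
end

section
/- Let A be the adjacency matrix of a finite simple graph G (a symmetric integer matrix), let a, b be vertices, and let ℓ ≥ 1 be an integer. Then the time average lim_{T→∞} (1/T) ∫_0^T |(exp(itA))_{ab}|^{2ℓ} dt exists and is a rational number. -/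
open Matrix Filter Polynomial Finset

open Filter intervalIntegral

lemma avg_osc (c : ℂ) (μ : ℝ) :
    Tendsto (fun T : ℝ => (1 / T) *
        ∫ t in (0:ℝ)..T, (c * Complex.exp (Complex.I * t * μ)).re)
      atTop (nhds (if μ = 0 then c.re else 0)) := by
  have hre : ∀ t : ℝ, (c * Complex.exp (Complex.I * t * μ)).re
      = c.re * Real.cos (t * μ) - c.im * Real.sin (t * μ) := by
    intro t
    rw [show (Complex.I * t * μ : ℂ) = ((t * μ : ℝ) : ℂ) * Complex.I by push_cast; ring,
      Complex.exp_mul_I, ← Complex.ofReal_cos, ← Complex.ofReal_sin]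
    simp only [Complex.add_re, Complex.add_im, Complex.mul_re, Complex.mul_im,
      Complex.ofReal_re, Complex.ofReal_im, Complex.I_re, Complex.I_im]
    ring
  have hint : ∀ T : ℝ, (∫ t in (0:ℝ)..T, (c * Complex.exp (Complex.I * t * μ)).re)
      = c.re * (∫ t in (0:ℝ)..T, Real.cos (t * μ)) - c.im * (∫ t in (0:ℝ)..T, Real.sin (t * μ)) := by
    intro T
    rw [← intervalIntegral.integral_const_mul, ← intervalIntegral.integral_const_mul,
      ← intervalIntegral.integral_sub]
    · exact intervalIntegral.integral_congr (fun t _ => hre t)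
    · exact (Continuous.intervalIntegrable (by continuity) _ _)
    · exact (Continuous.intervalIntegrable (by continuity) _ _)
  simp only [hint]
  rcases eq_or_ne μ 0 with hμ | hμ
  · subst hμ
    rw [if_pos rfl]
    refine Tendsto.congr' ?_ tendsto_const_nhds
    filter_upwards [eventually_ne_atTop (0:ℝ)] with T hT
    simp only [mul_zero, Real.cos_zero, Real.sin_zero, intervalIntegral.integral_const,
      intervalIntegral.integral_zero, smul_eq_mul, sub_zero, mul_one]
    field_simp
  · have hcos : ∀ T : ℝ, (∫ t in (0:ℝ)..T, Real.cos (t * μ)) = μ⁻¹ * Real.sin (T * μ) := by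
      intro T
      rw [intervalIntegral.integral_comp_mul_right Real.cos hμ]
      simp [integral_cos]
    have hsin : ∀ T : ℝ, (∫ t in (0:ℝ)..T, Real.sin (t * μ)) = μ⁻¹ * (1 - Real.cos (T * μ)) := by
      intro T
      rw [intervalIntegral.integral_comp_mul_right Real.sin hμ]
      simp [integral_sin, smul_eq_mul, Real.cos_zero]
    simp only [hcos, hsin, if_neg hμ]
    have hb : ∀ᶠ T in atTop, ‖(1/T) * (c.re * (μ⁻¹ * Real.sin (T * μ)) - c.im * (μ⁻¹ * (1 - Real.cos (T * μ))))‖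
        ≤ (|c.re| * |μ⁻¹| + |c.im| * (|μ⁻¹| * 2)) / T := by
      filter_upwards [eventually_gt_atTop (0:ℝ)] with T hT
      rw [norm_mul, Real.norm_eq_abs, Real.norm_eq_abs,
        abs_of_pos (by positivity : (0:ℝ) < 1/T), one_div, div_eq_mul_inv, mul_comm _ T⁻¹]
      gcongr
      calc |c.re * (μ⁻¹ * Real.sin (T * μ)) - c.im * (μ⁻¹ * (1 - Real.cos (T * μ)))|
          ≤ |c.re * (μ⁻¹ * Real.sin (T * μ))| + |c.im * (μ⁻¹ * (1 - Real.cos (T * μ)))| :=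
            abs_sub _ _
        _ ≤ |c.re| * (|μ⁻¹| * 1) + |c.im| * (|μ⁻¹| * 2) := by
            rw [abs_mul, abs_mul, abs_mul, abs_mul]
            gcongr
            · exact Real.abs_sin_le_one _
            · have h1 := Real.neg_one_le_cos (T*μ)
              have h2 := Real.cos_le_one (T*μ)
              rw [abs_le]; constructor <;> linarith
        _ = |c.re| * |μ⁻¹| + |c.im| * (|μ⁻¹| * 2) := by ring
    refine squeeze_zero_norm' hb ?_
    exact Tendsto.div_atTop tendsto_const_nhds tendsto_id

open Matrix Polynomial

variable {κ : Type*} [Fintype κ] [DecidableEq κ]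

lemma sandwich_apply (W : Matrix κ κ ℂ) (w : κ → ℂ) (x y : κ) :
    (W * diagonal w * star W) x y
      = ∑ r, W x r * w r * (starRingEnd ℂ) (W y r) := by
  rw [Matrix.star_eq_conjTranspose, Matrix.mul_apply]
  refine Finset.sum_congr rfl fun r _ => ?_
  rw [Matrix.mul_diagonal, Matrix.conjTranspose_apply]
  rfl

lemma sandwich_pow (W : Matrix κ κ ℂ) (hW : W * star W = 1) (w : κ → ℂ) (k : ℕ) :
    (W * diagonal w * star W) ^ k = W * diagonal (fun r => w r ^ k) * star W := by
  have hW' : star W * W = 1 := mul_eq_one_comm.mp hW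
  induction k with
  | zero =>
      have h1 : (fun r => w r ^ 0) = fun _ => (1:ℂ) := funext fun r => pow_zero _
      rw [pow_zero, h1, Matrix.diagonal_one, mul_one, hW]
  | succ k ih =>
      rw [pow_succ, ih]
      calc W * diagonal (fun r => w r ^ k) * star W * (W * diagonal w * star W)
          = W * diagonal (fun r => w r ^ k) * (star W * W) * diagonal w * star W := by
            noncomm_ring
        _ = W * (diagonal (fun r => w r ^ k) * diagonal w) * star W := by
            rw [hW']; noncomm_ring
        _ = W * diagonal (fun r => w r ^ (k+1)) * star W := by
            have h2 : (fun i => w i ^ k * w i) = fun r => w r ^ (k+1) :=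
              funext fun r => (pow_succ _ _).symm
            rw [Matrix.diagonal_mul_diagonal, h2]

lemma sandwich_aeval (W : Matrix κ κ ℂ) (hW : W * star W = 1) (w : κ → ℂ) (g : ℚ[X]) :
    aeval (W * diagonal w * star W) g
      = W * diagonal (fun r => aeval (w r) g) * star W := by
  induction g using Polynomial.induction_on' with
  | add p q hp hq =>
      rw [map_add, hp, hq]
      have h3 : ∀ r, aeval (w r) (p + q) = aeval (w r) p + aeval (w r) q := by
        intro r; rw [map_add]
      simp only [h3]
      have h4 : Matrix.diagonal (fun r => aeval (w r) p + aeval (w r) q)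
          = diagonal (fun r => aeval (w r) p) + diagonal (fun r => aeval (w r) q) :=
        (Matrix.diagonal_add _ _).symm
      rw [h4]
      noncomm_ring
  | monomial k c =>
      rw [aeval_monomial]
      have h5 : ∀ r, aeval (w r) (monomial k c) = algebraMap ℚ ℂ c * w r ^ k := by
        intro r; rw [aeval_monomial]
      simp only [h5]
      rw [sandwich_pow W hW w k]
      have hd : diagonal (fun r => algebraMap ℚ ℂ c * w r ^ k)
          = algebraMap ℚ ℂ c • diagonal (fun r => w r ^ k) := by
        rw [← Matrix.diagonal_smul]
        congr 1
      rw [hd, Matrix.mul_smul, Matrix.smul_mul, Algebra.smul_def]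
      noncomm_ring

open Matrix Finset

lemma sum_fun_prod {L N : ℕ} (f : Fin L → Fin N → ℂ) :
    ∑ k : Fin L → Fin N, ∏ i, f i (k i) = ∏ i, ∑ r, f i r :=
  (Fintype.prod_sum f).symm

lemma sum_fun_prod_weight {L N : ℕ} (f : Fin L → Fin N → ℂ) (w : Fin N → ℂ) (i0 : Fin L) :
    ∑ k : Fin L → Fin N, w (k i0) * ∏ i, f i (k i)
      = (∑ r, w r * f i0 r) * ∏ i ∈ Finset.univ.erase i0, (∑ r, f i r) := by
  set f' : Fin L → Fin N → ℂ := fun i r => if i = i0 then w r * f i r else f i r with hf'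
  have step1 : ∀ k : Fin L → Fin N, w (k i0) * ∏ i, f i (k i) = ∏ i, f' i (k i) := by
    intro k
    rw [← Finset.mul_prod_erase Finset.univ (fun i => f' i (k i)) (Finset.mem_univ i0),
      ← Finset.mul_prod_erase Finset.univ (fun i => f i (k i)) (Finset.mem_univ i0)]
    have h1 : f' i0 (k i0) = w (k i0) * f i0 (k i0) := by rw [hf']; simp
    have h2 : ∏ i ∈ Finset.univ.erase i0, f' i (k i) = ∏ i ∈ Finset.univ.erase i0, f i (k i) := by
      refine Finset.prod_congr rfl fun i hi => ?_
      rw [hf']; simp [Finset.ne_of_mem_erase hi]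
    rw [h1, h2, mul_assoc]
  simp only [step1]
  rw [sum_fun_prod f', ← Finset.mul_prod_erase Finset.univ _ (Finset.mem_univ i0)]
  have h3 : (∑ r, f' i0 r) = ∑ r, w r * f i0 r := by
    refine Finset.sum_congr rfl fun r _ => ?_
    rw [hf']; simp
  have h4 : ∏ i ∈ Finset.univ.erase i0, (∑ r, f' i r) = ∏ i ∈ Finset.univ.erase i0, (∑ r, f i r) := by
    refine Finset.prod_congr rfl fun i hi => ?_
    refine Finset.sum_congr rfl fun r _ => ?_
    rw [hf']; simp [Finset.ne_of_mem_erase hi]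
  rw [h3, h4]

/-- The `2L`-fold tensor construction: product of `L` copies of `V` and `L` copies of
`conj V`. -/
def bigW {N : ℕ} (L : ℕ) (V : Matrix (Fin N) (Fin N) ℂ) :
    Matrix ((Fin L → Fin N) × (Fin L → Fin N)) ((Fin L → Fin N) × (Fin L → Fin N)) ℂ :=
  Matrix.of fun x j => (∏ i, V (x.1 i) (j.1 i)) * ∏ i, (starRingEnd ℂ) (V (x.2 i) (j.2 i))

/-- The eigenvalue function of the big tensor matrix. -/
def bigMu {N : ℕ} (L : ℕ) (d : Fin N → ℝ) : ((Fin L → Fin N) × (Fin L → Fin N)) → ℝ :=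
  fun j => (∑ i, d (j.1 i)) - ∑ i, d (j.2 i)

/-- The Kronecker-sum style integer matrix. -/
def bigB {N : ℕ} (L : ℕ) {R : Type*} [CommRing R] (Av : Matrix (Fin N) (Fin N) R) :
    Matrix ((Fin L → Fin N) × (Fin L → Fin N)) ((Fin L → Fin N) × (Fin L → Fin N)) R :=
  Matrix.of fun x y =>
    (∑ i0, Av (x.1 i0) (y.1 i0) *
      ((∏ i ∈ Finset.univ.erase i0, (if x.1 i = y.1 i then (1:R) else 0)) *
        ∏ i, (if x.2 i = y.2 i then (1:R) else 0)))
    - ∑ i0, Av (x.2 i0) (y.2 i0) *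
      ((∏ i, (if x.1 i = y.1 i then (1:R) else 0)) *
        ∏ i ∈ Finset.univ.erase i0, (if x.2 i = y.2 i then (1:R) else 0))

lemma bigW_pair {N L : ℕ} (V : Matrix (Fin N) (Fin N) ℂ)
    (x y j : (Fin L → Fin N) × (Fin L → Fin N)) :
    bigW L V x j * (starRingEnd ℂ) (bigW L V y j)
      = (∏ i, V (x.1 i) (j.1 i) * (starRingEnd ℂ) (V (y.1 i) (j.1 i)))
        * ∏ i, (starRingEnd ℂ) (V (x.2 i) (j.2 i)) * V (y.2 i) (j.2 i) := by
  show ((∏ i, V (x.1 i) (j.1 i)) * ∏ i, (starRingEnd ℂ) (V (x.2 i) (j.2 i)))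
      * (starRingEnd ℂ) ((∏ i, V (y.1 i) (j.1 i)) * ∏ i, (starRingEnd ℂ) (V (y.2 i) (j.2 i))) = _
  rw [_root_.map_mul, map_prod, map_prod]
  simp only [Complex.conj_conj]
  rw [Finset.prod_mul_distrib, Finset.prod_mul_distrib]
  ring

lemma sum_prod_split {L N : ℕ} (F G : (Fin L → Fin N) → ℂ) :
    ∑ j : (Fin L → Fin N) × (Fin L → Fin N), F j.1 * G j.2 = (∑ k, F k) * (∑ k, G k) := by
  rw [Fintype.sum_mul_sum]
  exact Fintype.sum_prod_type _

lemma bigW_unitary {N L : ℕ} (V : Matrix (Fin N) (Fin N) ℂ)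
    (hE2 : ∀ x y, (∑ r, V x r * (starRingEnd ℂ) (V y r)) = if x = y then (1:ℂ) else 0)
    (hE2' : ∀ x y, (∑ r, (starRingEnd ℂ) (V x r) * V y r) = if x = y then (1:ℂ) else 0) :
    bigW L V * star (bigW L V) = 1 := by
  ext x y
  rw [Matrix.mul_apply]
  have h0 : ∀ j, bigW L V x j * (star (bigW L V)) j y
      = (∏ i, V (x.1 i) (j.1 i) * (starRingEnd ℂ) (V (y.1 i) (j.1 i)))
        * ∏ i, (starRingEnd ℂ) (V (x.2 i) (j.2 i)) * V (y.2 i) (j.2 i) := by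
    intro j
    rw [Matrix.star_eq_conjTranspose, Matrix.conjTranspose_apply]
    exact bigW_pair V x y j
  simp only [h0]
  rw [sum_prod_split (fun k => ∏ i, V (x.1 i) (k i) * (starRingEnd ℂ) (V (y.1 i) (k i)))
    (fun k => ∏ i, (starRingEnd ℂ) (V (x.2 i) (k i)) * V (y.2 i) (k i)),
    sum_fun_prod (fun i z => V (x.1 i) z * (starRingEnd ℂ) (V (y.1 i) z)),
    sum_fun_prod (fun i z => (starRingEnd ℂ) (V (x.2 i) z) * V (y.2 i) z)]
  simp only [hE2, hE2']
  rw [Fintype.prod_boole, Fintype.prod_boole, Matrix.one_apply]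
  by_cases h : x = y
  · subst h; simp
  · have h1 : ¬((∀ i, x.1 i = y.1 i) ∧ (∀ i, x.2 i = y.2 i)) := by
      rintro ⟨hσ, hτ⟩
      exact h (Prod.ext (funext hσ) (funext hτ))
    rcases not_and_or.mp h1 with h2 | h2
    · rw [if_neg h2, if_neg h, zero_mul]
    · rw [if_neg h2, if_neg h, mul_zero]

lemma bigB_eq {N L : ℕ} (V : Matrix (Fin N) (Fin N) ℂ) (d : Fin N → ℝ)
    (Av : Matrix (Fin N) (Fin N) ℂ)
    (hE2 : ∀ x y, (∑ r, V x r * (starRingEnd ℂ) (V y r)) = if x = y then (1:ℂ) else 0)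
    (hE2' : ∀ x y, (∑ r, (starRingEnd ℂ) (V x r) * V y r) = if x = y then (1:ℂ) else 0)
    (hE1 : ∀ x y, (∑ r, ((d r : ℝ) : ℂ) * (V x r * (starRingEnd ℂ) (V y r))) = Av x y)
    (hE1' : ∀ x y, (∑ r, ((d r : ℝ) : ℂ) * ((starRingEnd ℂ) (V x r) * V y r)) = Av x y) :
    bigW L V * Matrix.diagonal (fun j => ((bigMu L d j : ℝ) : ℂ)) * star (bigW L V)
      = bigB L Av := by
  ext x y
  rw [sandwich_apply]
  have hterm : ∀ j : (Fin L → Fin N) × (Fin L → Fin N),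
      bigW L V x j * ((bigMu L d j : ℝ) : ℂ) * (starRingEnd ℂ) (bigW L V y j)
      = (∑ i0, ((d (j.1 i0) : ℝ) : ℂ) *
          ((∏ i, V (x.1 i) (j.1 i) * (starRingEnd ℂ) (V (y.1 i) (j.1 i)))
            * ∏ i, (starRingEnd ℂ) (V (x.2 i) (j.2 i)) * V (y.2 i) (j.2 i)))
        - ∑ i0, ((d (j.2 i0) : ℝ) : ℂ) *
          ((∏ i, V (x.1 i) (j.1 i) * (starRingEnd ℂ) (V (y.1 i) (j.1 i)))
            * ∏ i, (starRingEnd ℂ) (V (x.2 i) (j.2 i)) * V (y.2 i) (j.2 i)) := by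
    intro j
    rw [mul_right_comm, bigW_pair]
    have hmu : ((bigMu L d j : ℝ) : ℂ)
        = (∑ i0, ((d (j.1 i0) : ℝ) : ℂ)) - ∑ i0, ((d (j.2 i0) : ℝ) : ℂ) := by
      simp only [bigMu]; push_cast; ring
    rw [hmu, mul_sub, Finset.mul_sum, Finset.mul_sum]
    congr 1 <;> exact Finset.sum_congr rfl fun i0 _ => by ring
  rw [Finset.sum_congr rfl fun j _ => hterm j, Finset.sum_sub_distrib]
  show _ = bigB L Av x y
  simp only [bigB, Matrix.of_apply]
  congr 1
  · rw [Finset.sum_comm]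
    refine Finset.sum_congr rfl fun i0 _ => ?_
    have hre : ∀ j : (Fin L → Fin N) × (Fin L → Fin N),
        ((d (j.1 i0) : ℝ) : ℂ) *
          ((∏ i, V (x.1 i) (j.1 i) * (starRingEnd ℂ) (V (y.1 i) (j.1 i)))
            * ∏ i, (starRingEnd ℂ) (V (x.2 i) (j.2 i)) * V (y.2 i) (j.2 i))
        = (((d (j.1 i0) : ℝ) : ℂ) * ∏ i, V (x.1 i) (j.1 i) * (starRingEnd ℂ) (V (y.1 i) (j.1 i)))
            * ∏ i, (starRingEnd ℂ) (V (x.2 i) (j.2 i)) * V (y.2 i) (j.2 i) := by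
      intro j; ring
    rw [Finset.sum_congr rfl fun j _ => hre j,
      sum_prod_split
        (fun k => ((d (k i0) : ℝ) : ℂ) * ∏ i, V (x.1 i) (k i) * (starRingEnd ℂ) (V (y.1 i) (k i)))
        (fun k => ∏ i, (starRingEnd ℂ) (V (x.2 i) (k i)) * V (y.2 i) (k i)),
      sum_fun_prod_weight (fun i z => V (x.1 i) z * (starRingEnd ℂ) (V (y.1 i) z))
        (fun z => ((d z : ℝ) : ℂ)) i0,
      sum_fun_prod (fun i z => (starRingEnd ℂ) (V (x.2 i) z) * V (y.2 i) z)]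
    simp only [hE1, hE2, hE2']
    ring
  · rw [Finset.sum_comm]
    refine Finset.sum_congr rfl fun i0 _ => ?_
    have hre : ∀ j : (Fin L → Fin N) × (Fin L → Fin N),
        ((d (j.2 i0) : ℝ) : ℂ) *
          ((∏ i, V (x.1 i) (j.1 i) * (starRingEnd ℂ) (V (y.1 i) (j.1 i)))
            * ∏ i, (starRingEnd ℂ) (V (x.2 i) (j.2 i)) * V (y.2 i) (j.2 i))
        = (∏ i, V (x.1 i) (j.1 i) * (starRingEnd ℂ) (V (y.1 i) (j.1 i)))
            * (((d (j.2 i0) : ℝ) : ℂ) * ∏ i, (starRingEnd ℂ) (V (x.2 i) (j.2 i)) * V (y.2 i) (j.2 i)) := by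
      intro j; ring
    rw [Finset.sum_congr rfl fun j _ => hre j,
      sum_prod_split
        (fun k => ∏ i, V (x.1 i) (k i) * (starRingEnd ℂ) (V (y.1 i) (k i)))
        (fun k => ((d (k i0) : ℝ) : ℂ) * ∏ i, (starRingEnd ℂ) (V (x.2 i) (k i)) * V (y.2 i) (k i)),
      sum_fun_prod (fun i z => V (x.1 i) z * (starRingEnd ℂ) (V (y.1 i) z)),
      sum_fun_prod_weight (fun i z => (starRingEnd ℂ) (V (x.2 i) z) * V (y.2 i) z)
        (fun z => ((d z : ℝ) : ℂ)) i0]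
    simp only [hE1', hE2, hE2']
    ring

lemma prod_cexp {L : ℕ} (t : ℝ) (f : Fin L → ℝ) :
    (∏ i, Complex.exp (Complex.I * t * f i))
      = Complex.exp (Complex.I * t * ((∑ i, f i : ℝ) : ℂ)) := by
  rw [← Complex.exp_sum]
  congr 1
  push_cast
  rw [Finset.mul_sum]

lemma term_expand {N L : ℕ} (V : Matrix (Fin N) (Fin N) ℂ) (d : Fin N → ℝ) (a b : Fin N)
    (t : ℝ) (σ τ : Fin L → Fin N) :
    (∏ i, V a (σ i) * Complex.exp (Complex.I * t * d (σ i)) * (starRingEnd ℂ) (V b (σ i)))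
      * ∏ i, (starRingEnd ℂ) (V a (τ i)) * Complex.exp (Complex.I * t * (-(d (τ i)) : ℝ)) * V b (τ i)
    = (bigW L V (fun _ => a, fun _ => a) (σ, τ)
        * (starRingEnd ℂ) (bigW L V (fun _ => b, fun _ => b) (σ, τ)))
        * Complex.exp (Complex.I * t * ((bigMu L d (σ, τ) : ℝ) : ℂ)) := by
  rw [bigW_pair]
  dsimp only
  rw [Finset.prod_mul_distrib, Finset.prod_mul_distrib,
    Finset.prod_mul_distrib (f := fun i => (starRingEnd ℂ) (V a (τ i)) * Complex.exp (Complex.I * t * (-(d (τ i)) : ℝ))),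
    Finset.prod_mul_distrib (f := fun i => (starRingEnd ℂ) (V a (τ i)))]
  rw [prod_cexp t (fun i => d (σ i)), prod_cexp t (fun i => -(d (τ i))),
    Finset.prod_mul_distrib, Finset.prod_mul_distrib]
  have hexp2 : Complex.exp (Complex.I * t * ((∑ i, d (σ i) : ℝ) : ℂ))
      * Complex.exp (Complex.I * t * ((∑ i, -(d (τ i)) : ℝ) : ℂ))
      = Complex.exp (Complex.I * t * ((bigMu L d (σ, τ) : ℝ) : ℂ)) := by
    rw [← Complex.exp_add]
    congr 1
    simp only [bigMu]
    push_cast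
    rw [Finset.sum_neg_distrib]
    ring
  rw [← hexp2]
  ring

lemma bigB_map {N L : ℕ} {R S : Type*} [CommRing R] [CommRing S] (f : R →+* S)
    (Av : Matrix (Fin N) (Fin N) R) :
    (bigB L Av).map f = bigB L (Av.map f) := by
  ext x y
  simp only [bigB, Matrix.map_apply, Matrix.of_apply]
  rw [map_sub, map_sum, map_sum]
  congr 1 <;>
    refine Finset.sum_congr rfl fun i0 _ => ?_ <;>
      rw [_root_.map_mul, _root_.map_mul, map_prod, map_prod] <;>
        simp [apply_ite f]

open Matrix Filter

/-- For the adjacency matrix `A` of a finite simple graph, vertices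
`a`, `b` and an integer `ℓ ≥ 1`, the time average
`lim_{T→∞} (1/T) ∫₀ᵀ |(exp(itA))_{ab}|^{2ℓ} dt` exists and is a rational number. -/
theorem even_moments_rational
    {n : ℕ} (G : SimpleGraph (Fin n)) [DecidableRel G.Adj]
    (A : Matrix (Fin n) (Fin n) ℝ) (hA : A = G.adjMatrix ℝ)
    (a b : Fin n) (ℓ : ℕ) (hℓ : 1 ≤ ℓ) :
    ∃ q : ℚ, Tendsto (fun T : ℝ => (1 / T) *
        ∫ t in (0:ℝ)..T, (‖
          (NormedSpace.exp ((Complex.I * (t : ℂ)) • A.map Complex.ofReal)) a b‖) ^ (2 * ℓ))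
      atTop (nhds (q : ℝ)) := by
  classical
  set Ac : Matrix (Fin n) (Fin n) ℂ := A.map Complex.ofReal with hAcdef
  have hsymm : ∀ i j, A i j = A j i := by
    intro i j; rw [hA]
    simp [SimpleGraph.adjMatrix_apply, G.adj_comm]
  have hherm : Ac.IsHermitian := by
    rw [Matrix.IsHermitian, ← Matrix.ext_iff]
    intro i j
    rw [Matrix.conjTranspose_apply, hAcdef, Matrix.map_apply, Matrix.map_apply,
      Complex.star_def, Complex.conj_ofReal, hsymm i j]
  set V : Matrix (Fin n) (Fin n) ℂ := (hherm.eigenvectorUnitary : Matrix (Fin n) (Fin n) ℂ)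
    with hVdef
  set d : Fin n → ℝ := hherm.eigenvalues with hddef
  have hV1 : V * star V = 1 :=
    Matrix.mem_unitaryGroup_iff.mp (hherm.eigenvectorUnitary).2
  have hspec : Ac = V * Matrix.diagonal (fun r => ((d r : ℝ) : ℂ)) * star V := by
    have h := hherm.spectral_theorem
    exact h
  -- entrywise identities
  have hE2 : ∀ x y, (∑ r, V x r * (starRingEnd ℂ) (V y r)) = if x = y then (1:ℂ) else 0 := by
    intro x y
    have h := congrFun (congrFun hV1 x) y
    rw [Matrix.mul_apply, Matrix.one_apply] at h
    rw [← h]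
    refine Finset.sum_congr rfl fun r _ => ?_
    rw [Matrix.star_eq_conjTranspose, Matrix.conjTranspose_apply]
    rfl
  have hE2' : ∀ x y, (∑ r, (starRingEnd ℂ) (V x r) * V y r) = if x = y then (1:ℂ) else 0 := by
    intro x y
    have h := congrArg (starRingEnd ℂ) (hE2 x y)
    rw [map_sum] at h
    simp only [_root_.map_mul, Complex.conj_conj] at h
    rw [h]
    split_ifs <;> simp
  have hE1 : ∀ x y, (∑ r, ((d r : ℝ) : ℂ) * (V x r * (starRingEnd ℂ) (V y r)))
      = ((A x y : ℝ) : ℂ) := by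
    intro x y
    have h := congrFun (congrFun hspec x) y
    rw [sandwich_apply] at h
    have h2 : Ac x y = ((A x y : ℝ) : ℂ) := rfl
    rw [h2] at h
    rw [h]
    exact Finset.sum_congr rfl fun r _ => by ring
  have hE1' : ∀ x y, (∑ r, ((d r : ℝ) : ℂ) * ((starRingEnd ℂ) (V x r) * V y r))
      = ((A x y : ℝ) : ℂ) := by
    intro x y
    have h := congrArg (starRingEnd ℂ) (hE1 x y)
    rw [map_sum, Complex.conj_ofReal] at h
    rw [← h]
    refine Finset.sum_congr rfl fun r _ => ?_
    simp only [_root_.map_mul, Complex.conj_conj, Complex.conj_ofReal]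
  -- the exponential formula
  have hexp : ∀ t : ℝ, NormedSpace.exp ((Complex.I * (t:ℂ)) • Ac)
      = V * Matrix.diagonal (fun r => Complex.exp (Complex.I * t * d r)) * star V := by
    intro t
    have hV2 : star V * V = 1 := mul_eq_one_comm.mp hV1
    have hVu : IsUnit V := ⟨⟨V, star V, hV1, hV2⟩, rfl⟩
    have hVinv : V⁻¹ = star V := Matrix.inv_eq_right_inv hV1
    rw [hspec]
    have hsmul : (Complex.I * (t:ℂ)) • (V * Matrix.diagonal (fun r => ((d r : ℝ):ℂ)) * star V)
        = V * Matrix.diagonal (fun r => Complex.I * t * ((d r : ℝ):ℂ)) * star V := by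
      have hd : Matrix.diagonal (fun r => Complex.I * (t:ℂ) * ((d r : ℝ):ℂ))
          = (Complex.I * (t:ℂ)) • Matrix.diagonal (fun r => ((d r : ℝ):ℂ)) := by
        rw [← Matrix.diagonal_smul]
        congr 1
      rw [hd, Matrix.mul_smul, Matrix.smul_mul]
    rw [hsmul, ← hVinv, Matrix.exp_conj V _ hVu, hVinv, Matrix.exp_diagonal]
    have hdg : (NormedSpace.exp fun r => Complex.I * (t:ℂ) * ((d r : ℝ):ℂ))
        = fun r => Complex.exp (Complex.I * t * d r) := by
      funext r
      rw [Pi.coe_exp, ← Complex.exp_eq_exp_ℂ]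
    rw [hdg]
  have hUab : ∀ t : ℝ, (NormedSpace.exp ((Complex.I * (t:ℂ)) • Ac)) a b
      = ∑ r, V a r * Complex.exp (Complex.I * t * d r) * (starRingEnd ℂ) (V b r) := by
    intro t
    rw [hexp t, sandwich_apply]
  -- the index type and coefficient/frequency data
  set αv : (Fin ℓ → Fin n) × (Fin ℓ → Fin n) := (fun _ => a, fun _ => a) with hαv
  set βv : (Fin ℓ → Fin n) × (Fin ℓ → Fin n) := (fun _ => b, fun _ => b) with hβv
  set c : (Fin ℓ → Fin n) × (Fin ℓ → Fin n) → ℂ :=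
    fun j => bigW ℓ V αv j * (starRingEnd ℂ) (bigW ℓ V βv j) with hcdef
  set μ : (Fin ℓ → Fin n) × (Fin ℓ → Fin n) → ℝ := bigMu ℓ d with hμdef
  -- key integrand expansion
  have hkey : ∀ t : ℝ, ((‖(NormedSpace.exp ((Complex.I * (t:ℂ)) • Ac)) a b‖) ^ (2*ℓ) : ℝ)
      = ∑ j, (c j * Complex.exp (Complex.I * t * μ j)).re := by
    intro t
    have h1 : ∀ z : ℂ, (‖z‖ ^ (2*ℓ) : ℝ) = (z ^ ℓ * ((starRingEnd ℂ) z) ^ ℓ).re := by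
      intro z
      rw [pow_mul, Complex.sq_norm, ← mul_pow, Complex.mul_conj, ← Complex.ofReal_pow,
        Complex.ofReal_re]
    have hconj : (starRingEnd ℂ) ((NormedSpace.exp ((Complex.I * (t:ℂ)) • Ac)) a b)
        = ∑ r, (starRingEnd ℂ) (V a r) * Complex.exp (Complex.I * t * (-(d r) : ℝ)) * V b r := by
      rw [hUab t, map_sum]
      refine Finset.sum_congr rfl fun r _ => ?_
      have harg : (starRingEnd ℂ) (Complex.I * t * ((d r : ℝ) : ℂ))
          = Complex.I * t * ((-(d r) : ℝ) : ℂ) := by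
        simp only [_root_.map_mul, Complex.conj_I, Complex.conj_ofReal]
        push_cast
        ring
      rw [_root_.map_mul, _root_.map_mul, Complex.conj_conj, ← Complex.exp_conj, harg]
    rw [h1, hconj, hUab t, Fintype.sum_pow, Fintype.sum_pow, Fintype.sum_mul_sum,
      ← Complex.re_sum]
    refine congrArg Complex.re ?_
    rw [Fintype.sum_prod_type]
    refine Finset.sum_congr rfl fun σ _ => Finset.sum_congr rfl fun τ _ => ?_
    simp only [hcdef, hμdef, hαv, hβv]
    exact term_expand V d a b t σ τ
  -- the limit
  set L : ℝ := ∑ j, (if μ j = 0 then (c j).re else 0) with hLdef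
  have hTend : Tendsto (fun T : ℝ => (1 / T) *
      ∫ t in (0:ℝ)..T, ∑ j, (c j * Complex.exp (Complex.I * t * μ j)).re) atTop (nhds L) := by
    have hcont : ∀ (cc : ℂ) (m : ℝ), Continuous fun t : ℝ => (cc * Complex.exp (Complex.I * t * m)).re := by
      intro cc m
      have hi : Continuous fun t : ℝ => Complex.I * (t:ℂ) * (m:ℂ) :=
        (continuous_const.mul Complex.continuous_ofReal).mul continuous_const
      exact Complex.continuous_re.comp (continuous_const.mul (Complex.continuous_exp.comp hi))
    have hsplit : ∀ T : ℝ, (1 / T) * (∫ t in (0:ℝ)..T, ∑ j, (c j * Complex.exp (Complex.I * t * μ j)).re)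
        = ∑ j, (1 / T) * ∫ t in (0:ℝ)..T, (c j * Complex.exp (Complex.I * t * μ j)).re := by
      intro T
      rw [intervalIntegral.integral_finset_sum]
      · rw [Finset.mul_sum]
      · exact fun j _ => (hcont (c j) (μ j)).intervalIntegrable _ _
    simp only [hsplit]
    rw [hLdef]
    exact tendsto_finset_sum _ (fun j _ => avg_osc (c j) (μ j))
  -- rationality
  obtain ⟨q, hq⟩ : ∃ q : ℚ, (q : ℝ) = L := by
    have hW1 : bigW ℓ V * star (bigW ℓ V) = 1 := bigW_unitary V hE2 hE2'
    set Avc : Matrix (Fin n) (Fin n) ℂ := Matrix.of fun x y => ((A x y : ℝ) : ℂ) with hAvc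
    have hB : bigW ℓ V * Matrix.diagonal (fun j => ((μ j : ℝ) : ℂ)) * star (bigW ℓ V)
        = bigB ℓ Avc := by
      rw [hμdef]
      exact bigB_eq V d Avc hE2 hE2' (fun x y => hE1 x y) (fun x y => hE1' x y)
    set Bq : Matrix ((Fin ℓ → Fin n) × (Fin ℓ → Fin n)) ((Fin ℓ → Fin n) × (Fin ℓ → Fin n)) ℚ :=
      bigB ℓ (G.adjMatrix ℚ) with hBq
    set φ : Matrix ((Fin ℓ → Fin n) × (Fin ℓ → Fin n)) ((Fin ℓ → Fin n) × (Fin ℓ → Fin n)) ℚ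
        →ₐ[ℚ] Matrix ((Fin ℓ → Fin n) × (Fin ℓ → Fin n)) ((Fin ℓ → Fin n) × (Fin ℓ → Fin n)) ℂ :=
      (Algebra.ofId ℚ ℂ).mapMatrix with hφ
    have hφapp : ∀ M, φ M = M.map (fun r : ℚ => (r : ℂ)) := by
      intro M
      rw [hφ, AlgHom.mapMatrix_apply]
      ext x y
      simp [Matrix.map_apply]
    have hφB : φ Bq = bigB ℓ Avc := by
      rw [hφapp, hBq]
      have : (fun r : ℚ => (r : ℂ)) = ⇑(Rat.castHom ℂ) := by funext r; simp
      have hAv : (G.adjMatrix ℚ).map (Rat.castHom ℂ) = Avc := by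
        ext u v
        rw [hAvc, hA]
        simp [Matrix.map_apply, SimpleGraph.adjMatrix_apply, apply_ite]
      rw [this, bigB_map, hAv]
    set p : Polynomial ℚ := Bq.charpoly with hp
    set m : ℕ := p.rootMultiplicity 0 with hm
    set g : Polynomial ℚ := p /ₘ (Polynomial.X - Polynomial.C (0:ℚ)) ^ m with hg
    have hp0 : p ≠ 0 := (Matrix.charpoly_monic _).ne_zero
    have hg0 : g.eval 0 ≠ 0 :=
      Polynomial.eval_divByMonic_pow_rootMultiplicity_ne_zero 0 hp0
    have hpg : (Polynomial.X - Polynomial.C (0:ℚ)) ^ m * g = p :=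
      Polynomial.pow_mul_divByMonic_rootMultiplicity_eq p 0
    have hCH : Polynomial.aeval (bigB ℓ Avc) p = 0 := by
      have h := Matrix.aeval_self_charpoly Bq
      calc Polynomial.aeval (bigB ℓ Avc) p = Polynomial.aeval (φ Bq) p := by rw [hφB]
        _ = φ (Polynomial.aeval Bq p) := Polynomial.aeval_algHom_apply φ _ p
        _ = 0 := by rw [hp, h, map_zero]
    have hsand : ∀ gg : Polynomial ℚ, Polynomial.aeval (bigB ℓ Avc) gg
        = bigW ℓ V * Matrix.diagonal (fun j => Polynomial.aeval ((μ j : ℝ) : ℂ) gg)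
          * star (bigW ℓ V) := by
      intro gg
      rw [← hB]
      exact sandwich_aeval (bigW ℓ V) hW1 _ gg
    have hroot : ∀ j, Polynomial.aeval ((μ j : ℝ) : ℂ) p = 0 := by
      intro j
      have hW2 : star (bigW ℓ V) * bigW ℓ V = 1 := mul_eq_one_comm.mp hW1
      have h2 : Matrix.diagonal (fun j => Polynomial.aeval ((μ j : ℝ) : ℂ) p)
          = star (bigW ℓ V) * (bigW ℓ V * Matrix.diagonal (fun j => Polynomial.aeval ((μ j : ℝ) : ℂ) p)
            * star (bigW ℓ V)) * bigW ℓ V := by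
        calc Matrix.diagonal (fun j => Polynomial.aeval ((μ j : ℝ) : ℂ) p)
            = 1 * Matrix.diagonal (fun j => Polynomial.aeval ((μ j : ℝ) : ℂ) p) * 1 := by
              rw [one_mul, mul_one]
          _ = (star (bigW ℓ V) * bigW ℓ V) * Matrix.diagonal (fun j => Polynomial.aeval ((μ j : ℝ) : ℂ) p)
              * (star (bigW ℓ V) * bigW ℓ V) := by rw [hW2]
          _ = _ := by noncomm_ring
      rw [← hsand p, hCH, Matrix.mul_zero, Matrix.zero_mul] at h2
      have h4 := congrFun (congrFun h2 j) j
      rwa [Matrix.diagonal_apply_eq, Matrix.zero_apply] at h4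
    have hgroot : ∀ j, μ j ≠ 0 → Polynomial.aeval ((μ j : ℝ) : ℂ) g = 0 := by
      intro j hj
      have h := hroot j
      rw [← hpg] at h
      simp only [_root_.map_mul, map_pow, map_sub, Polynomial.aeval_X, Polynomial.aeval_C,
        map_zero, sub_zero] at h
      rcases mul_eq_zero.mp h with h' | h'
      · exact absurd h' (pow_ne_zero _ (Complex.ofReal_ne_zero.mpr hj))
      · exact h'
    have hgzero : Polynomial.aeval (((0:ℝ)) : ℂ) g = ((g.eval 0 : ℚ) : ℂ) := by
      rw [show ((0:ℝ):ℂ) = 0 from by norm_num, Polynomial.aeval_def,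
        Polynomial.eval₂_at_zero, Polynomial.coeff_zero_eq_eval_zero, eq_ratCast]
    set S : ℂ := ∑ j, (if μ j = 0 then c j else 0) with hSdef
    have hSentry : (Polynomial.aeval (bigB ℓ Avc) g) αv βv = ((g.eval 0 : ℚ) : ℂ) * S := by
      rw [hsand g, sandwich_apply, hSdef, Finset.mul_sum]
      refine Finset.sum_congr rfl fun j _ => ?_
      by_cases hj : μ j = 0
      · rw [if_pos hj, hj, hgzero]
        simp only [hcdef]
        ring
      · rw [if_neg hj, hgroot j hj]
        simp
    have hQentry : (Polynomial.aeval (bigB ℓ Avc) g) αv βv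
        = (((Polynomial.aeval Bq g) αv βv : ℚ) : ℂ) := by
      rw [← hφB, Polynomial.aeval_algHom_apply, hφapp, Matrix.map_apply]
    have hgc0 : ((g.eval 0 : ℚ) : ℂ) ≠ 0 := by exact_mod_cast hg0
    refine ⟨(g.eval 0)⁻¹ * (Polynomial.aeval Bq g) αv βv, ?_⟩
    have hSq : S = (((g.eval 0)⁻¹ * (Polynomial.aeval Bq g) αv βv : ℚ) : ℂ) := by
      have h5 := hSentry.symm.trans hQentry
      rw [Rat.cast_mul, Rat.cast_inv, inv_mul_eq_div, eq_div_iff hgc0]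
      linear_combination h5
    have hLS : L = S.re := by
      rw [hLdef, hSdef, Complex.re_sum]
      refine Finset.sum_congr rfl fun j _ => ?_
      by_cases hj : μ j = 0 <;> simp [hj]
    rw [hLS, hSq]
    simp
  refine ⟨q, ?_⟩
  rw [hq]
  refine hTend.congr fun T => ?_
  congr 1
  refine intervalIntegral.integral_congr fun t _ => ?_
  exact (hkey t).symm
end

section
/- Let A be the adjacency matrix of a finite simple graph G and let a, b be any (possibly equal) vertices. Then the closure in ℂ of the set {(exp(itA))_{ab} : t ∈ [0, ∞)} is invariant under complex conjugation. -/
open Matrix NormedSpace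
open scoped NNReal

section aux
variable {n : ℕ}

private lemma key_conj_mem (M : Matrix (Fin n) (Fin n) ℂ)
    (hH : Mᴴ = M) (hT : Mᵀ = M) (a b : Fin n) :
    ∀ z ∈ {z : ℂ | ∃ t : ℝ, 0 ≤ t ∧
        z = (exp ((Complex.I * (t : ℂ)) • M)) a b},
      (starRingEnd ℂ) z ∈ closure {z : ℂ | ∃ t : ℝ, 0 ≤ t ∧
        z = (exp ((Complex.I * (t : ℂ)) • M)) a b} := by
  classical
  set U : ℝ → Matrix (Fin n) (Fin n) ℂ :=
    fun t => exp ((Complex.I * (t : ℂ)) • M) with hU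
  -- basic algebraic facts about U
  have h_add : ∀ s t : ℝ, U (s + t) = U s * U t := by
    intro s t
    have hc : Commute ((Complex.I * (s : ℂ)) • M) ((Complex.I * (t : ℂ)) • M) :=
      ((Commute.refl M).smul_left _).smul_right _
    have he : (Complex.I * ((s + t : ℝ) : ℂ)) • M
        = (Complex.I * (s : ℂ)) • M + (Complex.I * (t : ℂ)) • M := by
      rw [← add_smul]; congr 1; push_cast; ring
    show exp _ = _
    rw [he, Matrix.exp_add_of_commute _ _ hc]
  have h_zero : U 0 = 1 := by
    show exp _ = 1
    norm_num [exp_zero]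
  have h_inv : ∀ t : ℝ, U t * U (-t) = 1 := by
    intro t; rw [← h_add]; simp [h_zero]
  have h_star : ∀ t : ℝ, (U t)ᴴ = U (-t) := by
    intro t
    show (exp _)ᴴ = exp _
    rw [← Matrix.exp_conjTranspose]
    congr 1
    rw [conjTranspose_smul, hH]
    congr 1
    simp [Complex.ext_iff]
  have h_trans : ∀ t : ℝ, (U t)ᵀ = U t := by
    intro t
    show (exp _)ᵀ = exp _
    rw [← Matrix.exp_transpose, transpose_smul, hT]
  have h_conj : ∀ (t : ℝ) (i j : Fin n),
      (starRingEnd ℂ) (U t i j) = U (-t) i j := by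
    intro t i j
    have h1 : (starRingEnd ℂ) (U t i j) = (U t)ᴴ j i := by
      simp [conjTranspose_apply]
    rw [h1, h_star t]
    conv_lhs => rw [← h_trans (-t)]
    rw [Matrix.transpose_apply]
  -- entries of U are bounded by 1
  have h_entry : ∀ (t : ℝ) (i j : Fin n), ‖U t i j‖ ≤ 1 := by
    intro t i j
    have h1 : (U t * U (-t)) i i = 1 := by rw [h_inv]; simp
    rw [Matrix.mul_apply] at h1
    have h2 : ∀ k ∈ Finset.univ, U t i k * U (-t) k i
        = ((Complex.normSq (U t i k) : ℝ) : ℂ) := by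
      intro k _
      have hk : U (-t) k i = (starRingEnd ℂ) (U t i k) := by
        rw [← h_star t]; rfl
      rw [hk, Complex.mul_conj]
    rw [Finset.sum_congr rfl h2, ← Complex.ofReal_sum] at h1
    have h4 : (∑ k, Complex.normSq (U t i k)) = 1 := by exact_mod_cast h1
    have h5 : Complex.normSq (U t i j) ≤ 1 := by
      rw [← h4]
      exact Finset.single_le_sum (fun k _ => Complex.normSq_nonneg _)
        (Finset.mem_univ j)
    have h6 : ‖U t i j‖ ^ 2 ≤ 1 := by
      rw [← Complex.sq_norm] at h5
      exact h5
    nlinarith [norm_nonneg (U t i j)]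
  -- now introduce the l∞-operator norm structure
  letI : SeminormedRing (Matrix (Fin n) (Fin n) ℂ) := Matrix.linftyOpSemiNormedRing
  letI : NormedRing (Matrix (Fin n) (Fin n) ℂ) := Matrix.linftyOpNormedRing
  letI : NormedAlgebra ℂ (Matrix (Fin n) (Fin n) ℂ) := Matrix.linftyOpNormedAlgebra
  set C : ℝ := max (n : ℝ) 1 with hC
  have hC0 : (0 : ℝ) < C := lt_of_lt_of_le one_pos (le_max_right _ _)
  have h_norm : ∀ t : ℝ, ‖U t‖ ≤ C := by
    intro t
    have hn : ‖U t‖₊ ≤ (n : ℝ≥0) := by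
      rw [Matrix.linfty_opNNNorm_def]
      apply Finset.sup_le
      intro i _
      calc (∑ j, ‖U t i j‖₊) ≤ ∑ _j : Fin n, 1 := by
            apply Finset.sum_le_sum
            intro j _
            exact_mod_cast h_entry t i j
        _ = (n : ℝ≥0) := by simp
    calc ‖U t‖ ≤ (n : ℝ) := by exact_mod_cast hn
      _ ≤ C := le_max_left _ _
  have h_entry_norm : ∀ (X : Matrix (Fin n) (Fin n) ℂ) (i j : Fin n),
      ‖X i j‖ ≤ ‖X‖ := by
    intro X i j
    have hx : ‖X i j‖₊ ≤ ‖X‖₊ := by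
      rw [Matrix.linfty_opNNNorm_def]
      calc ‖X i j‖₊ ≤ ∑ k, ‖X i k‖₊ :=
            Finset.single_le_sum (f := fun k => ‖X i k‖₊) (fun k _ => zero_le)
              (Finset.mem_univ j)
        _ ≤ _ := Finset.le_sup (f := fun r => ∑ k, ‖X r k‖₊) (Finset.mem_univ i)
    exact_mod_cast hx
  -- recurrence: U gets close to 1 at arbitrarily large times
  have h_rec : ∀ ε > (0:ℝ), ∀ T : ℝ, ∃ s : ℝ, T ≤ s ∧ ‖U s - 1‖ < ε := by
    intro ε hε T
    have hball : ∀ k : ℕ, U k ∈ Metric.closedBall (0 : Matrix (Fin n) (Fin n) ℂ) C := by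
      intro k
      rw [Metric.mem_closedBall, dist_zero_right]
      exact h_norm _
    obtain ⟨L, -, φ, hφ, hφt⟩ :=
      (isCompact_closedBall (0 : Matrix (Fin n) (Fin n) ℂ) C).tendsto_subseq hball
    have hcauchy := hφt.cauchySeq
    replace hcauchy := Metric.cauchySeq_iff'.1 hcauchy
    obtain ⟨N, hN⟩ := hcauchy (ε / C) (div_pos hε hC0)
    set k : ℕ := max N (φ N + Nat.ceil (max T 0)) with hk
    have hd := hN k (le_max_left _ _)
    rw [dist_eq_norm] at hd
    have hφk : φ N + Nat.ceil (max T 0) ≤ φ k :=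
      le_trans (le_max_right N _) hφ.le_apply
    refine ⟨(φ k : ℝ) - (φ N : ℝ), ?_, ?_⟩
    · have h2 : ((φ N : ℝ) + (Nat.ceil (max T 0) : ℝ)) ≤ (φ k : ℝ) := by
        exact_mod_cast hφk
      have h3 : max T 0 ≤ (Nat.ceil (max T 0) : ℝ) := Nat.le_ceil _
      have h4 : T ≤ max T 0 := le_max_left _ _
      linarith
    · have e1 : U ((φ k : ℝ) - (φ N : ℝ)) = U (-(φ N : ℝ)) * U (φ k : ℝ) := by
        rw [← h_add]; congr 1; ring
      have e2 : U (-(φ N : ℝ)) * U (φ N : ℝ) = 1 := by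
        rw [← h_add]; simp [h_zero]
      calc ‖U ((φ k : ℝ) - (φ N : ℝ)) - 1‖
          = ‖U (-(φ N : ℝ)) * (U (φ k : ℝ) - U (φ N : ℝ))‖ := by
            rw [mul_sub, ← e1, e2]
        _ ≤ ‖U (-(φ N : ℝ))‖ * ‖U (φ k : ℝ) - U (φ N : ℝ)‖ := norm_mul_le _ _
        _ ≤ C * ‖U (φ k : ℝ) - U (φ N : ℝ)‖ :=
            mul_le_mul_of_nonneg_right (h_norm _) (norm_nonneg _)
        _ < C * (ε / C) := by
            apply mul_lt_mul_of_pos_left _ hC0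
            exact_mod_cast hd
        _ = ε := mul_div_cancel₀ _ (ne_of_gt hC0)
  -- main argument
  rintro z ⟨t, ht, rfl⟩
  rw [h_conj t a b, Metric.mem_closure_iff]
  intro ε hε
  obtain ⟨s, hsT, hs⟩ := h_rec (ε / C) (div_pos hε hC0) t
  refine ⟨U (s - t) a b, ⟨s - t, by linarith, rfl⟩, ?_⟩
  have e1 : U (s - t) = U (-t) * U s := by
    rw [← h_add]; congr 1; ring
  have e3 : U (-t) - U (s - t) = U (-t) * (1 - U s) := by
    rw [mul_sub, mul_one, e1]
  rw [dist_eq_norm]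
  calc ‖U (-t) a b - U (s - t) a b‖
      = ‖(U (-t) - U (s - t)) a b‖ := by rw [Matrix.sub_apply]
    _ ≤ ‖U (-t) - U (s - t)‖ := h_entry_norm _ a b
    _ = ‖U (-t) * (1 - U s)‖ := by rw [e3]
    _ ≤ ‖U (-t)‖ * ‖1 - U s‖ := norm_mul_le _ _
    _ ≤ C * ‖1 - U s‖ := mul_le_mul_of_nonneg_right (h_norm _) (norm_nonneg _)
    _ < C * (ε / C) := by
        apply mul_lt_mul_of_pos_left _ hC0
        rw [norm_sub_rev]; exact hs
    _ = ε := mul_div_cancel₀ _ (ne_of_gt hC0)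

private lemma key_eq (M : Matrix (Fin n) (Fin n) ℂ)
    (hH : Mᴴ = M) (hT : Mᵀ = M) (a b : Fin n) :
    (starRingEnd ℂ) '' closure {z : ℂ | ∃ t : ℝ, 0 ≤ t ∧
        z = (exp ((Complex.I * (t : ℂ)) • M)) a b} =
      closure {z : ℂ | ∃ t : ℝ, 0 ≤ t ∧
        z = (exp ((Complex.I * (t : ℂ)) • M)) a b} := by
  set S : Set ℂ := {z : ℂ | ∃ t : ℝ, 0 ≤ t ∧
        z = (exp ((Complex.I * (t : ℂ)) • M)) a b} with hSdef
  have hmem : ∀ z ∈ S, (starRingEnd ℂ) z ∈ closure S := key_conj_mem M hH hT a b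
  have hc : Continuous fun z : ℂ => (starRingEnd ℂ) z := Complex.continuous_conj
  have hinv : ∀ s : Set ℂ, (starRingEnd ℂ) '' ((starRingEnd ℂ) '' s) = s := by
    intro s
    rw [← Set.image_comp]
    have : ((starRingEnd ℂ) ∘ (starRingEnd ℂ)) = id :=
      funext fun z => Complex.conj_conj z
    rw [this, Set.image_id]
  have hsub1 : ∀ s : Set ℂ, (starRingEnd ℂ) '' closure s ⊆ closure ((starRingEnd ℂ) '' s) :=
    fun s => image_closure_subset_closure_image hc
  have h2' : closure ((starRingEnd ℂ) '' S) ⊆ (starRingEnd ℂ) '' closure S := by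
    have h3 := hsub1 ((starRingEnd ℂ) '' S)
    rw [hinv] at h3
    have h4 := Set.image_mono (f := starRingEnd ℂ) h3
    rwa [hinv] at h4
  have himage : (starRingEnd ℂ) '' closure S = closure ((starRingEnd ℂ) '' S) :=
    Set.Subset.antisymm (hsub1 S) h2'
  rw [himage]
  apply Set.Subset.antisymm
  · apply closure_minimal _ isClosed_closure
    rintro _ ⟨z, hz, rfl⟩
    exact hmem z hz
  · apply closure_minimal _ isClosed_closure
    intro z hz
    rw [← himage]
    exact ⟨(starRingEnd ℂ) z, hmem z hz, Complex.conj_conj z⟩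

end aux

/-- For the adjacency matrix `A` of a finite simple graph and any
(possibly equal) vertices `a`, `b`, the closure in `ℂ` of the curve
`{(exp(itA))_{ab} : t ≥ 0}` is invariant under complex conjugation. -/
theorem closure_curve_conj_invariant
    {n : ℕ} (G : SimpleGraph (Fin n)) [DecidableRel G.Adj]
    (A : Matrix (Fin n) (Fin n) ℝ) (hA : A = G.adjMatrix ℝ)
    (a b : Fin n) :
    (starRingEnd ℂ) '' closure
        {z : ℂ | ∃ t : ℝ, 0 ≤ t ∧
          z = (NormedSpace.exp ((Complex.I * (t : ℂ)) • A.map Complex.ofReal)) a b} =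
      closure
        {z : ℂ | ∃ t : ℝ, 0 ≤ t ∧
          z = (NormedSpace.exp ((Complex.I * (t : ℂ)) • A.map Complex.ofReal)) a b} := by
  subst hA
  apply key_eq
  · ext i j
    simp [Matrix.conjTranspose_apply, SimpleGraph.adjMatrix_apply, Complex.conj_ofReal,
      G.adj_comm i j]
  · ext i j
    simp [Matrix.transpose_apply, SimpleGraph.adjMatrix_apply, G.adj_comm i j]
end

section
/- Let w_1, …, w_k be real numbers that are linearly independent over ℚ, let f^0, …, f^d ∈ ℤ^k be integer vectors, and set θ_r = Σ_{ℓ=1}^k f^r_ℓ w_ℓ for r = 0, …, d. Let c_0, …, c_d be complex numbers and let n ≥ 1 be an integer such that Σ_{ℓ=1}^k f^r_ℓ ≡ 1 (mod n) for every r. Then the closure in ℂ of the set {Σ_{r=0}^d c_r e^{itθ_r} : t ∈ [0, ∞)} is invariant under multiplication by e^{2πi/n}. -/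
open Real

lemma factor_expand (M : ℕ) (y : ℝ) :
    (((1 + Real.cos y)/2 : ℝ) : ℂ) ^ M
      = ∑ j ∈ Finset.range (2*M+1),
          ((Nat.choose (2*M) j : ℂ)/4^M) * Complex.exp ((((j:ℤ) - (M:ℤ) : ℤ) : ℂ) * ((y:ℂ) * Complex.I)) := by
  set u : ℂ := Complex.exp ((y:ℂ) * Complex.I) with hu
  have hu0 : u ≠ 0 := Complex.exp_ne_zero _
  have hcos : ((Real.cos y : ℝ) : ℂ) = (u + u⁻¹) / 2 := by
    rw [Complex.ofReal_cos, Complex.cos, ← Complex.exp_neg]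
    ring_nf
    rw [hu]; ring
  have hterm : ∀ j ∈ Finset.range (2*M+1),
      ((Nat.choose (2*M) j : ℂ)/4^M) * Complex.exp ((((j:ℤ) - (M:ℤ) : ℤ) : ℂ) * ((y:ℂ) * Complex.I))
        = (u ^ (M:ℤ))⁻¹ / 4^M * (u ^ j * (Nat.choose (2*M) j : ℂ)) := by
    intro j _
    rw [Complex.exp_int_mul, ← hu, zpow_sub₀ hu0]
    rw [zpow_natCast, zpow_natCast]
    field_simp
  rw [Finset.sum_congr rfl hterm, ← Finset.mul_sum]
  have hbin : ∑ j ∈ Finset.range (2*M+1), u ^ j * (Nat.choose (2*M) j : ℂ) = (u + 1) ^ (2*M) := by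
    rw [add_pow]
    simp
  rw [hbin]
  have hfac : (((1 + Real.cos y)/2 : ℝ) : ℂ) = u⁻¹ * (u + 1)^2 / 4 := by
    rw [Complex.ofReal_div, Complex.ofReal_add, Complex.ofReal_one, hcos]
    field_simp
    push_cast; ring
  rw [hfac]
  rw [div_pow, mul_pow, inv_pow, ← pow_mul, zpow_natCast]
  have h4 : ((4:ℂ))^M ≠ 0 := by norm_num
  field_simp


variable {k : ℕ} (M : ℕ) (w p : Fin k → ℝ)

/-- the Fejér-type test function -/
noncomputable def phi (s : ℝ) : ℝ := ∏ ℓ, ((1 + Real.cos (s * w ℓ - p ℓ))/2)^M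

noncomputable def alph (g : Fin k → ℕ) : ℝ := ∑ ℓ, (((g ℓ : ℤ) - (M:ℤ) : ℤ) : ℝ) * w ℓ
noncomputable def bet (g : Fin k → ℕ) : ℝ := ∑ ℓ, (((g ℓ : ℤ) - (M:ℤ) : ℤ) : ℝ) * p ℓ
noncomputable def coeff (g : Fin k → ℕ) : ℝ := ∏ ℓ, (Nat.choose (2*M) (g ℓ) : ℝ)/4^M

lemma phi_expand (s : ℝ) :
    ((phi M w p s : ℝ) : ℂ)
      = ∑ g ∈ Fintype.piFinset (fun _ : Fin k => Finset.range (2*M+1)),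
          (coeff M g : ℂ) * (Complex.exp (-(bet M p g : ℂ) * Complex.I)
            * Complex.exp ((Complex.I * (alph M w g : ℂ)) * (s : ℂ))) := by
  rw [phi, Complex.ofReal_prod]
  have h1 : ∀ ℓ : Fin k, (((( 1 + Real.cos (s * w ℓ - p ℓ))/2 : ℝ))^M : ℝ) =
      ((1 + Real.cos (s * w ℓ - p ℓ))/2 : ℝ)^M := fun _ => rfl
  calc (∏ ℓ, ((((1 + Real.cos (s * w ℓ - p ℓ))/2)^M : ℝ) : ℂ))
      = ∏ ℓ, ∑ j ∈ Finset.range (2*M+1),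
          ((Nat.choose (2*M) j : ℂ)/4^M) *
            Complex.exp ((((j:ℤ) - (M:ℤ) : ℤ) : ℂ) * (((s * w ℓ - p ℓ : ℝ):ℂ) * Complex.I)) := by
        refine Finset.prod_congr rfl fun ℓ _ => ?_
        rw [← factor_expand M (s * w ℓ - p ℓ), Complex.ofReal_pow]
    _ = ∑ g ∈ Fintype.piFinset (fun _ : Fin k => Finset.range (2*M+1)),
          ∏ ℓ, ((Nat.choose (2*M) (g ℓ) : ℂ)/4^M) *
            Complex.exp ((((g ℓ:ℤ) - (M:ℤ) : ℤ) : ℂ) * (((s * w ℓ - p ℓ : ℝ):ℂ) * Complex.I)) := by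
        rw [Finset.prod_univ_sum]
    _ = _ := by
        refine Finset.sum_congr rfl fun g _ => ?_
        rw [Finset.prod_mul_distrib, ← Complex.exp_sum]
        have hc : (∏ ℓ, ((Nat.choose (2*M) (g ℓ) : ℂ)/4^M)) = (coeff M g : ℂ) := by
          rw [coeff, Complex.ofReal_prod]; push_cast; rfl
        have he : (∑ ℓ, (((g ℓ:ℤ) - (M:ℤ) : ℤ) : ℂ) * (((s * w ℓ - p ℓ : ℝ):ℂ) * Complex.I))
            = -(bet M p g : ℂ) * Complex.I + (Complex.I * (alph M w g : ℂ)) * (s : ℂ) := by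
          rw [alph, bet, Complex.ofReal_sum, Complex.ofReal_sum]
          simp only [Finset.mul_sum, Finset.sum_mul, ← Finset.sum_neg_distrib]
          rw [← Finset.sum_add_distrib]
          refine Finset.sum_congr rfl fun ℓ _ => ?_
          push_cast
          ring
        rw [hc, he, Complex.exp_add]

lemma phi_nonneg (s : ℝ) : 0 ≤ phi M w p s := by
  refine Finset.prod_nonneg fun ℓ _ => pow_nonneg ?_ _
  nlinarith [Real.neg_one_le_cos (s * w ℓ - p ℓ)]

lemma phi_le_one (s : ℝ) : phi M w p s ≤ 1 := by
  refine Finset.prod_le_one (fun ℓ _ => pow_nonneg ?_ _) (fun ℓ _ => pow_le_one₀ ?_ ?_) <;>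
    nlinarith [Real.neg_one_le_cos (s * w ℓ - p ℓ), Real.cos_le_one (s * w ℓ - p ℓ)]

lemma phi_continuous : Continuous (phi M w p) := by
  unfold phi
  exact continuous_finset_prod _ fun ℓ _ => by fun_prop

lemma coeff_nonneg (g : Fin k → ℕ) : 0 ≤ coeff M g :=
  Finset.prod_nonneg fun ℓ _ => by positivity

lemma coeff_pos : 0 < coeff M (fun _ : Fin k => M) := by
  refine Finset.prod_pos fun ℓ _ => ?_
  have h := Nat.choose_pos (show M ≤ 2*M by omega)
  positivity

lemma alph_ne_zero (hw : LinearIndependent ℚ w) {g : Fin k → ℕ}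
    (hg : g ≠ fun _ => M) : alph M w g ≠ 0 := by
  intro h0
  apply hg
  funext ℓ
  have key := (Fintype.linearIndependent_iff.mp hw)
    (fun ℓ => (((g ℓ : ℤ) - (M:ℤ) : ℤ) : ℚ)) ?_ ℓ
  · have : ((g ℓ : ℤ) - (M:ℤ) : ℤ) = 0 := by exact_mod_cast key
    omega
  · rw [← h0, alph]
    refine Finset.sum_congr rfl fun ℓ _ => ?_
    rw [Rat.smul_def]
    push_cast
    ring

lemma integral_phi_lower (hw : LinearIndependent ℚ w) (T : ℝ) (hT : 0 ≤ T) :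
    coeff M (fun _ : Fin k => M) * T
      - ∑ g ∈ (Fintype.piFinset (fun _ : Fin k => Finset.range (2*M+1))).erase (fun _ => M),
          coeff M g * (2 / |alph M w g|)
      ≤ ∫ s in (0:ℝ)..T, phi M w p s := by
  set S := Fintype.piFinset (fun _ : Fin k => Finset.range (2*M+1)) with hS
  set g₀ : Fin k → ℕ := fun _ => M with hg₀
  have hg₀S : g₀ ∈ S := by
    simp [hS, Fintype.mem_piFinset, hg₀]
    omega
  have hterm_cont : ∀ g : Fin k → ℕ, Continuous (fun s : ℝ =>
      (coeff M g : ℂ) * (Complex.exp (-(bet M p g : ℂ) * Complex.I)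
        * Complex.exp ((Complex.I * (alph M w g : ℂ)) * (s : ℂ)))) := by
    intro g; fun_prop
  have hint : ((∫ s in (0:ℝ)..T, phi M w p s : ℝ) : ℂ)
      = ∑ g ∈ S, ∫ s in (0:ℝ)..T,
          (coeff M g : ℂ) * (Complex.exp (-(bet M p g : ℂ) * Complex.I)
            * Complex.exp ((Complex.I * (alph M w g : ℂ)) * (s : ℂ))) := by
    rw [← intervalIntegral.integral_ofReal]
    rw [show (fun s : ℝ => ((phi M w p s : ℝ) : ℂ)) = fun s : ℝ => ∑ g ∈ S,
        (coeff M g : ℂ) * (Complex.exp (-(bet M p g : ℂ) * Complex.I)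
          * Complex.exp ((Complex.I * (alph M w g : ℂ)) * (s : ℂ))) from
      funext fun s => phi_expand M w p s]
    exact intervalIntegral.integral_finset_sum fun g _ =>
      (hterm_cont g).intervalIntegrable _ _
  have hmain : (∫ s in (0:ℝ)..T,
      (coeff M g₀ : ℂ) * (Complex.exp (-(bet M p g₀ : ℂ) * Complex.I)
        * Complex.exp ((Complex.I * (alph M w g₀ : ℂ)) * (s : ℂ))))
      = (coeff M g₀ * T : ℝ) := by
    have ha : alph M w g₀ = 0 := by
      rw [alph]; simp [hg₀]
    have hb : bet M p g₀ = 0 := by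
      rw [bet]; simp [hg₀]
    simp [ha, hb, intervalIntegral.integral_const]
    push_cast; ring
  have hbound : ∀ g ∈ S.erase g₀, ‖∫ s in (0:ℝ)..T,
      (coeff M g : ℂ) * (Complex.exp (-(bet M p g : ℂ) * Complex.I)
        * Complex.exp ((Complex.I * (alph M w g : ℂ)) * (s : ℂ)))‖
      ≤ coeff M g * (2 / |alph M w g|) := by
    intro g hg
    have hgne : g ≠ g₀ := (Finset.mem_erase.mp hg).1
    have hα : alph M w g ≠ 0 := alph_ne_zero M w hw hgne
    have hαC : (Complex.I * (alph M w g : ℂ)) ≠ 0 := by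
      simp [Complex.I_ne_zero, Complex.ofReal_eq_zero, hα]
    rw [intervalIntegral.integral_const_mul, intervalIntegral.integral_const_mul,
      integral_exp_mul_complex hαC]
    rw [norm_mul, norm_mul]
    have h1 : ‖(coeff M g : ℂ)‖ = coeff M g := by
      rw [Complex.norm_real, Real.norm_of_nonneg (coeff_nonneg M g)]
    have h2 : ‖Complex.exp (-(bet M p g : ℂ) * Complex.I)‖ = 1 := by
      rw [show (-(bet M p g : ℂ) * Complex.I) = ((-(bet M p g) : ℝ) : ℂ) * Complex.I by push_cast; ring]
      exact Complex.norm_exp_ofReal_mul_I _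
    have h3 : ‖(Complex.exp (Complex.I * (alph M w g : ℂ) * T)
        - Complex.exp (Complex.I * (alph M w g : ℂ) * 0)) / (Complex.I * (alph M w g : ℂ))‖
        ≤ 2 / |alph M w g| := by
      rw [norm_div]
      have hd : ‖Complex.I * (alph M w g : ℂ)‖ = |alph M w g| := by
        rw [norm_mul, Complex.norm_I, one_mul, Complex.norm_real, Real.norm_eq_abs]
      rw [hd]
      have hn : ∀ t : ℝ, ‖Complex.exp (Complex.I * (alph M w g : ℂ) * t)‖ = 1 := by
        intro t
        rw [show Complex.I * (alph M w g : ℂ) * t = ((alph M w g * t : ℝ) : ℂ) * Complex.I by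
          push_cast; ring]
        exact Complex.norm_exp_ofReal_mul_I _
      gcongr
      calc ‖Complex.exp (Complex.I * (alph M w g : ℂ) * T)
            - Complex.exp (Complex.I * (alph M w g : ℂ) * 0)‖
          ≤ ‖Complex.exp (Complex.I * (alph M w g : ℂ) * T)‖
            + ‖Complex.exp (Complex.I * (alph M w g : ℂ) * 0)‖ := norm_sub_le _ _
        _ ≤ 2 := by
            have h0 : ‖Complex.exp (Complex.I * (alph M w g : ℂ) * 0)‖ = 1 := by
              norm_num
            rw [hn T, h0]; norm_num
    calc ‖(coeff M g : ℂ)‖ * (‖Complex.exp (-(bet M p g : ℂ) * Complex.I)‖ *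
          ‖(Complex.exp (Complex.I * (alph M w g : ℂ) * T)
            - Complex.exp (Complex.I * (alph M w g : ℂ) * 0)) / (Complex.I * (alph M w g : ℂ))‖)
        ≤ coeff M g * (1 * (2 / |alph M w g|)) := by
          rw [h1, h2]
          exact mul_le_mul_of_nonneg_left (by simpa using h3) (coeff_nonneg M g)
      _ = coeff M g * (2 / |alph M w g|) := by ring
  set R := ∑ g ∈ S.erase g₀, ∫ s in (0:ℝ)..T,
      (coeff M g : ℂ) * (Complex.exp (-(bet M p g : ℂ) * Complex.I)
        * Complex.exp ((Complex.I * (alph M w g : ℂ)) * (s : ℂ))) with hR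
  have hsum : ((∫ s in (0:ℝ)..T, phi M w p s : ℝ) : ℂ) = ((coeff M g₀ * T : ℝ) : ℂ) + R := by
    rw [hint, ← Finset.add_sum_erase S _ hg₀S, hmain]
  have hre : (∫ s in (0:ℝ)..T, phi M w p s) = coeff M g₀ * T + R.re := by
    have := congrArg Complex.re hsum
    simpa using this
  have hRnorm : ‖R‖ ≤ ∑ g ∈ S.erase g₀, coeff M g * (2 / |alph M w g|) :=
    norm_sum_le_of_le _ hbound
  have habs : |R.re| ≤ ‖R‖ := Complex.abs_re_le_norm R
  have := neg_abs_le R.re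
  rw [hre]
  simp only [hg₀]
  linarith

lemma exists_phi_ge (hw : LinearIndependent ℚ w) (T₀ : ℝ) (hT₀ : 0 ≤ T₀) :
    ∃ s, T₀ ≤ s ∧ coeff M (fun _ : Fin k => M) / 2 ≤ phi M w p s := by
  by_contra hcon
  push_neg at hcon
  set a := coeff M (fun _ : Fin k => M) with ha_def
  have ha : 0 < a := coeff_pos M
  set B := ∑ g ∈ (Fintype.piFinset (fun _ : Fin k => Finset.range (2*M+1))).erase (fun _ => M),
      coeff M g * (2 / |alph M w g|) with hB_def
  have hB : 0 ≤ B :=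
    Finset.sum_nonneg fun g _ => mul_nonneg (coeff_nonneg M g) (by positivity)
  set T := max T₀ (2*(T₀+B)/a + 1) with hT_def
  have hT₀T : T₀ ≤ T := le_max_left _ _
  have hT : 0 ≤ T := le_trans hT₀ hT₀T
  have hcont := phi_continuous M w p
  have hint1 : IntervalIntegrable (phi M w p) MeasureTheory.volume 0 T₀ :=
    hcont.intervalIntegrable _ _
  have hint2 : IntervalIntegrable (phi M w p) MeasureTheory.volume T₀ T :=
    hcont.intervalIntegrable _ _
  have hsplit : (∫ s in (0:ℝ)..T₀, phi M w p s) + (∫ s in T₀..T, phi M w p s)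
      = ∫ s in (0:ℝ)..T, phi M w p s :=
    intervalIntegral.integral_add_adjacent_intervals hint1 hint2
  have h2 : (∫ s in (0:ℝ)..T₀, phi M w p s) ≤ T₀ := by
    have := intervalIntegral.integral_mono_on hT₀ hint1
      ((continuous_const : Continuous fun _ : ℝ => (1:ℝ)).intervalIntegrable _ _)
      (fun x _ => phi_le_one M w p x)
    simpa using this
  have h3 : (∫ s in T₀..T, phi M w p s) ≤ (T - T₀) * a / 2 := by
    have := intervalIntegral.integral_mono_on hT₀T hint2
      ((continuous_const : Continuous fun _ : ℝ => (a/2:ℝ)).intervalIntegrable _ _)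
      (fun x hx => le_of_lt (hcon x hx.1))
    simpa [smul_eq_mul] using this
  have hlow := integral_phi_lower M w p hw T hT
  have hTbig : 2*(T₀+B)/a + 1 ≤ T := le_max_right _ _
  have hmul : a * (2*(T₀+B)/a + 1) ≤ a * T := mul_le_mul_of_nonneg_left hTbig ha.le
  rw [mul_add, mul_div_cancel₀ _ (ne_of_gt ha)] at hmul
  nlinarith [mul_nonneg hT₀ ha.le]

lemma exp_norm_sub_one (y : ℝ) :
    ‖Complex.exp ((y:ℂ) * Complex.I) - 1‖^2 = 2 - 2*Real.cos y := by
  rw [Complex.sq_norm, Complex.normSq_apply, Complex.sub_re,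
    Complex.sub_im, Complex.one_re, Complex.one_im, Complex.exp_ofReal_mul_I_re,
    Complex.exp_ofReal_mul_I_im]
  nlinarith [Real.sin_sq_add_cos_sq y]

set_option maxHeartbeats 1000000 in
lemma kronecker (hw : LinearIndependent ℚ w) (T₀ ε : ℝ) (hε : 0 < ε) :
    ∃ s, T₀ ≤ s ∧ ∀ ℓ, ‖Complex.exp (((s * w ℓ : ℝ) : ℂ) * Complex.I)
      - Complex.exp (((p ℓ : ℝ) : ℂ) * Complex.I)‖ < ε := by
  set ε' := min ε 1 with hε'def
  have hε'ε : ε' ≤ ε := min_le_left _ _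
  have hε' : 0 < ε' := lt_min hε one_pos
  have hε'1 : ε' ≤ 1 := min_le_right _ _
  set δ := ε'^2/4 with hδdef
  have hδ0 : 0 < δ := by positivity
  have hδ1 : δ ≤ 1/4 := by nlinarith
  have hr : |1 - δ| < 1 := by rw [abs_lt]; constructor <;> linarith
  have hlim := tendsto_pow_const_mul_const_pow_of_abs_lt_one k hr
  have hev : ∀ᶠ M : ℕ in Filter.atTop, (M:ℝ)^k * (1-δ)^M < 1/(2 * 3^k) :=
    hlim.eventually_lt_const (by positivity)
  obtain ⟨M, hM1, hMlt⟩ : ∃ M : ℕ, 1 ≤ M ∧ (M:ℝ)^k * (1-δ)^M < 1/(2 * 3^k) := by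
    obtain ⟨M, hM⟩ := (hev.and (Filter.eventually_ge_atTop 1)).exists
    exact ⟨M, hM.2, hM.1⟩
  have hM1R : (1:ℝ) ≤ (M:ℝ) := by exact_mod_cast hM1
  set a := coeff M (fun _ : Fin k => M) with ha_def
  have ha : 0 < a := coeff_pos M
  have haform : a = ((Nat.choose (2*M) M : ℝ)/4^M)^k := by
    rw [ha_def, coeff, Finset.prod_const, Finset.card_univ, Fintype.card_fin]
  have hchoose : (4:ℝ)^M ≤ (2*M+1) * (Nat.choose (2*M) M : ℝ) := by
    have h1 : (2:ℕ)^(2*M) ≤ (2*M+1) * Nat.choose (2*M) M := by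
      calc (2:ℕ)^(2*M) = ∑ j ∈ Finset.range (2*M+1), Nat.choose (2*M) j :=
            (Nat.sum_range_choose (2*M)).symm
        _ ≤ ∑ _j ∈ Finset.range (2*M+1), Nat.choose (2*M) M :=
            Finset.sum_le_sum fun j _ => by
              simpa [Nat.mul_div_cancel_left] using Nat.choose_le_middle j (2*M)
        _ = (2*M+1) * Nat.choose (2*M) M := by
            rw [Finset.sum_const, Finset.card_range]; ring
    calc (4:ℝ)^M = ((2:ℕ)^(2*M) : ℕ) := by push_cast; rw [pow_mul]; norm_num
      _ ≤ (((2*M+1) * Nat.choose (2*M) M : ℕ) : ℝ) := by exact_mod_cast h1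
      _ = (2*M+1) * (Nat.choose (2*M) M : ℝ) := by push_cast; ring
  have h2M1 : (0:ℝ) < 2*(M:ℝ)+1 := by linarith
  have hainv : ((2*(M:ℝ)+1))⁻¹^k ≤ a := by
    rw [haform]
    refine pow_le_pow_left₀ (by positivity) ?_ _
    rw [le_div_iff₀ (by positivity : (0:ℝ) < 4^M)]
    rw [inv_mul_le_iff₀ h2M1]
    calc (4:ℝ)^M ≤ (2*M+1) * (Nat.choose (2*M) M : ℝ) := hchoose
      _ = (2*(M:ℝ)+1) * (Nat.choose (2*M) M : ℝ) := by push_cast; ring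
  have h2 : ((2*(M:ℝ)+1))^k ≤ 3^k * (M:ℝ)^k := by
    rw [← mul_pow]
    refine pow_le_pow_left₀ (by positivity) (by nlinarith) _
  have h4 : (1-δ)^M * (2*(M:ℝ)+1)^k < 1/2 := by
    have hnn : (0:ℝ) ≤ (1-δ)^M := pow_nonneg (by linarith) _
    calc (1-δ)^M * (2*(M:ℝ)+1)^k ≤ (1-δ)^M * (3^k * (M:ℝ)^k) :=
          mul_le_mul_of_nonneg_left h2 hnn
      _ = 3^k * ((M:ℝ)^k * (1-δ)^M) := by ring
      _ < 3^k * (1/(2*3^k)) := mul_lt_mul_of_pos_left hMlt (by positivity)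
      _ = 1/2 := by field_simp
  have hkey : (1-δ)^M < a/2 := by
    have h7 : (1-δ)^M * (2*(M:ℝ)+1)^k * ((2*(M:ℝ)+1)⁻¹)^k
        < 1/2 * ((2*(M:ℝ)+1)⁻¹)^k := mul_lt_mul_of_pos_right h4 (by positivity)
    rw [mul_assoc, ← mul_pow, mul_inv_cancel₀ (ne_of_gt h2M1), one_pow, mul_one] at h7
    nlinarith [hainv]
  obtain ⟨s, hs, hphi⟩ := exists_phi_ge M w p hw (max T₀ 0) (le_max_right _ _)
  refine ⟨s, le_trans (le_max_left _ _) hs, fun ℓ => ?_⟩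
  have hfge : a/2 ≤ ((1 + Real.cos (s * w ℓ - p ℓ))/2)^M := by
    have heq : phi M w p s = ((1 + Real.cos (s * w ℓ - p ℓ))/2)^M *
        ∏ i ∈ Finset.univ.erase ℓ, ((1 + Real.cos (s * w i - p i))/2)^M := by
      rw [phi, ← Finset.mul_prod_erase Finset.univ _ (Finset.mem_univ ℓ)]
    have h1 : ∏ i ∈ Finset.univ.erase ℓ, ((1 + Real.cos (s * w i - p i))/2)^M ≤ 1 :=
      Finset.prod_le_one
        (fun i _ => pow_nonneg (by nlinarith [Real.neg_one_le_cos (s * w i - p i)]) _)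
        (fun i _ => pow_le_one₀ (by nlinarith [Real.neg_one_le_cos (s * w i - p i)])
          (by nlinarith [Real.cos_le_one (s * w i - p i)]))
    have h0 : (0:ℝ) ≤ ((1 + Real.cos (s * w ℓ - p ℓ))/2)^M :=
      pow_nonneg (by nlinarith [Real.neg_one_le_cos (s * w ℓ - p ℓ)]) _
    calc a/2 ≤ phi M w p s := hphi
      _ = _ * _ := heq
      _ ≤ ((1 + Real.cos (s * w ℓ - p ℓ))/2)^M * 1 :=
          mul_le_mul_of_nonneg_left h1 h0
      _ = _ := mul_one _
  have hfac : 1 - δ < (1 + Real.cos (s * w ℓ - p ℓ))/2 := by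
    by_contra hc
    push_neg at hc
    have : ((1 + Real.cos (s * w ℓ - p ℓ))/2)^M ≤ (1-δ)^M :=
      pow_le_pow_left₀ (by nlinarith [Real.neg_one_le_cos (s * w ℓ - p ℓ)]) hc M
    linarith
  have hcos2 : 2 - 2*Real.cos (s * w ℓ - p ℓ) < ε'^2 := by
    rw [hδdef] at hfac
    linarith
  have hsplit : Complex.exp (((s * w ℓ : ℝ) : ℂ) * Complex.I)
      - Complex.exp (((p ℓ : ℝ) : ℂ) * Complex.I)
      = Complex.exp (((p ℓ : ℝ) : ℂ) * Complex.I) *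
        (Complex.exp (((s * w ℓ - p ℓ : ℝ) : ℂ) * Complex.I) - 1) := by
    rw [mul_sub, ← Complex.exp_add, mul_one]
    push_cast
    ring_nf
  rw [hsplit, norm_mul]
  have hone : ‖Complex.exp (((p ℓ : ℝ) : ℂ) * Complex.I)‖ = 1 :=
    Complex.norm_exp_ofReal_mul_I _
  rw [hone, one_mul]
  have hsq := exp_norm_sub_one (s * w ℓ - p ℓ)
  have hn0 : (0:ℝ) ≤ ‖Complex.exp (((s * w ℓ - p ℓ : ℝ) : ℂ) * Complex.I) - 1‖ :=
    norm_nonneg _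
  by_contra hc
  push_neg at hc
  have : ε ^ 2 ≤ ‖Complex.exp (((s * w ℓ - p ℓ : ℝ) : ℂ) * Complex.I) - 1‖^2 :=
    pow_le_pow_left₀ hε.le hc 2
  nlinarith [hε'ε, hε'.le]

lemma zpow_sum_fin {x : ℂ} (hx : x ≠ 0) {n : ℕ} (a : Fin n → ℤ) :
    ∏ ℓ, x ^ a ℓ = x ^ (∑ ℓ, a ℓ) := by
  classical
  induction (Finset.univ : Finset (Fin n)) using Finset.induction with
  | empty => simp
  | insert a s hnotmem ih =>
      rw [Finset.prod_insert hnotmem, Finset.sum_insert hnotmem, zpow_add₀ hx, ih]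

set_option maxHeartbeats 1000000 in
/-- If `w_1,…,w_k` are rationally independent reals,
`θ_r = ∑_ℓ f^r_ℓ w_ℓ` with integer vectors `f^r`, and `∑_ℓ f^r_ℓ ≡ 1 (mod n)` for all
`r`, then the closure of `{∑_r c_r e^{itθ_r} : t ≥ 0}` in `ℂ` is invariant under
multiplication by `e^{2πi/n}`. -/
theorem exp_sum_curve_rotational_symmetry
    {k d : ℕ} (w : Fin k → ℝ) (hw : LinearIndependent ℚ w)
    (f : Fin (d + 1) → Fin k → ℤ)
    (θ : Fin (d + 1) → ℝ) (hθ : ∀ r, θ r = ∑ ℓ, (f r ℓ : ℝ) * w ℓ)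
    (c : Fin (d + 1) → ℂ) (N : ℕ) (hN : 1 ≤ N)
    (hf : ∀ r, (∑ ℓ, f r ℓ) ≡ 1 [ZMOD (N : ℤ)]) :
    (fun z : ℂ => Complex.exp (2 * π * Complex.I / N) * z) '' closure
        {z : ℂ | ∃ t : ℝ, 0 ≤ t ∧
          z = ∑ r, c r * Complex.exp (Complex.I * (t : ℂ) * (θ r : ℂ))} =
      closure
        {z : ℂ | ∃ t : ℝ, 0 ≤ t ∧
          z = ∑ r, c r * Complex.exp (Complex.I * (t : ℂ) * (θ r : ℂ))} := by
  set S := {z : ℂ | ∃ t : ℝ, 0 ≤ t ∧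
      z = ∑ r, c r * Complex.exp (Complex.I * (t : ℂ) * (θ r : ℂ))} with hS
  set ζ : ℂ := Complex.exp (2 * π * Complex.I / N) with hζ
  have hN0 : (N:ℂ) ≠ 0 := Nat.cast_ne_zero.mpr (by omega)
  have hζexp : ζ = Complex.exp (((2*π/N : ℝ) : ℂ) * Complex.I) := by
    rw [hζ]
    congr 1
    push_cast
    field_simp
  have hζ0 : ζ ≠ 0 := Complex.exp_ne_zero _
  have hζN : ζ ^ (N:ℤ) = 1 := by
    rw [hζexp, ← Complex.exp_int_mul]
    rw [show ((N:ℤ):ℂ) * (((2*π/N : ℝ) : ℂ) * Complex.I) = 2*(π:ℂ)*Complex.I by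
      push_cast; field_simp]
    exact Complex.exp_two_pi_mul_I
  -- the exponential as a product over coordinates
  have hF : ∀ (σ : ℝ) (r : Fin (d+1)),
      Complex.exp (Complex.I * (σ:ℂ) * ((θ r : ℝ):ℂ))
        = ∏ ℓ, (Complex.exp (((σ * w ℓ : ℝ):ℂ) * Complex.I))^(f r ℓ) := by
    intro σ r
    rw [hθ r]
    have heq : Complex.I * (σ:ℂ) * (((∑ ℓ, (f r ℓ : ℝ) * w ℓ : ℝ)):ℂ)
        = ∑ ℓ, ((f r ℓ : ℤ):ℂ) * (((σ * w ℓ : ℝ):ℂ) * Complex.I) := by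
      push_cast
      rw [Finset.mul_sum]
      refine Finset.sum_congr rfl fun ℓ _ => by ring
    rw [heq, Complex.exp_sum]
    exact Finset.prod_congr rfl fun ℓ _ => Complex.exp_int_mul _ _
  -- the rotated value as a product over coordinates
  have hGv : ∀ (t : ℝ) (r : Fin (d+1)),
      ∏ ℓ, (Complex.exp (((t * w ℓ + 2*π/N : ℝ):ℂ) * Complex.I))^(f r ℓ)
        = ζ * Complex.exp (Complex.I * (t:ℂ) * ((θ r : ℝ):ℂ)) := by
    intro t r
    have hsplit : ∀ ℓ, Complex.exp (((t * w ℓ + 2*π/N : ℝ):ℂ) * Complex.I)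
        = Complex.exp (((t * w ℓ : ℝ):ℂ) * Complex.I) * ζ := by
      intro ℓ
      rw [hζexp, ← Complex.exp_add]
      congr 1
      push_cast
      ring
    calc ∏ ℓ, (Complex.exp (((t * w ℓ + 2*π/N : ℝ):ℂ) * Complex.I))^(f r ℓ)
        = ∏ ℓ, (Complex.exp (((t * w ℓ : ℝ):ℂ) * Complex.I))^(f r ℓ) * ζ^(f r ℓ) := by
          refine Finset.prod_congr rfl fun ℓ _ => ?_
          rw [hsplit ℓ, mul_zpow]
      _ = (∏ ℓ, (Complex.exp (((t * w ℓ : ℝ):ℂ) * Complex.I))^(f r ℓ)) * ∏ ℓ, ζ^(f r ℓ) :=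
          Finset.prod_mul_distrib
      _ = Complex.exp (Complex.I * (t:ℂ) * ((θ r : ℝ):ℂ)) * ζ^(∑ ℓ, f r ℓ) := by
          rw [← hF t r, zpow_sum_fin hζ0]
      _ = ζ * Complex.exp (Complex.I * (t:ℂ) * ((θ r : ℝ):ℂ)) := by
          have hdvd : (N:ℤ) ∣ (∑ ℓ, f r ℓ) - 1 := (hf r).symm.dvd
          obtain ⟨q, hq⟩ := hdvd
          have : (∑ ℓ, f r ℓ) = 1 + (N:ℤ) * q := by linarith
          rw [this, zpow_add₀ hζ0, zpow_one, zpow_mul, hζN, one_zpow, mul_one, mul_comm]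
  -- step A : ζ • S ⊆ closure S
  have hstep : ∀ z ∈ S, ζ * z ∈ closure S := by
    rintro z ⟨t, ht, rfl⟩
    have hsn : ∀ n : ℕ, ∃ s : ℝ, 0 ≤ s ∧ ∀ ℓ,
        ‖Complex.exp (((s * w ℓ : ℝ):ℂ) * Complex.I)
          - Complex.exp (((t * w ℓ + 2*π/N : ℝ):ℂ) * Complex.I)‖ < 1/(n+1) :=
      fun n => kronecker w (fun ℓ => t * w ℓ + 2*π/N) hw 0 (1/(n+1)) (by positivity)
    choose s hs0 hsc using hsn
    have hmem : ∀ n : ℕ, (∑ r, c r * Complex.exp (Complex.I * ((s n : ℝ):ℂ) * ((θ r : ℝ):ℂ))) ∈ S :=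
      fun n => ⟨s n, hs0 n, rfl⟩
    refine mem_closure_of_tendsto (b := (Filter.atTop : Filter ℕ))
      (f := fun n : ℕ => ∑ r, c r * Complex.exp (Complex.I * ((s n : ℝ):ℂ) * ((θ r : ℝ):ℂ)))
      ?_ (Filter.Eventually.of_forall hmem)
    -- coordinatewise convergence
    have hcoord : ∀ ℓ, Filter.Tendsto (fun n => Complex.exp (((s n * w ℓ : ℝ):ℂ) * Complex.I))
        Filter.atTop (nhds (Complex.exp (((t * w ℓ + 2*π/N : ℝ):ℂ) * Complex.I))) := by
      intro ℓ
      rw [tendsto_iff_norm_sub_tendsto_zero]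
      refine squeeze_zero (fun n => norm_nonneg _) (fun n => (hsc n ℓ).le) ?_
      exact tendsto_one_div_add_atTop_nhds_zero_nat
    have htendterm : ∀ r : Fin (d+1), Filter.Tendsto
        (fun n => Complex.exp (Complex.I * ((s n : ℝ):ℂ) * ((θ r : ℝ):ℂ)))
        Filter.atTop (nhds (ζ * Complex.exp (Complex.I * (t:ℂ) * ((θ r : ℝ):ℂ)))) := by
      intro r
      rw [← hGv t r]
      have : (fun n => Complex.exp (Complex.I * ((s n : ℝ):ℂ) * ((θ r : ℝ):ℂ)))
          = fun n => ∏ ℓ, (Complex.exp (((s n * w ℓ : ℝ):ℂ) * Complex.I))^(f r ℓ) :=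
        funext fun n => hF (s n) r
      rw [this]
      refine tendsto_finset_prod _ fun ℓ _ => ?_
      have hcont := continuousAt_zpow₀
        (Complex.exp (((t * w ℓ + 2*π/N : ℝ):ℂ) * Complex.I)) (f r ℓ)
        (Or.inl (Complex.exp_ne_zero _))
      exact hcont.tendsto.comp (hcoord ℓ)
    have := tendsto_finset_sum (Finset.univ : Finset (Fin (d+1)))
      (fun r _ => ((htendterm r).const_mul (c r)))
    convert this using 2
    rw [Finset.mul_sum]
    refine Finset.sum_congr rfl fun r _ => by ring
  have hA : (fun z : ℂ => ζ * z) '' closure S ⊆ closure S := by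
    refine subset_trans (image_closure_subset_closure_image (by continuity)) ?_
    refine closure_minimal ?_ isClosed_closure
    rintro x ⟨z, hz, rfl⟩
    exact hstep z hz
  -- iterate
  have hiter : ∀ (j : ℕ), ∀ z ∈ closure S, ζ^j * z ∈ closure S := by
    intro j
    induction j with
    | zero => intro z hz; simpa using hz
    | succ j ih =>
        intro z hz
        have := hA ⟨ζ^j * z, ih z hz, rfl⟩
        simpa [pow_succ, mul_assoc, mul_comm, mul_left_comm] using this
  refine subset_antisymm hA ?_
  intro z hz
  refine ⟨ζ^(N-1) * z, hiter (N-1) z hz, ?_⟩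
  have hζNn : ζ ^ N = 1 := by
    have := hζN
    rwa [zpow_natCast] at this
  show ζ * (ζ^(N-1) * z) = z
  rw [← mul_assoc, ← pow_succ']
  rw [show N - 1 + 1 = N by omega, hζNn, one_mul]
end

section
/- Let w_1, …, w_k be real numbers that are linearly independent over ℚ, let f^0, …, f^d ∈ ℤ^k be integer vectors, and set θ_r = Σ_{ℓ=1}^k f^r_ℓ w_ℓ for r = 0, …, d. Then the closure in (S¹)^{d+1} of the curve {(e^{itθ_0}, …, e^{itθ_d}) : t ∈ [0, ∞)} equals the set {(e^{i⟨f^0, z⟩}, …, e^{i⟨f^d, z⟩}) : z ∈ ℝ^k}, where ⟨f^r, z⟩ = Σ_{ℓ=1}^k f^r_ℓ z_ℓ and S¹ is the unit circle in ℂ. -/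
open Submodule Set Module Filter

variable {E : Type*} [NormedAddCommGroup E] [NormedSpace ℝ E] [FiniteDimensional ℝ E]

/-- If `S` is a closed proper additive subgroup of a finite-dimensional real normed space,
then there is a nonzero linear functional taking integer values on `S`. -/
theorem exists_int_functional (S : AddSubgroup E) (hcl : IsClosed (S : Set E))
    (hne : (S : Set E) ≠ univ) :
    ∃ φ : E →ₗ[ℝ] ℝ, φ ≠ 0 ∧ ∀ s ∈ S, ∃ n : ℤ, φ s = n := by
  classical
  -- the largest linear subspace contained in S
  set V : Submodule ℝ E :=
    { carrier := {x | ∀ t : ℝ, t • x ∈ S}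
      add_mem' := fun {a b} ha hb t => by
        simpa [smul_add] using S.add_mem (ha t) (hb t)
      zero_mem' := fun t => by simpa using S.zero_mem
      smul_mem' := fun c x hx t => by
        simpa [smul_smul] using hx (t * c) } with hVdef
  have hVS : (V : Set E) ⊆ S := fun x hx => by simpa using hx 1
  have hV : V ≠ ⊤ := by
    intro h
    apply hne
    ext x
    simp only [mem_univ, iff_true]
    exact hVS (by rw [h]; trivial)
  obtain ⟨V', hcompl⟩ := Submodule.exists_isCompl V
  -- the projection onto V' along V
  set P : E →ₗ[ℝ] V' := V'.linearProjOfIsCompl V hcompl.symm with hPdef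
  have hsub : ∀ x : E, x - (P x : E) ∈ V := by
    intro x
    have h := Submodule.projection_add_projection_eq_self hcompl.symm x
    have h2 : x - (P x : E) = (V.linearProjOfIsCompl V' hcompl.symm.symm x : E) :=
      sub_eq_of_eq_add' h.symm
    rw [h2]
    exact (V.linearProjOfIsCompl V' hcompl.symm.symm x).2
  -- D = S ∩ V' as a ℤ-submodule
  set D : Submodule ℤ E := AddSubgroup.toIntSubmodule (S ⊓ V'.toAddSubgroup) with hDdef
  have hDS : (D : Set E) ⊆ S := fun x hx => hx.1
  have hDV' : (D : Set E) ⊆ V' := fun x hx => hx.2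
  have hPS : ∀ s ∈ S, (P s : E) ∈ D := by
    intro s hs
    refine ⟨?_, (P s).2⟩
    have h1 : s - (P s : E) ∈ S := hVS (hsub s)
    simpa using S.sub_mem hs h1
  -- D is discrete
  have hsep : ∃ ε : ℝ, 0 < ε ∧ ∀ x ∈ D, ‖x‖ < ε → x = 0 := by
    by_contra hc
    push_neg at hc
    choose d hd1 hd2 hd3 using fun n : ℕ => hc (1 / (n + 1)) (by positivity)
    set u : ℕ → E := fun n => ‖d n‖⁻¹ • d n with hudef
    have hdnorm : ∀ n, ‖d n‖ ≠ 0 := fun n => norm_ne_zero_iff.mpr (hd3 n)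
    have hu : ∀ n, u n ∈ Metric.sphere (0 : E) 1 := by
      intro n
      simp [hudef, norm_smul, abs_of_nonneg (norm_nonneg (d n)),
        inv_mul_cancel₀ (hdnorm n)]
    obtain ⟨u₀, hu₀s, φ, hφmono, hφlim⟩ := (isCompact_sphere (0 : E) 1).tendsto_subseq hu
    have hnorm0 : Tendsto (fun n => ‖d (φ n)‖) atTop (nhds 0) := by
      refine tendsto_of_tendsto_of_tendsto_of_le_of_le (g := fun _ => (0:ℝ))
        (h := fun n : ℕ => 1 / (n + 1)) tendsto_const_nhds
        tendsto_one_div_add_atTop_nhds_zero_nat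
        (fun n => norm_nonneg _) (fun n => ?_)
      refine le_trans (hd2 (φ n)).le (one_div_le_one_div_of_le (by positivity) ?_)
      have : n ≤ φ n := hφmono.le_apply
      exact_mod_cast Nat.succ_le_succ this
    -- every multiple of u₀ lies in S
    have hu₀V : u₀ ∈ V := by
      intro t
      have hmem : ∀ n, (⌊t / ‖d (φ n)‖⌋ : ℤ) • d (φ n) ∈ S :=
        fun n => S.zsmul_mem (hDS (hd1 (φ n))) _
      have heq : ∀ n, (⌊t / ‖d (φ n)‖⌋ : ℤ) • d (φ n)
          = ((⌊t / ‖d (φ n)‖⌋ : ℝ) * ‖d (φ n)‖) • u (φ n) := by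
        intro n
        rw [hudef]
        rw [smul_smul, ← Int.cast_smul_eq_zsmul ℝ]
        congr 1
        rw [mul_assoc, mul_inv_cancel₀ (hdnorm (φ n)), mul_one]
      have hscal : Tendsto (fun n => (⌊t / ‖d (φ n)‖⌋ : ℝ) * ‖d (φ n)‖) atTop (nhds t) := by
        refine tendsto_of_tendsto_of_tendsto_of_le_of_le
          (g := fun n => t - ‖d (φ n)‖) (h := fun _ => t) ?_ tendsto_const_nhds ?_ ?_
        · simpa using tendsto_const_nhds.sub hnorm0
        · intro n
          have h0 : (0:ℝ) < ‖d (φ n)‖ := lt_of_le_of_ne (norm_nonneg _) (Ne.symm (hdnorm (φ n)))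
          have := Int.sub_one_lt_floor (t / ‖d (φ n)‖)
          nlinarith [Int.sub_one_lt_floor (t / ‖d (φ n)‖), (div_le_iff₀ h0).mp (le_refl (t / ‖d (φ n)‖))]
        · intro n
          have h0 : (0:ℝ) < ‖d (φ n)‖ := lt_of_le_of_ne (norm_nonneg _) (Ne.symm (hdnorm (φ n)))
          have := Int.floor_le (t / ‖d (φ n)‖)
          calc (⌊t / ‖d (φ n)‖⌋ : ℝ) * ‖d (φ n)‖ ≤ (t / ‖d (φ n)‖) * ‖d (φ n)‖ := by gcongr
            _ = t := by field_simp
      have htend : Tendsto (fun n => (⌊t / ‖d (φ n)‖⌋ : ℤ) • d (φ n)) atTop (nhds (t • u₀)) := by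
        simp_rw [heq]
        exact hscal.smul hφlim
      exact hcl.mem_of_tendsto htend (Filter.Eventually.of_forall hmem)
    have hu₀V' : u₀ ∈ V' := by
      have hclV' : IsClosed (V' : Set E) := V'.closed_of_finiteDimensional
      refine hclV'.mem_of_tendsto hφlim (Filter.Eventually.of_forall fun n => ?_)
      exact V'.smul_mem _ (hDV' (hd1 (φ n)))
    have : u₀ = 0 := by
      have := hcompl.inf_eq_bot
      have hmem : u₀ ∈ V ⊓ V' := ⟨hu₀V, hu₀V'⟩
      rw [this] at hmem
      simpa using hmem
    rw [this] at hu₀s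
    simp at hu₀s
  obtain ⟨ε, hε, hεsep⟩ := hsep
  have hdisc : DiscreteTopology D := by
    apply discreteTopology_of_isOpen_singleton_zero
    have hset : ({0} : Set D) = (Subtype.val) ⁻¹' (Metric.ball (0 : E) ε) := by
      ext x
      simp only [mem_singleton_iff, mem_preimage, Metric.mem_ball, dist_zero_right]
      constructor
      · rintro rfl; simpa using hε
      · intro hx
        exact Subtype.ext (hεsep x x.2 hx)
    rw [hset]
    exact continuous_subtype_val.isOpen_preimage _ Metric.isOpen_ball
  -- the real span of D
  set W : Submodule ℝ E := span ℝ (D : Set E) with hWdef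
  have hWV' : W ≤ V' := span_le.mpr hDV'
  by_cases hVW : V ⊔ W = ⊤
  · -- D is a full lattice in W; take a dual basis coordinate
    have hcomplVW : IsCompl V W := by
      constructor
      · rw [disjoint_iff]
        exact le_antisymm (le_trans (inf_le_inf_left V hWV') hcompl.disjoint.le_bot) bot_le
      · rw [codisjoint_iff]; exact hVW
    set g : W →ₗ[ℝ] E := W.subtype with hgdef
    set D₀ : Submodule ℤ W := D.comap (g.restrictScalars ℤ) with hD₀def
    have h_img : g '' (D₀ : Set W) = (D : Set E) := by
      rw [← LinearMap.coe_restrictScalars ℤ g, ← Submodule.map_coe (g.restrictScalars ℤ),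
        Submodule.map_comap_eq_self]
      intro x hx
      exact LinearMap.mem_range.mpr ⟨⟨x, Submodule.subset_span hx⟩, rfl⟩
    have hD₀disc : DiscreteTopology D₀ := by
      refine DiscreteTopology.preimage_of_continuous_injective (D : Set E) ?_ (injective_subtype _)
      exact LinearMap.continuous_of_finiteDimensional g
    have hD₀lat : IsZLattice ℝ D₀ := ⟨by
      rw [← (Submodule.map_injective_of_injective (injective_subtype W)).eq_iff,
        Submodule.map_span, Submodule.map_top, range_subtype]
      rw [show W.subtype '' (D₀ : Set W) = (D : Set E) from h_img]⟩
    have hfin : Module.Finite ℤ D₀ := ZLattice.module_finite ℝ D₀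
    have hfree : Module.Free ℤ D₀ := ZLattice.module_free ℝ D₀
    set b₀ := Module.Free.chooseBasis ℤ D₀ with hb₀def
    set c : Basis (Module.Free.ChooseBasisIndex ℤ D₀) ℝ W := b₀.ofZLatticeBasis ℝ D₀ with hcdef
    have hWne : W ≠ ⊥ := by
      intro h
      rw [h, sup_bot_eq] at hVW
      exact hV hVW
    have : Nontrivial W := Submodule.nontrivial_iff_ne_bot.mpr hWne
    obtain ⟨i₀⟩ := c.index_nonempty
    set PW : E →ₗ[ℝ] W := W.linearProjOfIsCompl V hcomplVW.symm with hPWdef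
    refine ⟨(c.coord i₀).comp PW, ?_, ?_⟩
    · intro h
      have h1 : ((c.coord i₀).comp PW) (c i₀ : E) = 1 := by
        have h2 : PW ((c i₀ : W) : E) = c i₀ :=
          Submodule.linearProjOfIsCompl_apply_left hcomplVW.symm (c i₀)
        simp [LinearMap.comp_apply, h2]
      rw [h] at h1
      simp at h1
    · intro s hs
      have hPsD : (P s : E) ∈ D := hPS s hs
      have hPsW : (P s : E) ∈ W := Submodule.subset_span hPsD
      have hproj : PW s = ⟨(P s : E), hPsW⟩ := by
        have h1 : PW (s - (P s : E)) = 0 :=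
          Submodule.projectionOnto_apply_of_mem_right hcomplVW.symm (hsub s)
        have h2 : PW ((⟨(P s : E), hPsW⟩ : W) : E) = ⟨(P s : E), hPsW⟩ :=
          Submodule.linearProjOfIsCompl_apply_left hcomplVW.symm _
        have h3 : PW s = PW (s - (P s : E)) + PW ((P s : E)) := by
          rw [← map_add]; congr 1; abel
        rw [h3, h1, zero_add]
        exact h2
      set d₀ : D₀ := ⟨⟨(P s : E), hPsW⟩, by
        simpa [hD₀def, Submodule.mem_comap, hgdef] using hPsD⟩ with hd₀def
      refine ⟨b₀.repr d₀ i₀, ?_⟩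
      have h4 : ((c.coord i₀).comp PW) s = c.repr (⟨(P s : E), hPsW⟩ : W) i₀ := by
        simp [LinearMap.comp_apply, hproj, Basis.coord_apply]
      rw [h4]
      have := b₀.ofZLatticeBasis_repr_apply ℝ D₀ d₀ i₀
      rw [← hcdef] at this
      exact_mod_cast this
  · -- V ⊔ W is a proper subspace: kill it with a functional
    obtain ⟨φ, hφne, hφbot⟩ :=
      Submodule.exists_dual_map_eq_bot_of_lt_top (lt_top_iff_ne_top.mpr hVW)
        inferInstance
    refine ⟨φ, hφne, fun s hs => ⟨0, ?_⟩⟩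
    have h1 : φ (s - (P s : E)) = 0 := by
      have : φ (s - (P s : E)) ∈ Submodule.map φ (V ⊔ W) :=
        Submodule.mem_map_of_mem (le_sup_left (a := V) (b := W) (hsub s))
      rw [hφbot] at this
      simpa using this
    have h2 : φ ((P s : E)) = 0 := by
      have : φ ((P s : E)) ∈ Submodule.map φ (V ⊔ W) :=
        Submodule.mem_map_of_mem (le_sup_right (a := V) (b := W)
          (Submodule.subset_span (hPS s hs)))
      rw [hφbot] at this
      simpa using this
    have : φ s = φ (s - (P s : E)) + φ ((P s : E)) := by rw [← map_add]; congr 1; abel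
    rw [this, h1, h2]
    simp

theorem kronecker_dense {k : ℕ} (w : Fin k → ℝ) (hw : LinearIndependent ℚ w) :
    Dense {x : Fin k → ℝ | ∃ (t : ℝ) (m : Fin k → ℤ),
      x = t • w + fun ℓ => 2 * Real.pi * (m ℓ : ℝ)} := by
  classical
  set G : AddSubgroup (Fin k → ℝ) :=
    { carrier := {x : Fin k → ℝ | ∃ (t : ℝ) (m : Fin k → ℤ),
        x = t • w + fun ℓ => 2 * Real.pi * (m ℓ : ℝ)}
      zero_mem' := ⟨0, 0, by funext j; simp⟩
      add_mem' := by
        rintro a b ⟨t₁, m₁, rfl⟩ ⟨t₂, m₂, rfl⟩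
        refine ⟨t₁ + t₂, m₁ + m₂, ?_⟩
        funext j
        simp [add_smul, mul_add]
        ring
      neg_mem' := by
        rintro a ⟨t, m, rfl⟩
        refine ⟨-t, -m, ?_⟩
        funext j
        simp
        ring } with hGdef
  by_contra hnd
  set S := G.topologicalClosure with hSdef
  have hScl : IsClosed (S : Set (Fin k → ℝ)) := isClosed_closure
  have hSne : (S : Set (Fin k → ℝ)) ≠ univ := by
    intro h
    apply hnd
    have : Dense (closure (G : Set (Fin k → ℝ))) := by
      rw [show closure (G : Set (Fin k → ℝ)) = (S : Set (Fin k → ℝ)) from rfl, h]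
      exact dense_univ
    exact this.of_closure
  obtain ⟨φ, hφ0, hφint⟩ := exists_int_functional S hScl hSne
  have hGS : (G : Set (Fin k → ℝ)) ⊆ S := G.le_topologicalClosure
  -- φ w = 0
  have hlineφ : ∀ t : ℝ, ∃ n : ℤ, t * φ w = (n : ℝ) := by
    intro t
    obtain ⟨n, hn⟩ := hφint (t • w) (hGS ⟨t, 0, by funext j; simp⟩)
    exact ⟨n, by rw [← hn, map_smul, smul_eq_mul]⟩
  have hφw : φ w = 0 := by
    by_contra h
    obtain ⟨n, hn⟩ := hlineφ (1 / (2 * φ w))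
    rw [div_mul_eq_mul_div, one_mul, div_eq_iff (mul_ne_zero two_ne_zero h)] at hn
    have h2 : (1 - 2 * (n:ℝ)) * φ w = 0 := by linarith [hn]
    rcases mul_eq_zero.mp h2 with h3 | h3
    · have h4 : (2 * (n:ℝ)) = 1 := by linarith
      have h5 : (2 * n : ℤ) = 1 := by exact_mod_cast h4
      omega
    · exact h h3
  -- lattice generators
  have hc : ∀ ℓ : Fin k, ∃ n : ℤ,
      φ (fun j => 2 * Real.pi * ((Pi.single ℓ 1 : Fin k → ℤ) j : ℝ)) = n :=
    fun ℓ => hφint _ (hGS ⟨0, Pi.single ℓ 1, by funext j; simp⟩)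
  choose c hcspec using hc
  have hgel : ∀ ℓ, (fun j => 2 * Real.pi * ((Pi.single ℓ 1 : Fin k → ℤ) j : ℝ))
      = (2 * Real.pi) • (Pi.single ℓ 1 : Fin k → ℝ) := by
    intro ℓ
    funext j
    by_cases h : j = ℓ
    · subst h; simp
    · simp [Pi.single_apply, h]
  have hπ : (2 * Real.pi) ≠ 0 := by positivity
  have hφsingle : ∀ ℓ, φ (Pi.single ℓ (1:ℝ)) = c ℓ / (2 * Real.pi) := by
    intro ℓ
    have h1 := hcspec ℓ
    rw [hgel ℓ, map_smul, smul_eq_mul] at h1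
    field_simp
    linarith [h1]
  have hdecomp : ∀ x : Fin k → ℝ, x = ∑ ℓ, x ℓ • (Pi.single ℓ 1 : Fin k → ℝ) := by
    intro x
    funext j
    rw [Finset.sum_apply]
    simp [Pi.single_apply]
  have hwdecomp : φ w = ∑ ℓ, w ℓ * (c ℓ / (2 * Real.pi)) := by
    conv_lhs => rw [hdecomp w]
    rw [map_sum]
    congr 1
    funext ℓ
    rw [map_smul, smul_eq_mul, hφsingle]
  -- some c ℓ ≠ 0
  have hcne : ∃ ℓ, c ℓ ≠ 0 := by
    by_contra h
    push_neg at h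
    apply hφ0
    apply LinearMap.ext
    intro x
    conv_lhs => rw [hdecomp x]
    rw [map_sum]
    simp [hφsingle, h]
  -- the integer relation
  have hrel : ∑ ℓ, (c ℓ : ℝ) * w ℓ = 0 := by
    have h1 : ∑ ℓ, w ℓ * (c ℓ / (2 * Real.pi)) = 0 := by rw [← hwdecomp, hφw]
    have h2 : ∑ ℓ, (c ℓ : ℝ) * w ℓ = (2 * Real.pi) * ∑ ℓ, w ℓ * (c ℓ / (2 * Real.pi)) := by
      rw [Finset.mul_sum]
      refine Finset.sum_congr rfl fun ℓ _ => ?_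
      field_simp
    rw [h2, h1, mul_zero]
  have := Fintype.linearIndependent_iff.mp hw (fun ℓ => (c ℓ : ℚ)) ?_
  · obtain ⟨ℓ, hℓ⟩ := hcne
    exact hℓ (by exact_mod_cast this ℓ)
  · have heq : ∑ ℓ, ((c ℓ : ℚ)) • w ℓ = ∑ ℓ, (c ℓ : ℝ) * w ℓ := by
      refine Finset.sum_congr rfl fun ℓ _ => ?_
      rw [Rat.smul_def]
      push_cast
      ring
    rw [heq, hrel]

/-- Recurrence: the line returns near the lattice at arbitrarily large times. -/
theorem recurrence {k : ℕ} (w : Fin k → ℝ) {ε : ℝ} (hε : 0 < ε) (T : ℝ) :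
    ∃ (t : ℝ) (m : Fin k → ℤ), T ≤ t ∧ ∀ ℓ, |t * w ℓ - 2 * Real.pi * m ℓ| < ε := by
  classical
  have hπ : (0:ℝ) < 2 * Real.pi := by positivity
  obtain ⟨j, hj⟩ := exists_nat_ge T
  set q : ℕ := j + 1 with hqdef
  have hq1 : (1:ℝ) ≤ q := by exact_mod_cast Nat.one_le_iff_ne_zero.mpr (by omega)
  have hqT : T ≤ q := le_trans hj (by exact_mod_cast Nat.le_succ j)
  obtain ⟨N, hN⟩ := exists_nat_gt ((q : ℝ) * (2 * Real.pi) / ε)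
  have hN0 : 0 < N := by
    by_contra h
    push_neg at h
    interval_cases N
    have : (0:ℝ) < (q : ℝ) * (2 * Real.pi) / ε := by positivity
    simp at hN
    linarith
  have hNR : (0:ℝ) < N := by exact_mod_cast hN0
  -- pigeonhole on the fractional parts
  set F : ℕ → (Fin k → Fin N) := fun n ℓ =>
    ⟨(⌊(N : ℝ) * Int.fract ((n : ℝ) * (w ℓ / (2 * Real.pi)))⌋).toNat, by
      have h0 : (0:ℝ) ≤ (N : ℝ) * Int.fract ((n : ℝ) * (w ℓ / (2 * Real.pi))) :=
        mul_nonneg hNR.le (Int.fract_nonneg _)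
      have h1 : (N : ℝ) * Int.fract ((n : ℝ) * (w ℓ / (2 * Real.pi))) < N := by
        nlinarith [Int.fract_lt_one ((n : ℝ) * (w ℓ / (2 * Real.pi)))]
      have h2 : ⌊(N : ℝ) * Int.fract ((n : ℝ) * (w ℓ / (2 * Real.pi)))⌋ < (N : ℤ) := by
        exact_mod_cast Int.floor_lt.mpr (by exact_mod_cast h1)
      have h3 : (0:ℤ) ≤ ⌊(N : ℝ) * Int.fract ((n : ℝ) * (w ℓ / (2 * Real.pi)))⌋ :=
        Int.floor_nonneg.mpr h0
      omega⟩ with hFdef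
  obtain ⟨a, b, hab, habeq⟩ := Finite.exists_ne_map_eq_of_infinite F
  -- wlog a < b
  wlog hlt : a < b generalizing a b
  · exact this b a hab.symm habeq.symm (by omega)
  -- the step
  have hfloor : ∀ ℓ, ⌊(N : ℝ) * Int.fract ((a : ℝ) * (w ℓ / (2 * Real.pi)))⌋
      = ⌊(N : ℝ) * Int.fract ((b : ℝ) * (w ℓ / (2 * Real.pi)))⌋ := by
    intro ℓ
    have h1 := congrFun habeq ℓ
    rw [hFdef] at h1
    have h2 := congrArg (Fin.val) h1
    simp only at h2
    have h3 : (0:ℤ) ≤ ⌊(N : ℝ) * Int.fract ((a : ℝ) * (w ℓ / (2 * Real.pi)))⌋ :=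
      Int.floor_nonneg.mpr (mul_nonneg hNR.le (Int.fract_nonneg _))
    have h4 : (0:ℤ) ≤ ⌊(N : ℝ) * Int.fract ((b : ℝ) * (w ℓ / (2 * Real.pi)))⌋ :=
      Int.floor_nonneg.mpr (mul_nonneg hNR.le (Int.fract_nonneg _))
    omega
  set t₀ : ℕ := b - a with ht₀def
  have ht₀1 : 1 ≤ t₀ := by omega
  set p : Fin k → ℤ := fun ℓ =>
    ⌊(b : ℝ) * (w ℓ / (2 * Real.pi))⌋ - ⌊(a : ℝ) * (w ℓ / (2 * Real.pi))⌋ with hpdef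
  have hkey : ∀ ℓ, |(t₀ : ℝ) * (w ℓ / (2 * Real.pi)) - p ℓ| < 1 / N := by
    intro ℓ
    have h1 : |Int.fract ((b : ℝ) * (w ℓ / (2 * Real.pi)))
        - Int.fract ((a : ℝ) * (w ℓ / (2 * Real.pi)))| < 1 / N := by
      have h2 := Int.abs_sub_lt_one_of_floor_eq_floor (hfloor ℓ).symm
      rw [← mul_sub, abs_mul, abs_of_nonneg hNR.le] at h2
      rw [abs_sub_comm] at h2
      rw [lt_div_iff₀ hNR]
      nlinarith [h2, abs_sub_comm (Int.fract ((a:ℝ) * (w ℓ / (2 * Real.pi))))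
        (Int.fract ((b:ℝ) * (w ℓ / (2 * Real.pi))))]
    have h3 : (t₀ : ℝ) * (w ℓ / (2 * Real.pi)) - p ℓ
        = Int.fract ((b : ℝ) * (w ℓ / (2 * Real.pi)))
          - Int.fract ((a : ℝ) * (w ℓ / (2 * Real.pi))) := by
      rw [Int.fract, Int.fract, hpdef, ht₀def]
      push_cast [Nat.cast_sub hlt.le]
      ring
    rw [h3]
    exact h1
  refine ⟨(q : ℝ) * t₀, fun ℓ => (q : ℤ) * p ℓ, ?_, ?_⟩
  · calc T ≤ (q:ℝ) := hqT
      _ = (q:ℝ) * 1 := by ring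
      _ ≤ (q:ℝ) * t₀ := by
          have : (1:ℝ) ≤ (t₀:ℝ) := by exact_mod_cast ht₀1
          nlinarith
  · intro ℓ
    have h1 := hkey ℓ
    have h2 : (q:ℝ) * (t₀:ℝ) * w ℓ - 2 * Real.pi * ((q:ℤ) * p ℓ : ℤ)
        = (q:ℝ) * (2 * Real.pi) * ((t₀ : ℝ) * (w ℓ / (2 * Real.pi)) - p ℓ) := by
      push_cast
      field_simp
    rw [h2, abs_mul, abs_of_pos (by positivity : (0:ℝ) < (q:ℝ) * (2 * Real.pi))]
    calc (q:ℝ) * (2 * Real.pi) * |(t₀ : ℝ) * (w ℓ / (2 * Real.pi)) - p ℓ|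
        < (q:ℝ) * (2 * Real.pi) * (1 / N) := by
          apply mul_lt_mul_of_pos_left h1 (by positivity)
      _ < ε := by
          rw [div_lt_iff₀ hε] at hN
          rw [mul_one_div, div_lt_iff₀ hNR]
          nlinarith

theorem halfline_dense {k : ℕ} (w : Fin k → ℝ) (hw : LinearIndependent ℚ w) :
    Dense {x : Fin k → ℝ | ∃ t : ℝ, 0 ≤ t ∧ ∃ m : Fin k → ℤ,
      x = t • w + fun ℓ => 2 * Real.pi * (m ℓ : ℝ)} := by
  rw [Metric.dense_iff]
  intro x ε hε
  have h1 := kronecker_dense w hw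
  rw [Metric.dense_iff] at h1
  obtain ⟨g, hg1, t, m, rfl⟩ := h1 x (ε / 2) (by positivity)
  rw [Metric.mem_ball] at hg1
  rw [dist_comm] at hg1
  rcases le_or_gt 0 t with ht | ht
  · exact ⟨_, Metric.mem_ball.mpr (by rw [dist_comm]; linarith), t, ht, m, rfl⟩
  · obtain ⟨t', p, ht'1, ht'2⟩ := recurrence w (show (0:ℝ) < ε / 2 by positivity) (-t)
    set y : Fin k → ℝ := (t + t') • w + fun ℓ => 2 * Real.pi * ((m ℓ - p ℓ : ℤ) : ℝ) with hydef
    have hmemy : y ∈ {x : Fin k → ℝ | ∃ t : ℝ, 0 ≤ t ∧ ∃ m : Fin k → ℤ,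
        x = t • w + fun ℓ => 2 * Real.pi * (m ℓ : ℝ)} :=
      ⟨t + t', by linarith, m - p, rfl⟩
    refine ⟨y, Metric.mem_ball.mpr ?_, hmemy⟩
    have hdist : dist y ((t • w : Fin k → ℝ) + fun ℓ => 2 * Real.pi * (m ℓ : ℝ)) < ε / 2 := by
      rw [dist_eq_norm]
      rw [pi_norm_lt_iff (show (0:ℝ) < ε / 2 by positivity)]
      intro ℓ
      rw [Pi.sub_apply, Real.norm_eq_abs]
      have h4 : y ℓ - ((t • w : Fin k → ℝ) + fun j => 2 * Real.pi * (m j : ℝ)) ℓ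
          = t' * w ℓ - 2 * Real.pi * p ℓ := by
        rw [hydef]
        simp only [Pi.add_apply, Pi.smul_apply, smul_eq_mul]
        push_cast
        ring
      rw [h4]
      exact ht'2 ℓ
    calc dist y x
        ≤ dist y ((t • w : Fin k → ℝ) + fun ℓ => 2 * Real.pi * (m ℓ : ℝ))
          + dist ((t • w : Fin k → ℝ) + fun ℓ => 2 * Real.pi * (m ℓ : ℝ)) x := dist_triangle _ _ _
      _ < ε / 2 + ε / 2 := add_lt_add hdist (by rw [dist_comm]; exact hg1)
      _ = ε := by ring

/-- For rationally independent reals `w_1,…,w_k` and integer vectors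
`f^0,…,f^d` with `θ_r = ⟨f^r, w⟩`, the closure of the curve
`{(e^{itθ_0},…,e^{itθ_d}) : t ≥ 0}` in the torus `(S¹)^{d+1} ⊆ ℂ^{d+1}` equals
`{(e^{i⟨f^0,z⟩},…,e^{i⟨f^d,z⟩}) : z ∈ ℝ^k}`. -/
theorem closure_frequency_curve_eq_torus_image
    {k d : ℕ} (w : Fin k → ℝ) (hw : LinearIndependent ℚ w)
    (f : Fin (d + 1) → Fin k → ℤ)
    (θ : Fin (d + 1) → ℝ) (hθ : ∀ r, θ r = ∑ ℓ, (f r ℓ : ℝ) * w ℓ) :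
    closure {u : Fin (d + 1) → ℂ | ∃ t : ℝ, 0 ≤ t ∧
        u = fun r => Complex.exp (Complex.I * (t : ℂ) * (θ r : ℂ))} =
      {u : Fin (d + 1) → ℂ | ∃ z : Fin k → ℝ,
        u = fun r => Complex.exp (Complex.I * ((∑ ℓ, (f r ℓ : ℝ) * z ℓ : ℝ) : ℂ))} := by
  classical
  set Φ : (Fin k → ℝ) → (Fin (d + 1) → ℂ) := fun z r =>
    Complex.exp (Complex.I * ((∑ ℓ, (f r ℓ : ℝ) * z ℓ : ℝ) : ℂ)) with hΦdef
  have hcont : Continuous Φ := by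
    refine continuous_pi fun r => Complex.continuous_exp.comp (continuous_const.mul ?_)
    exact Complex.continuous_ofReal.comp
      (continuous_finset_sum _ fun ℓ _ => continuous_const.mul (continuous_apply ℓ))
  have hper : ∀ (z : Fin k → ℝ) (m : Fin k → ℤ),
      Φ (z + fun ℓ => 2 * Real.pi * (m ℓ : ℝ)) = Φ z := by
    intro z m
    funext r
    rw [hΦdef]
    simp only
    rw [Complex.exp_eq_exp_iff_exists_int]
    refine ⟨∑ ℓ, f r ℓ * m ℓ, ?_⟩
    have hre : (∑ ℓ, (f r ℓ : ℝ) * ((z + fun j => 2 * Real.pi * (m j : ℝ)) ℓ))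
        = (∑ ℓ, (f r ℓ : ℝ) * z ℓ) + ((∑ ℓ, f r ℓ * m ℓ : ℤ) : ℝ) * (2 * Real.pi) := by
      push_cast
      rw [Finset.sum_mul, ← Finset.sum_add_distrib]
      refine Finset.sum_congr rfl fun ℓ _ => ?_
      simp only [Pi.add_apply]
      ring
    rw [hre]
    push_cast
    ring
  have hcurve : ∀ t : ℝ,
      Φ (t • w) = fun r => Complex.exp (Complex.I * (t : ℂ) * (θ r : ℂ)) := by
    intro t
    funext r
    rw [hΦdef]
    simp only
    have h1 : (∑ ℓ, (f r ℓ : ℝ) * ((t • w) ℓ)) = t * θ r := by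
      rw [hθ r, Finset.mul_sum]
      refine Finset.sum_congr rfl fun ℓ _ => ?_
      simp only [Pi.smul_apply, smul_eq_mul]
      ring
    rw [h1]
    push_cast
    ring
  apply subset_antisymm
  · -- closure of the curve ⊆ the torus image
    have heq : {u : Fin (d + 1) → ℂ | ∃ z : Fin k → ℝ,
        u = fun r => Complex.exp (Complex.I * ((∑ ℓ, (f r ℓ : ℝ) * z ℓ : ℝ) : ℂ))}
        = Φ '' (Set.pi Set.univ fun _ : Fin k => Set.Icc (0:ℝ) (2 * Real.pi)) := by
      ext u
      constructor
      · rintro ⟨z, rfl⟩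
        set z' : Fin k → ℝ := fun ℓ => z ℓ - 2 * Real.pi * (⌊z ℓ / (2 * Real.pi)⌋ : ℝ) with hz'def
        refine ⟨z', fun ℓ _ => ?_, ?_⟩
        · have h2π : (0:ℝ) < 2 * Real.pi := by positivity
          have h0 := Int.fract_nonneg (z ℓ / (2 * Real.pi))
          have h1 := (Int.fract_lt_one (z ℓ / (2 * Real.pi))).le
          have hz : z' ℓ = 2 * Real.pi * Int.fract (z ℓ / (2 * Real.pi)) := by
            rw [hz'def, Int.fract, mul_sub]
            congr 1
            field_simp
          rw [hz]
          exact ⟨mul_nonneg h2π.le h0, by nlinarith⟩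
        · have h2 := hper z' (fun ℓ => ⌊z ℓ / (2 * Real.pi)⌋)
          have h3 : (z' + fun ℓ => 2 * Real.pi * ((⌊z ℓ / (2 * Real.pi)⌋ : ℤ) : ℝ)) = z := by
            funext ℓ
            simp [hz'def]
          rw [h3] at h2
          exact h2.symm
      · rintro ⟨z, _, rfl⟩
        exact ⟨z, rfl⟩
    rw [heq]
    apply closure_minimal ?_ (((isCompact_univ_pi fun _ => isCompact_Icc).image hcont).isClosed)
    rw [← heq]
    rintro u ⟨t, ht, rfl⟩
    exact ⟨t • w, (hcurve t).symm⟩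
  · -- the torus image ⊆ closure of the curve
    rintro u ⟨z, rfl⟩
    have hz := halfline_dense w hw z
    have h1 : Φ z ∈ Φ '' closure {x : Fin k → ℝ | ∃ t : ℝ, 0 ≤ t ∧ ∃ m : Fin k → ℤ,
        x = t • w + fun ℓ => 2 * Real.pi * (m ℓ : ℝ)} := Set.mem_image_of_mem Φ hz
    have h2 := image_closure_subset_closure_image (f := Φ) hcont h1
    refine closure_mono ?_ h2
    rintro v ⟨x, ⟨t, ht, m, rfl⟩, rfl⟩
    exact ⟨t, ht, by rw [hper, hcurve]⟩
end
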